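/- arXiv:1409.1462 — 7 statements merged into one kernel-verified Lean document; each statement's English description precedes it below -/
import Mathlib

section
/- The last primal iterate v^k = u(x^k) of Algorithm (DFG) converges sublinearly at rate O(1/k): for all k ≥ 1, ‖v^k − u*‖ ≤ √(L_d/σ_f) · 2 R_d/(k+1), dist_K(G v^k + g) ≤ 2 L_d R_d/(k+1), and |f(v^k) − f*| ≤ (2 R_d + ‖x^0‖) · 2 L_d R_d/(k+1). -/
open scoped RealInnerProductSpace

private lemma key_id1 {E : Type*} [NormedAddCommGroup E] [InnerProductSpace ℝ E] (x y z : E) :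
    ‖y - z‖^2 - ‖x - z‖^2 = 2*⟪x - y, z - x⟫ + ‖x - y‖^2 := by
  simp only [← real_inner_self_eq_norm_sq, inner_sub_left, inner_sub_right]
  simp [real_inner_comm]
  ring

private lemma key_id2 {E : Type*} [NormedAddCommGroup E] [InnerProductSpace ℝ E] (t : ℝ) (w a b : E) :
    ‖t•w - (t-1)•a - b‖^2 + (t-1)*‖a-b‖^2 = t*(t-1)*‖w-a‖^2 + t*‖w-b‖^2 := by
  simp only [← real_inner_self_eq_norm_sq, inner_sub_left, inner_sub_right,
    real_inner_smul_left, inner_smul_right]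
  simp [real_inner_comm]
  ring

private lemma two_div_cancel {L : ℝ} (hL : L ≠ 0) (X : ℝ) : 2/L * (L/2 * X) = X := by
  field_simp

private lemma two_div_cancel2 {L : ℝ} (hL : L ≠ 0) (X Y : ℝ) : L/2 * (2/L * X * Y) = X * Y := by
  field_simp

private lemma le_of_sq_le_sq' {a b : ℝ} (ha : 0 ≤ a) (hb : 0 ≤ b) (h : a^2 ≤ b^2) : a ≤ b := by
  have := Real.sqrt_le_sqrt h
  rwa [Real.sqrt_sq ha, Real.sqrt_sq hb] at this

set_option maxHeartbeats 4000000 in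
theorem stmt_10 {n p : ℕ}
    (f : EuclideanSpace ℝ (Fin n) → ℝ) (σf : ℝ) (hσf : 0 < σf)
    (hfc : Continuous f) (hfsc : StrongConvexOn Set.univ σf f)
    (U : Set (EuclideanSpace ℝ (Fin n))) (hUne : U.Nonempty) (hUcl : IsClosed U) (hUcv : Convex ℝ U)
    (G : EuclideanSpace ℝ (Fin n) →L[ℝ] EuclideanSpace ℝ (Fin p)) (hG : G ≠ 0) (g : EuclideanSpace ℝ (Fin p))
    (K : Set (EuclideanSpace ℝ (Fin p))) (hKne : K.Nonempty) (hKcl : IsClosed K) (hKcv : Convex ℝ K)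
    (hKcone : ∀ c : ℝ, 0 ≤ c → ∀ v ∈ K, c • v ∈ K)
    (Kstar : Set (EuclideanSpace ℝ (Fin p)))
    (hKstar : Kstar = {x : EuclideanSpace ℝ (Fin p) | ∀ v ∈ K, 0 ≤ ⟪x, v⟫})
    (Lag : EuclideanSpace ℝ (Fin n) → EuclideanSpace ℝ (Fin p) → ℝ)
    (hLag : ∀ u x, Lag u x = f u + ⟪x, -(G u) - g⟫)
    (uu : EuclideanSpace ℝ (Fin p) → EuclideanSpace ℝ (Fin n))
    (huu : ∀ x : EuclideanSpace ℝ (Fin p), uu x ∈ U ∧ ∀ u ∈ U, Lag (uu x) x ≤ Lag u x)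
    (d : EuclideanSpace ℝ (Fin p) → ℝ) (hd : ∀ x, d x = Lag (uu x) x)
    (ustar : EuclideanSpace ℝ (Fin n))
    (hustar : ustar ∈ U ∧ G ustar + g ∈ K ∧ ∀ u ∈ U, G u + g ∈ K → f ustar ≤ f u)
    (fstar : ℝ) (hfstar : fstar = f ustar)
    (Xstar : Set (EuclideanSpace ℝ (Fin p))) (hXstar : Xstar = {x ∈ Kstar | d x = fstar})
    (hXne : Xstar.Nonempty)
    (Ld : ℝ) (hLd : Ld = ‖G‖ ^ 2 / σf)
    (projKs : EuclideanSpace ℝ (Fin p) → EuclideanSpace ℝ (Fin p))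
    (hprojKs : ∀ z : EuclideanSpace ℝ (Fin p), projKs z ∈ Kstar ∧ ∀ w ∈ Kstar, ‖z - projKs z‖ ≤ ‖z - w‖)
    (θ : ℕ → ℝ) (hθ0 : θ 0 = 0) (hθ1 : θ 1 = 1)
    (hθrec : ∀ k, 1 ≤ k → θ (k + 1) = (1 + Real.sqrt (1 + 4 * θ k ^ 2)) / 2)
    (x y : ℕ → EuclideanSpace ℝ (Fin p)) (hx0K : x 0 ∈ Kstar) (hy1 : y 1 = x 0)
    (hxrec : ∀ k, 1 ≤ k → x k = projKs (y k + (1 / Ld) • (-(G (uu (y k))) - g)))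
    (hyrec : ∀ k, 1 ≤ k →
      y (k + 1) = x k + ((θ k - 1) / θ (k + 1)) • (x k - x (k - 1)))
    (xstar : EuclideanSpace ℝ (Fin p)) (hxstar : xstar ∈ Xstar)
    (hxstarmin : ∀ z ∈ Xstar, ‖x 0 - xstar‖ ≤ ‖x 0 - z‖)
    (Rd : ℝ) (hRd : Rd = ‖x 0 - xstar‖)
 :
    ∀ k : ℕ, 1 ≤ k →
      ‖uu (x k) - ustar‖ ≤ Real.sqrt (Ld / σf) * (2 * Rd / ((k : ℝ) + 1)) ∧
      Metric.infDist (G (uu (x k)) + g) K ≤ 2 * Ld * Rd / ((k : ℝ) + 1) ∧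
      |f (uu (x k)) - fstar| ≤ (2 * Rd + ‖x 0‖) * (2 * Ld * Rd / ((k : ℝ) + 1)) := by
  have hGn : 0 < ‖G‖ := norm_pos_iff.mpr hG
  have hLdpos : 0 < Ld := by rw [hLd]; exact div_pos (pow_pos hGn 2) hσf
  have hRd0 : 0 ≤ Rd := hRd ▸ norm_nonneg _
  rw [hXstar] at hxstar
  obtain ⟨hxsK, hdxs⟩ := hxstar
  -- Lagrangian is affine in the dual variable
  have hLagx : ∀ (u : EuclideanSpace ℝ (Fin n)) (a b : EuclideanSpace ℝ (Fin p)),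
      Lag u b = Lag u a + ⟪-(G u) - g, b - a⟫ := by
    intro u a b
    rw [hLag, hLag]
    have e : ⟪-(G u) - g, b - a⟫ = ⟪b, -(G u) - g⟫ - ⟪a, -(G u) - g⟫ := by
      rw [real_inner_comm, inner_sub_left]
    rw [e]
    ring
  -- quadratic growth at the minimizer
  have hmin : ∀ (z : EuclideanSpace ℝ (Fin p)) (u : EuclideanSpace ℝ (Fin n)), u ∈ U →
      Lag (uu z) z + σf/2 * ‖u - uu z‖^2 ≤ Lag u z := by
    intro z u hu
    rcases huu z with ⟨huz, hminz⟩
    refine le_of_forall_pos_le_add ?_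
    intro ε hε
    set C : ℝ := σf/2 * ‖u - uu z‖^2 with hC
    have hC0 : 0 ≤ C := mul_nonneg (by linarith) (sq_nonneg _)
    set a : ℝ := min (1/2) (ε / (C+1)) with ha
    have ha0 : 0 < a := lt_min (by norm_num) (div_pos hε (by linarith))
    have ha1 : a ≤ 1/2 := min_le_left _ _
    have ha2 : a ≤ ε/(C+1) := min_le_right _ _
    have hb0 : 0 ≤ 1 - a := by linarith
    have hab : a + (1-a) = 1 := by ring
    have hmem : a • u + (1-a) • uu z ∈ U := hUcv hu huz ha0.le hb0 hab
    have hsc := hfsc.2 (Set.mem_univ u) (Set.mem_univ (uu z)) ha0.le hb0 hab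
    simp only [smul_eq_mul] at hsc
    have hvec : -(G (a • u + (1-a) • uu z)) - g
        = a • (-(G u) - g) + (1-a) • (-(G (uu z)) - g) := by
      rw [map_add, map_smul, map_smul]
      have hg : g = a • g + (1-a) • g := by
        rw [← add_smul, hab, one_smul]
      nth_rewrite 1 [hg]
      module
    have hlin : Lag (a • u + (1-a) • uu z) z
        = f (a • u + (1-a) • uu z) + a * ⟪z, -(G u) - g⟫ + (1-a) * ⟪z, -(G (uu z)) - g⟫ := by
      rw [hLag, hvec, inner_add_right, real_inner_smul_right, real_inner_smul_right]
      ring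
    have h1 : Lag (uu z) z ≤ Lag (a • u + (1-a) • uu z) z := hminz _ hmem
    have h2 : Lag (a•u + (1-a)•uu z) z ≤ a * Lag u z + (1-a) * Lag (uu z) z - a*(1-a)*C := by
      rw [hlin, hLag u z, hLag (uu z) z]
      rw [hC]
      linarith [hsc]
    have h3 : Lag (uu z) z + (1-a)*C ≤ Lag u z := by
      have hmul : a * (Lag (uu z) z + (1-a)*C) ≤ a * Lag u z := by linarith [h1, h2]
      exact le_of_mul_le_mul_left hmul ha0
    have haC : a * C ≤ ε := by
      have h4 := mul_le_mul_of_nonneg_right ha2 hC0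
      have h5 : (ε/(C+1))*C ≤ ε := by
        rw [div_mul_eq_mul_div, div_le_iff₀ (by linarith : (0:ℝ) < C+1)]
        have : 0 ≤ ε := hε.le
        nlinarith
      linarith
    linarith [h3, haC]
  -- supergradient inequality
  have hdle : ∀ a b : EuclideanSpace ℝ (Fin p), d b ≤ d a + ⟪-(G (uu a)) - g, b - a⟫ := by
    intro a b
    rw [hd b, hd a]
    calc Lag (uu b) b ≤ Lag (uu a) b := (huu b).2 _ (huu a).1
    _ = Lag (uu a) a + ⟪-(G (uu a)) - g, b - a⟫ := hLagx (uu a) a b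
  -- descent (quadratic lower) inequality
  have hdesc : ∀ a b : EuclideanSpace ℝ (Fin p),
      d a + ⟪-(G (uu a)) - g, b - a⟫ - Ld/2 * ‖b - a‖^2 ≤ d b := by
    intro a b
    have h1 : Lag (uu a) a + σf/2 * ‖uu b - uu a‖^2 ≤ Lag (uu b) a := hmin a (uu b) (huu b).1
    have h2 : Lag (uu b) b = Lag (uu b) a + ⟪-(G (uu b)) - g, b - a⟫ := hLagx _ a b
    rw [hd b, hd a, h2]
    have h3 : ⟪-(G (uu a)) - g, b - a⟫ - ⟪-(G (uu b)) - g, b - a⟫ = ⟪G (uu b - uu a), b - a⟫ := by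
      rw [← inner_sub_left]
      congr 1
      rw [map_sub]
      abel
    have h4 : ⟪G (uu b - uu a), b - a⟫ ≤ ‖G‖ * ‖uu b - uu a‖ * ‖b - a‖ := by
      calc ⟪G (uu b - uu a), b - a⟫ ≤ ‖G (uu b - uu a)‖ * ‖b - a‖ := real_inner_le_norm _ _
      _ ≤ ‖G‖ * ‖uu b - uu a‖ * ‖b - a‖ := by
          have := G.le_opNorm (uu b - uu a)
          exact mul_le_mul_of_nonneg_right this (norm_nonneg _)
    have hLd' : Ld * σf = ‖G‖^2 := by rw [hLd]; field_simp
    have hLds : Ld * σf * ‖b - a‖^2 = ‖G‖^2 * ‖b - a‖^2 := by rw [hLd']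
    have key2 : σf * (‖G‖ * ‖uu b - uu a‖ * ‖b - a‖)
        ≤ σf * (Ld/2 * ‖b - a‖^2 + σf/2 * ‖uu b - uu a‖^2) := by
      linarith [sq_nonneg (‖G‖*‖b - a‖ - σf*‖uu b - uu a‖), hLds]
    have key : ‖G‖ * ‖uu b - uu a‖ * ‖b - a‖ ≤ Ld/2 * ‖b - a‖^2 + σf/2 * ‖uu b - uu a‖^2 :=
      le_of_mul_le_mul_left key2 hσf
    linarith [h1, h3, h4, key]
  -- Lagrangian at ustar
  have hLagstar : ∀ z : EuclideanSpace ℝ (Fin p), Lag ustar z = fstar - ⟪z, G ustar + g⟫ := by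
    intro z
    rw [hLag, hfstar]
    have e : -(G ustar) - g = -(G ustar + g) := by abel
    rw [e, inner_neg_right]
    ring
  -- weak duality
  have hwd : ∀ z, z ∈ Kstar → d z ≤ fstar := by
    intro z hz
    have h1 : Lag (uu z) z ≤ Lag ustar z := (huu z).2 _ hustar.1
    have h2 : 0 ≤ ⟪z, G ustar + g⟫ := by
      rw [hKstar] at hz; exact hz _ hustar.2.1
    have h3 := hLagstar z
    rw [hd]
    linarith
  -- complementarity at xstar
  have hcomp : ⟪xstar, G ustar + g⟫ = 0 := by
    have h2 : 0 ≤ ⟪xstar, G ustar + g⟫ := by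
      rw [hKstar] at hxsK; exact hxsK _ hustar.2.1
    have h1 : Lag (uu xstar) xstar ≤ Lag ustar xstar := (huu xstar).2 _ hustar.1
    have h3 := hLagstar xstar
    have h5 := hd xstar
    linarith
  -- Kstar facts
  have hKsCv : Convex ℝ Kstar := by
    rw [hKstar]
    intro x1 hx1 x2 hx2 a b haa hbb hab
    simp only [Set.mem_setOf_eq] at hx1 hx2 ⊢
    intro v hv
    have e : ⟪a • x1 + b • x2, v⟫ = a * ⟪x1, v⟫ + b * ⟪x2, v⟫ := by
      rw [inner_add_left, real_inner_smul_left, real_inner_smul_left]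
    have h1 := mul_nonneg haa (hx1 v hv)
    have h2 := mul_nonneg hbb (hx2 v hv)
    rw [e]
    linarith
  have hproj : ∀ q w : EuclideanSpace ℝ (Fin p), w ∈ Kstar → ⟪q - projKs q, w - projKs q⟫ ≤ 0 := by
    intro q w hw
    have hmem := (hprojKs q).1
    haveI : Nonempty ↑Kstar := ⟨⟨projKs q, hmem⟩⟩
    have hbdd : BddBelow (Set.range fun w : Kstar => ‖q - w‖) := by
      refine ⟨0, ?_⟩
      rintro r ⟨w', rfl⟩
      exact norm_nonneg _
    have hiInf : ‖q - projKs q‖ = ⨅ w : Kstar, ‖q - w‖ := by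
      refine le_antisymm (le_ciInf fun w' => (hprojKs q).2 w' w'.2) (ciInf_le hbdd ⟨projKs q, hmem⟩)
    exact (norm_eq_iInf_iff_real_inner_le_zero hKsCv hmem).mp hiInf w hw
  have hxK : ∀ k : ℕ, x k ∈ Kstar := by
    intro k
    cases k with
    | zero => exact hx0K
    | succ m =>
      rw [hxrec (m+1) (Nat.succ_le_succ (Nat.zero_le _))]
      exact (hprojKs _).1
  -- the prox-gradient step inequality
  have hstep : ∀ k, 1 ≤ k → ∀ z, z ∈ Kstar →
      d z - d (x k) ≤ Ld/2 * (‖y k - z‖^2 - ‖x k - z‖^2) := by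
    intro k hk z hz
    have hxk : x k = projKs (y k + (1 / Ld) • (-(G (uu (y k))) - g)) := hxrec k hk
    have hp : ⟪(y k + (1 / Ld) • (-(G (uu (y k))) - g)) - x k, z - x k⟫ ≤ 0 := by
      rw [hxk]; exact hproj _ z hz
    have hqx : (y k + (1 / Ld) • (-(G (uu (y k))) - g)) - x k
        = (y k - x k) + (1/Ld) • (-(G (uu (y k))) - g) := by abel
    rw [hqx, inner_add_left, real_inner_smul_left] at hp
    have e1 : (y k - x k) = -(x k - y k) := by abel
    rw [e1, inner_neg_left] at hp
    have hp2 : (1/Ld) * ⟪-(G (uu (y k))) - g, z - x k⟫ ≤ ⟪x k - y k, z - x k⟫ := by linarith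
    have hip : ⟪-(G (uu (y k))) - g, z - x k⟫ ≤ Ld * ⟪x k - y k, z - x k⟫ := by
      have h6 := mul_le_mul_of_nonneg_left hp2 hLdpos.le
      have hLdne : Ld ≠ 0 := ne_of_gt hLdpos
      rw [← mul_assoc, mul_one_div, div_self hLdne, one_mul] at h6
      exact h6
    have h2 := hdle (y k) z
    have h3 := hdesc (y k) (x k)
    have h4 : ⟪-(G (uu (y k))) - g, z - y k⟫ - ⟪-(G (uu (y k))) - g, x k - y k⟫
        = ⟪-(G (uu (y k))) - g, z - x k⟫ := by
      rw [← inner_sub_right]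
      congr 1
      abel
    have h5 : ‖y k - z‖^2 - ‖x k - z‖^2 = 2*⟪x k - y k, z - x k⟫ + ‖x k - y k‖^2 :=
      key_id1 _ _ _
    have e : Ld/2 * (‖y k - z‖^2 - ‖x k - z‖^2)
        = Ld*⟪x k - y k, z - x k⟫ + Ld/2*‖x k - y k‖^2 := by rw [h5]; ring
    rw [e]
    linarith [h2, h3, h4, hip]
  -- theta facts
  have hθpos : ∀ k, 1 ≤ k → 1 ≤ θ k ∧ ((k:ℝ)+1)/2 ≤ θ k := by
    intro k hk
    induction k, hk using Nat.le_induction with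
    | base =>
      constructor <;> rw [hθ1] <;> norm_num
    | succ m hm ih =>
      rw [hθrec m hm]
      have h1 : 1 ≤ θ m := ih.1
      have h2 : ((m:ℝ)+1)/2 ≤ θ m := ih.2
      have hs : 2 * θ m ≤ Real.sqrt (1 + 4*θ m^2) := by
        have h3 : (2*θ m)^2 ≤ 1 + 4*θ m^2 := by nlinarith
        calc 2*θ m = Real.sqrt ((2*θ m)^2) := (Real.sqrt_sq (by linarith)).symm
        _ ≤ _ := Real.sqrt_le_sqrt h3
      constructor
      · linarith
      · push_cast
        linarith
  have hθsq : ∀ k, 1 ≤ k → θ (k+1)^2 - θ (k+1) = θ k ^2 := by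
    intro k hk
    have h1 : (0:ℝ) ≤ 1 + 4*θ k^2 := by positivity
    have h2 : Real.sqrt (1+4*θ k^2)^2 = 1 + 4*θ k^2 := Real.sq_sqrt h1
    rw [hθrec k hk]
    linear_combination h2 / 4
  -- FISTA invariant
  have hinv : ∀ k, 1 ≤ k →
      2/Ld * (θ k)^2 * (fstar - d (x k)) + ‖θ k • x k - (θ k - 1) • x (k-1) - xstar‖^2 ≤ Rd^2 := by
    intro k hk
    induction k, hk using Nat.le_induction with
    | base =>
      have h := hstep 1 le_rfl xstar hxsK
      rw [hy1, hdxs, ← hRd] at h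
      rw [hθ1]
      have e0 : (1:ℝ) - 1 = 0 := by norm_num
      have e : (1:ℝ) • x 1 - ((1:ℝ) - 1) • x (1-1) - xstar = x 1 - xstar := by
        rw [e0, zero_smul, one_smul, sub_zero]
      rw [e]
      have h2 := mul_le_mul_of_nonneg_left h (le_of_lt (div_pos two_pos hLdpos))
      have e2 : 2/Ld * (Ld/2 * (Rd^2 - ‖x 1 - xstar‖^2)) = Rd^2 - ‖x 1 - xstar‖^2 :=
        two_div_cancel (ne_of_gt hLdpos) _
      rw [e2] at h2
      have e3 : 2/Ld * (1:ℝ)^2 * (fstar - d (x 1)) = 2/Ld * (fstar - d (x 1)) := by ring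
      rw [e3]
      linarith
    | succ m hm ih =>
      have hm1 : 1 ≤ m + 1 := by omega
      have ht1 : 1 ≤ θ (m+1) := (hθpos (m+1) hm1).1
      have htpos : (0:ℝ) < θ (m+1) := by linarith
      have htsq : θ (m+1)^2 - θ (m+1) = θ m^2 := hθsq m hm
      have ha := hstep (m+1) hm1 (x m) (hxK m)
      have hb := hstep (m+1) hm1 xstar hxsK
      rw [hdxs] at hb
      have hy := hyrec m hm
      have hvec : θ (m+1) • y (m+1) - (θ (m+1) - 1) • x m - xstar
          = θ m • x m - (θ m - 1) • x (m-1) - xstar := by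
        rw [hy]
        have e : θ (m+1) • (((θ m - 1)/θ (m+1)) • (x m - x (m-1))) = (θ m - 1) • (x m - x (m-1)) := by
          rw [smul_smul]
          congr 1
          field_simp
        rw [smul_add, e]
        module
      have id1 := key_id2 (θ (m+1)) (y (m+1)) (x m) xstar
      have id2 := key_id2 (θ (m+1)) (x (m+1)) (x m) xstar
      rw [hvec] at id1
      have ht0 : (0:ℝ) ≤ θ (m+1) - 1 := by linarith
      have h1 := mul_le_mul_of_nonneg_left ha ht0
      have hsum : θ (m+1) * (fstar - d (x (m+1))) - (θ (m+1) - 1) * (fstar - d (x m))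
          ≤ Ld/2 * ((θ (m+1)-1)*((‖y (m+1) - x m‖^2 - ‖x (m+1) - x m‖^2))
              + (‖y (m+1) - xstar‖^2 - ‖x (m+1) - xstar‖^2)) := by linarith [h1, hb]
      have h3 := mul_le_mul_of_nonneg_left hsum htpos.le
      have id1' : Ld/2 * (‖θ m • x m - (θ m - 1) • x (m-1) - xstar‖^2 + (θ (m+1)-1)*‖x m - xstar‖^2)
          = Ld/2 * (θ (m+1)*(θ (m+1)-1)*‖y (m+1) - x m‖^2 + θ (m+1)*‖y (m+1) - xstar‖^2) := by
        rw [id1]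
      have id2' : Ld/2 * (‖θ (m+1) • x (m+1) - (θ (m+1) - 1) • x m - xstar‖^2 + (θ (m+1)-1)*‖x m - xstar‖^2)
          = Ld/2 * (θ (m+1)*(θ (m+1)-1)*‖x (m+1) - x m‖^2 + θ (m+1)*‖x (m+1) - xstar‖^2) := by
        rw [id2]
      have h4 : θ (m+1) * (θ (m+1) * (fstar - d (x (m+1))) - (θ (m+1) - 1) * (fstar - d (x m)))
          ≤ Ld/2 * (‖θ m • x m - (θ m - 1) • x (m-1) - xstar‖^2
              - ‖θ (m+1) • x (m+1) - (θ (m+1) - 1) • x m - xstar‖^2) := by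
        linarith [h3, id1', id2']
      have h5 := mul_le_mul_of_nonneg_left h4 (le_of_lt (div_pos two_pos hLdpos))
      have e5 : 2/Ld * (Ld/2 * (‖θ m • x m - (θ m - 1) • x (m-1) - xstar‖^2
              - ‖θ (m+1) • x (m+1) - (θ (m+1) - 1) • x m - xstar‖^2))
          = ‖θ m • x m - (θ m - 1) • x (m-1) - xstar‖^2
              - ‖θ (m+1) • x (m+1) - (θ (m+1) - 1) • x m - xstar‖^2 :=
        two_div_cancel (ne_of_gt hLdpos) _
      rw [e5] at h5
      have e6 : 2/Ld * (θ (m+1) * (θ (m+1) * (fstar - d (x (m+1))) - (θ (m+1) - 1) * (fstar - d (x m))))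
          = 2/Ld * θ (m+1)^2 * (fstar - d (x (m+1))) - 2/Ld * θ m^2 * (fstar - d (x m)) := by
        linear_combination (-(2/Ld * (fstar - d (x m)))) * htsq
      rw [e6] at h5
      simp only [Nat.add_sub_cancel]
      linarith [h5, ih]
  -- boundedness of iterates
  have hxd : ∀ k : ℕ, ‖x k - xstar‖ ≤ Rd := by
    intro k
    induction k with
    | zero => rw [hRd]
    | succ m ih =>
      have hm1 : 1 ≤ m + 1 := by omega
      have ht1 : 1 ≤ θ (m+1) := (hθpos (m+1) hm1).1
      have htpos : (0:ℝ) < θ (m+1) := by linarith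
      have hδ : 0 ≤ fstar - d (x (m+1)) := by
        have := hwd _ (hxK (m+1)); linarith
      have h := hinv (m+1) hm1
      simp only [Nat.add_sub_cancel] at h
      have hnn : 0 ≤ 2/Ld * (θ (m+1))^2 * (fstar - d (x (m+1))) :=
        mul_nonneg (mul_nonneg (le_of_lt (div_pos two_pos hLdpos)) (sq_nonneg _)) hδ
      have hU : ‖θ (m+1) • x (m+1) - (θ (m+1) - 1) • x m - xstar‖ ≤ Rd := by
        refine le_of_sq_le_sq' (norm_nonneg _) hRd0 ?_
        linarith
      have hveq : θ (m+1) • (x (m+1) - xstar)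
          = (θ (m+1) • x (m+1) - (θ (m+1) - 1) • x m - xstar) + (θ (m+1) - 1) • (x m - xstar) := by
        module
      have e1 : ‖θ (m+1) • (x (m+1) - xstar)‖ = θ (m+1) * ‖x (m+1) - xstar‖ := by
        rw [norm_smul, Real.norm_eq_abs, abs_of_pos htpos]
      have e2 : ‖(θ (m+1) - 1) • (x m - xstar)‖ = (θ (m+1) - 1) * ‖x m - xstar‖ := by
        rw [norm_smul, Real.norm_eq_abs, abs_of_nonneg (by linarith)]
      have e3 := norm_add_le (θ (m+1) • x (m+1) - (θ (m+1) - 1) • x m - xstar)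
        ((θ (m+1) - 1) • (x m - xstar))
      rw [← hveq, e1, e2] at e3
      have e4 : (θ (m+1) - 1) * ‖x m - xstar‖ ≤ (θ (m+1) - 1) * Rd :=
        mul_le_mul_of_nonneg_left ih (by linarith)
      have h6 : θ (m+1) * ‖x (m+1) - xstar‖ ≤ θ (m+1) * Rd := by linarith [e3, e4, hU]
      exact le_of_mul_le_mul_left h6 htpos
  -- MAIN PART
  intro k hk
  have hk1 : (1:ℝ) ≤ (k:ℝ) := by exact_mod_cast hk
  have hkpos : (0:ℝ) < (k:ℝ) + 1 := by linarith
  have hδ0 : 0 ≤ fstar - d (x k) := by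
    have := hwd _ (hxK k); linarith
  have hθk := hθpos k hk
  have hδle : fstar - d (x k) ≤ 2*Ld*Rd^2/((k:ℝ)+1)^2 := by
    have h1 : 2/Ld * (θ k)^2 * (fstar - d (x k)) ≤ Rd^2 := by
      have := hinv k hk
      linarith [sq_nonneg ‖θ k • x k - (θ k - 1) • x (k-1) - xstar‖]
    have h2 : ((k:ℝ)+1)/2 ≤ θ k := hθk.2
    have h3 : ((k:ℝ)+1)^2/4 ≤ θ k^2 := by nlinarith [h2, hθk.1, hkpos]
    have h5 : θ k^2 * (fstar - d (x k)) ≤ Ld*Rd^2/2 := by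
      have h6 := mul_le_mul_of_nonneg_left h1 (by linarith : (0:ℝ) ≤ Ld/2)
      have e : Ld/2 * (2/Ld * θ k^2 * (fstar - d (x k))) = θ k^2 * (fstar - d (x k)) :=
        two_div_cancel2 (ne_of_gt hLdpos) _ _
      rw [e] at h6
      linarith
    have h7 := mul_le_mul_of_nonneg_right h3 hδ0
    have h4 : (fstar - d (x k)) * ((k:ℝ)+1)^2 ≤ 2*Ld*Rd^2 := by linarith
    exact (le_div_iff₀ (by positivity)).mpr h4
  -- strong convexity primal bound
  have hsc : σf/2 * ‖uu (x k) - ustar‖^2 ≤ fstar - d (x k) := by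
    have h1 := hmin (x k) ustar hustar.1
    have h2 : 0 ≤ ⟪x k, G ustar + g⟫ := by
      have := hxK k; rw [hKstar] at this; exact this _ hustar.2.1
    have h3 := hLagstar (x k)
    have h5 := hd (x k)
    rw [norm_sub_rev] at h1
    linarith
  -- first bound
  have hb1nn : 0 ≤ Real.sqrt (Ld/σf) * (2*Rd/((k:ℝ)+1)) := by
    apply mul_nonneg (Real.sqrt_nonneg _)
    apply div_nonneg (by linarith) hkpos.le
  have hsq : ‖uu (x k) - ustar‖^2 ≤ (Ld/σf)*(2*Rd/((k:ℝ)+1))^2 := by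
    have h8 : σf * ‖uu (x k) - ustar‖^2 ≤ 2 * (2*Ld*Rd^2/((k:ℝ)+1)^2) := by linarith
    have hkne : ((k:ℝ)+1) ≠ 0 := ne_of_gt hkpos
    have hσne : σf ≠ 0 := ne_of_gt hσf
    have e : (Ld/σf)*(2*Rd/((k:ℝ)+1))^2 = (2 * (2*Ld*Rd^2/((k:ℝ)+1)^2))/σf := by
      field_simp
    rw [e, le_div_iff₀ hσf]
    linarith [h8]
  have hbnd1 : ‖uu (x k) - ustar‖ ≤ Real.sqrt (Ld/σf) * (2*Rd/((k:ℝ)+1)) := by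
    refine le_of_sq_le_sq' (norm_nonneg _) hb1nn ?_
    have hsqrt : (Real.sqrt (Ld/σf) * (2*Rd/((k:ℝ)+1)))^2 = (Ld/σf)*(2*Rd/((k:ℝ)+1))^2 := by
      rw [mul_pow, Real.sq_sqrt (le_of_lt (div_pos hLdpos hσf))]
    rw [hsqrt]
    exact hsq
  -- the product bound
  have hGsq : ‖G‖ * Real.sqrt (Ld/σf) = Ld := by
    have e : Ld/σf = (‖G‖/σf)^2 := by rw [hLd]; field_simp
    rw [e, Real.sqrt_sq (le_of_lt (div_pos hGn hσf)), hLd]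
    field_simp
  have hQ : ‖G‖ * ‖uu (x k) - ustar‖ ≤ 2*Ld*Rd/((k:ℝ)+1) := by
    have h9 := mul_le_mul_of_nonneg_left hbnd1 hGn.le
    have e9 : ‖G‖ * (Real.sqrt (Ld/σf) * (2*Rd/((k:ℝ)+1))) = 2*Ld*Rd/((k:ℝ)+1) := by
      rw [← mul_assoc, hGsq]
      ring
    rw [e9] at h9
    exact h9
  have hQnn : 0 ≤ ‖G‖ * ‖uu (x k) - ustar‖ := mul_nonneg (norm_nonneg _) (norm_nonneg _)
  -- second bound
  have hfeas : Metric.infDist (G (uu (x k)) + g) K ≤ 2*Ld*Rd/((k:ℝ)+1) := by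
    have h1 : Metric.infDist (G (uu (x k)) + g) K ≤ dist (G (uu (x k)) + g) (G ustar + g) :=
      Metric.infDist_le_dist_of_mem hustar.2.1
    have h2 : dist (G (uu (x k)) + g) (G ustar + g) = ‖G (uu (x k) - ustar)‖ := by
      rw [dist_eq_norm, map_sub]
      congr 1
      abel
    have h3 : ‖G (uu (x k) - ustar)‖ ≤ ‖G‖*‖uu (x k) - ustar‖ := G.le_opNorm _
    rw [h2] at h1
    linarith
  -- third bound
  have hdxk : d (x k) = f (uu (x k)) - ⟪x k, G (uu (x k)) + g⟫ := by
    rw [hd, hLag]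
    have e : -(G (uu (x k))) - g = -(G (uu (x k)) + g) := by abel
    rw [e, inner_neg_right]
    ring
  have ho2 : ⟪x k, G ustar + g⟫ ≤ fstar - d (x k) := by
    have h1 := (huu (x k)).2 ustar hustar.1
    have h3 := hLagstar (x k)
    have h5 := hd (x k)
    linarith
  have hsplit : ⟪x k, G (uu (x k)) + g⟫ = ⟪x k, G ustar + g⟫
      + ⟪x k - xstar, G (uu (x k)) - G ustar⟫ + ⟪xstar, G (uu (x k)) - G ustar⟫ := by
    have e : G (uu (x k)) + g = (G ustar + g) + (G (uu (x k)) - G ustar) := by abel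
    rw [e, inner_add_right, inner_sub_left]
    ring
  have hGB : ‖G (uu (x k)) - G ustar‖ ≤ ‖G‖ * ‖uu (x k) - ustar‖ := by
    rw [← map_sub]
    exact G.le_opNorm _
  have hxs_norm : ‖xstar‖ ≤ Rd + ‖x 0‖ := by
    have e : xstar = x 0 - (x 0 - xstar) := by abel
    calc ‖xstar‖ = ‖x 0 - (x 0 - xstar)‖ := by rw [← e]
    _ ≤ ‖x 0‖ + ‖x 0 - xstar‖ := norm_sub_le _ _
    _ = ‖x 0‖ + Rd := by rw [hRd]
    _ = Rd + ‖x 0‖ := by ring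
  have hxkd : ‖x k - xstar‖ ≤ Rd := hxd k
  have hcoef : 0 ≤ 2*Rd + ‖x 0‖ := by
    have := norm_nonneg (x 0); linarith
  have hCS1 : ⟪x k - xstar, G (uu (x k)) - G ustar⟫ ≤ Rd * (‖G‖ * ‖uu (x k) - ustar‖) := by
    calc ⟪x k - xstar, G (uu (x k)) - G ustar⟫
        ≤ ‖x k - xstar‖ * ‖G (uu (x k)) - G ustar‖ := real_inner_le_norm _ _
    _ ≤ Rd * (‖G‖ * ‖uu (x k) - ustar‖) :=
        mul_le_mul hxkd hGB (norm_nonneg _) hRd0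
  have hCS2 : |⟪xstar, G (uu (x k)) - G ustar⟫| ≤ (Rd + ‖x 0‖) * (‖G‖ * ‖uu (x k) - ustar‖) := by
    calc |⟪xstar, G (uu (x k)) - G ustar⟫| ≤ ‖xstar‖ * ‖G (uu (x k)) - G ustar‖ :=
        abs_real_inner_le_norm _ _
    _ ≤ (Rd + ‖x 0‖) * (‖G‖ * ‖uu (x k) - ustar‖) := by
        apply mul_le_mul hxs_norm hGB (norm_nonneg _)
        have := norm_nonneg (x 0); linarith
  have hfv : f (uu (x k)) - fstar = ⟪x k, G (uu (x k)) + g⟫ - (fstar - d (x k)) := by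
    linarith [hdxk]
  have hMnn : 0 ≤ 2*Ld*Rd/((k:ℝ)+1) := by
    apply div_nonneg _ hkpos.le
    have : 0 ≤ 2*Ld := by linarith
    exact mul_nonneg this hRd0
  have hup : f (uu (x k)) - fstar ≤ (2*Rd + ‖x 0‖) * (2*Ld*Rd/((k:ℝ)+1)) := by
    have t2 := (abs_le.mp hCS2).2
    have t3 : (2*Rd + ‖x 0‖) * (‖G‖*‖uu (x k) - ustar‖)
        ≤ (2*Rd+‖x 0‖)*(2*Ld*Rd/((k:ℝ)+1)) := mul_le_mul_of_nonneg_left hQ hcoef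
    linarith [hfv, hsplit, ho2, hCS1, t2, t3]
  have hlow : fstar - f (uu (x k)) ≤ (2*Rd + ‖x 0‖)*(2*Ld*Rd/((k:ℝ)+1)) := by
    have h1 := (huu xstar).2 (uu (x k)) (huu (x k)).1
    have h2 : Lag (uu (x k)) xstar = f (uu (x k)) - ⟪xstar, G (uu (x k)) + g⟫ := by
      rw [hLag]
      have e : -(G (uu (x k))) - g = -(G (uu (x k)) + g) := by abel
      rw [e, inner_neg_right]
      ring
    have h5 := hd xstar
    have h6 : ⟪xstar, G (uu (x k)) + g⟫ = ⟪xstar, G ustar + g⟫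
        + ⟪xstar, G (uu (x k)) - G ustar⟫ := by
      rw [← inner_add_right]
      congr 1
      abel
    have h7 := (abs_le.mp hCS2).1
    have h9 : (Rd + ‖x 0‖) * (‖G‖ * ‖uu (x k) - ustar‖) ≤ (Rd + ‖x 0‖) * (2*Ld*Rd/((k:ℝ)+1)) := by
      apply mul_le_mul_of_nonneg_left hQ
      have := norm_nonneg (x 0); linarith
    have h10 : 0 ≤ Rd * (2*Ld*Rd/((k:ℝ)+1)) := mul_nonneg hRd0 hMnn
    linarith [h1, h2, h5, hdxs, hcomp, h6, h7, h9, h10]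
  refine ⟨hbnd1, hfeas, ?_⟩
  rw [abs_le]
  constructor
  · linarith
  · linarith
end

section
/- The average primal sequence of Algorithm (DFG) converges sublinearly at rate O(1/k²): for all k ≥ 1, dist_K(G û^k + g) ≤ 8 L_d R_d/(k+1)², and |f(û^k) − f*| ≤ (8 L_d/(k+1)²) · [ R_d² + max(R_d, ‖x^0‖)² ]. -/
open scoped RealInnerProductSpace

private lemma le_of_forall_one_sub_mul {c A : ℝ} (h : ∀ n : ℕ, (1 - 1/((n:ℝ)+1)) * c ≤ A) :
    c ≤ A := by
  have ht : Filter.Tendsto (fun n : ℕ => (1 - 1/((n:ℝ)+1)) * c) Filter.atTop (nhds ((1-0)*c)) :=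
    (tendsto_const_nhds.sub tendsto_one_div_add_atTop_nhds_zero_nat).mul_const c
  have := le_of_tendsto ht (Filter.Eventually.of_forall h)
  simpa using this

private lemma vi_aux {E : Type*} [NormedAddCommGroup E] [InnerProductSpace ℝ E]
    {S : Set E} (hS : Convex ℝ S) {z π : E} (hπ : π ∈ S)
    (hmin : ∀ w ∈ S, ‖z - π‖ ≤ ‖z - w‖) : ∀ w ∈ S, ⟪z - π, w - π⟫ ≤ 0 := by
  intro w hw
  by_contra hc
  push_neg at hc
  set c : ℝ := ⟪z - π, w - π⟫ with hcdef
  set D : ℝ := ‖w - π‖ ^ 2 with hDdef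
  have hD : 0 ≤ D := sq_nonneg _
  set t : ℝ := min 1 (c / (D + 1)) with htdef
  have ht0 : 0 < t := lt_min one_pos (div_pos hc (by linarith))
  have ht1 : t ≤ 1 := min_le_left _ _
  have htD : t * D ≤ (c / (D+1)) * D := by
    have := min_le_right 1 (c / (D + 1))
    exact mul_le_mul_of_nonneg_right this hD
  have hmem : π + t • (w - π) ∈ S := by
    have h2 : (1-t) • π + t • w ∈ S := hS hπ hw (by linarith) ht0.le (by ring)
    have h3 : (1-t) • π + t • w = π + t • (w - π) := by module
    rwa [h3] at h2
  have h4 := hmin _ hmem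
  have h5 : z - (π + t • (w - π)) = (z - π) - t • (w - π) := by abel
  have h6 : ‖(z - π) - t • (w - π)‖^2 = ‖z-π‖^2 - 2*(t*c) + t^2 * D := by
    rw [norm_sub_sq_real, real_inner_smul_right, norm_smul]
    rw [Real.norm_eq_abs, abs_of_pos ht0]
    rw [hcdef, hDdef]; ring
  have h7 : ‖z - π‖^2 ≤ ‖(z - π) - t • (w - π)‖^2 := by
    have := h4
    rw [h5] at this
    have hnn : (0:ℝ) ≤ ‖z - π‖ := norm_nonneg _
    nlinarith [norm_nonneg ((z - π) - t • (w - π))]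
  have h8 : (c / (D+1)) * D < c := by
    rw [div_mul_eq_mul_div, div_lt_iff₀ (by linarith)]
    nlinarith
  nlinarith [h6, h7, htD, h8, mul_pos ht0 hc, sq_nonneg t]

set_option maxHeartbeats 1000000 in
theorem stmt_11 {n p : ℕ}
    (f : EuclideanSpace ℝ (Fin n) → ℝ) (σf : ℝ) (hσf : 0 < σf)
    (hfc : Continuous f) (hfsc : StrongConvexOn Set.univ σf f)
    (U : Set (EuclideanSpace ℝ (Fin n))) (hUne : U.Nonempty) (hUcl : IsClosed U) (hUcv : Convex ℝ U)
    (G : EuclideanSpace ℝ (Fin n) →L[ℝ] EuclideanSpace ℝ (Fin p)) (hG : G ≠ 0) (g : EuclideanSpace ℝ (Fin p))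
    (K : Set (EuclideanSpace ℝ (Fin p))) (hKne : K.Nonempty) (hKcl : IsClosed K) (hKcv : Convex ℝ K)
    (hKcone : ∀ c : ℝ, 0 ≤ c → ∀ v ∈ K, c • v ∈ K)
    (Kstar : Set (EuclideanSpace ℝ (Fin p)))
    (hKstar : Kstar = {x : EuclideanSpace ℝ (Fin p) | ∀ v ∈ K, 0 ≤ ⟪x, v⟫})
    (Lag : EuclideanSpace ℝ (Fin n) → EuclideanSpace ℝ (Fin p) → ℝ)
    (hLag : ∀ u x, Lag u x = f u + ⟪x, -(G u) - g⟫)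
    (uu : EuclideanSpace ℝ (Fin p) → EuclideanSpace ℝ (Fin n))
    (huu : ∀ x : EuclideanSpace ℝ (Fin p), uu x ∈ U ∧ ∀ u ∈ U, Lag (uu x) x ≤ Lag u x)
    (d : EuclideanSpace ℝ (Fin p) → ℝ) (hd : ∀ x, d x = Lag (uu x) x)
    (ustar : EuclideanSpace ℝ (Fin n))
    (hustar : ustar ∈ U ∧ G ustar + g ∈ K ∧ ∀ u ∈ U, G u + g ∈ K → f ustar ≤ f u)
    (fstar : ℝ) (hfstar : fstar = f ustar)
    (Xstar : Set (EuclideanSpace ℝ (Fin p))) (hXstar : Xstar = {x ∈ Kstar | d x = fstar})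
    (hXne : Xstar.Nonempty)
    (Ld : ℝ) (hLd : Ld = ‖G‖ ^ 2 / σf)
    (projKs : EuclideanSpace ℝ (Fin p) → EuclideanSpace ℝ (Fin p))
    (hprojKs : ∀ z : EuclideanSpace ℝ (Fin p), projKs z ∈ Kstar ∧ ∀ w ∈ Kstar, ‖z - projKs z‖ ≤ ‖z - w‖)
    (θ : ℕ → ℝ) (hθ0 : θ 0 = 0) (hθ1 : θ 1 = 1)
    (hθrec : ∀ k, 1 ≤ k → θ (k + 1) = (1 + Real.sqrt (1 + 4 * θ k ^ 2)) / 2)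
    (x y : ℕ → EuclideanSpace ℝ (Fin p)) (hx0K : x 0 ∈ Kstar) (hy1 : y 1 = x 0)
    (hxrec : ∀ k, 1 ≤ k → x k = projKs (y k + (1 / Ld) • (-(G (uu (y k))) - g)))
    (hyrec : ∀ k, 1 ≤ k →
      y (k + 1) = x k + ((θ k - 1) / θ (k + 1)) • (x k - x (k - 1)))
    (xstar : EuclideanSpace ℝ (Fin p)) (hxstar : xstar ∈ Xstar)
    (hxstarmin : ∀ z ∈ Xstar, ‖x 0 - xstar‖ ≤ ‖x 0 - z‖)
    (Rd : ℝ) (hRd : Rd = ‖x 0 - xstar‖)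
    (Sθ : ℕ → ℝ) (hSθ : ∀ k, Sθ k = ∑ j ∈ Finset.range (k + 1), θ j)
    (uhat : ℕ → EuclideanSpace ℝ (Fin n))
    (huhat : ∀ k, uhat k = (Sθ k)⁻¹ • ∑ j ∈ Finset.range (k + 1), θ j • uu (y j))
 :
    ∀ k : ℕ, 1 ≤ k →
      Metric.infDist (G (uhat k) + g) K ≤ 8 * Ld * Rd / ((k : ℝ) + 1) ^ 2 ∧
      |f (uhat k) - fstar| ≤
        8 * Ld / ((k : ℝ) + 1) ^ 2 * (Rd ^ 2 + max Rd ‖x 0‖ ^ 2) := by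
  -- ## basic positivity
  have hGnorm : 0 < ‖G‖ := norm_pos_iff.mpr hG
  have hLd0 : 0 < Ld := by rw [hLd]; exact div_pos (pow_pos hGnorm 2) hσf
  -- ## Kstar facts
  have hKsmem : ∀ w, w ∈ Kstar ↔ ∀ v ∈ K, 0 ≤ ⟪w, v⟫ := by
    intro w; rw [hKstar]; exact Iff.rfl
  have hKs0 : (0 : EuclideanSpace ℝ (Fin p)) ∈ Kstar := by
    rw [hKsmem]; intro v hv; simp
  have hKsadd : ∀ a ∈ Kstar, ∀ b ∈ Kstar, a + b ∈ Kstar := by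
    intro a ha b hb
    rw [hKsmem] at ha hb ⊢
    intro v hv
    have h1 := ha v hv; have h2 := hb v hv
    rw [inner_add_left]; linarith
  have hKssmul : ∀ (c:ℝ), 0 ≤ c → ∀ a ∈ Kstar, c • a ∈ Kstar := by
    intro c hc a ha
    rw [hKsmem] at ha ⊢
    intro v hv
    rw [real_inner_smul_left]
    exact mul_nonneg hc (ha v hv)
  have hKscv : Convex ℝ Kstar := by
    intro a ha b hb s t hs ht hst
    rw [hKsmem] at ha hb ⊢
    intro v hv
    have h1 := ha v hv; have h2 := hb v hv
    rw [inner_add_left, real_inner_smul_left, real_inner_smul_left]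
    have := mul_nonneg hs h1; have := mul_nonneg ht h2; linarith
  -- ## Lagrangian affine shift
  have haffine : ∀ u a b, Lag u a = Lag u b + ⟪a - b, -(G u) - g⟫ := by
    intro u a b
    rw [hLag, hLag, inner_sub_left]; ring
  -- ## strong minimality
  have hsmin : ∀ b u, u ∈ U → Lag (uu b) b + σf/2 * ‖u - uu b‖^2 ≤ Lag u b := by
    intro bp u hu
    have hzU : uu bp ∈ U := (huu bp).1
    have key : ∀ nn : ℕ, (1 - 1/((nn:ℝ)+1)) * (σf/2 * ‖u - uu bp‖^2)
        ≤ Lag u bp - Lag (uu bp) bp := by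
      intro nn
      set a : ℝ := 1/((nn:ℝ)+1) with ha
      have ha0 : 0 < a := by positivity
      have ha1 : a ≤ 1 := by
        rw [ha, div_le_one (by positivity)]
        have : (0:ℝ) ≤ (nn:ℝ) := Nat.cast_nonneg nn
        linarith
      have hb0 : (0:ℝ) ≤ 1 - a := by linarith
      have hfs := hfsc.2 (Set.mem_univ u) (Set.mem_univ (uu bp)) ha0.le hb0 (by ring)
      simp only [smul_eq_mul] at hfs
      have hcomb : a • u + (1-a) • uu bp ∈ U := hUcv hu hzU ha0.le hb0 (by ring)
      have hlagcomb : Lag (a • u + (1-a) • uu bp) bp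
          = f (a • u + (1-a) • uu bp) + (a * ⟪bp, -(G u) - g⟫ + (1-a) * ⟪bp, -(G (uu bp)) - g⟫) := by
        rw [hLag]
        congr 1
        have hG2 : -(G (a • u + (1-a) • uu bp)) - g
            = a • (-(G u) - g) + (1-a) • (-(G (uu bp)) - g) := by
          rw [map_add, map_smul, map_smul]; module
        rw [hG2, inner_add_right, real_inner_smul_right, real_inner_smul_right]
      have hmin2 : Lag (uu bp) bp ≤ Lag (a • u + (1-a) • uu bp) bp := (huu bp).2 _ hcomb
      have hLu : Lag u bp = f u + ⟪bp, -(G u) - g⟫ := hLag _ _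
      have hLz : Lag (uu bp) bp = f (uu bp) + ⟪bp, -(G (uu bp)) - g⟫ := hLag _ _
      -- combine
      have hineq : Lag (uu bp) bp ≤ a * Lag u bp + (1-a) * Lag (uu bp) bp
          - a * (1-a) * (σf/2 * ‖u - uu bp‖^2) := by
        rw [hlagcomb] at hmin2
        rw [hLu, hLz]
        nlinarith [hfs]
      have h2 : 0 ≤ a * (Lag u bp - Lag (uu bp) bp - (1-a) * (σf/2 * ‖u - uu bp‖^2)) := by
        nlinarith [hineq]
      have h3 := (mul_nonneg_iff_of_pos_left ha0).mp h2
      linarith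
    have := le_of_forall_one_sub_mul key
    linarith
  -- ## d is min value
  have hupper : ∀ a u, u ∈ U → d a ≤ Lag u a := by
    intro a u hu; rw [hd]; exact (huu a).2 u hu
  -- ## descent lemma
  have hdesc : ∀ a b, Lag (uu b) a - Ld/2 * ‖a - b‖^2 ≤ d a := by
    intro a b
    have h1 : Lag (uu b) b + σf/2 * ‖uu a - uu b‖^2 ≤ Lag (uu a) b :=
      hsmin b (uu a) (huu a).1
    have h2 : d a = Lag (uu a) b + ⟪a - b, -(G (uu a)) - g⟫ := by
      rw [hd]; exact haffine _ _ _
    have h3 : Lag (uu b) a = Lag (uu b) b + ⟪a - b, -(G (uu b)) - g⟫ := haffine _ _ _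
    have h4 : ⟪a - b, -(G (uu a)) - g⟫
        = ⟪a - b, -(G (uu b)) - g⟫ + ⟪a - b, G (uu b - uu a)⟫ := by
      rw [← inner_add_right]
      congr 1
      rw [map_sub]; module
    have h5 : |⟪a - b, G (uu b - uu a)⟫| ≤ ‖G‖ * ‖a-b‖ * ‖uu b - uu a‖ := by
      calc |⟪a - b, G (uu b - uu a)⟫| ≤ ‖a-b‖ * ‖G (uu b - uu a)‖ := abs_real_inner_le_norm _ _
        _ ≤ ‖a-b‖ * (‖G‖ * ‖uu b - uu a‖) := by
            have := G.le_opNorm (uu b - uu a)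
            exact mul_le_mul_of_nonneg_left this (norm_nonneg _)
        _ = ‖G‖ * ‖a-b‖ * ‖uu b - uu a‖ := by ring
    have h6 : ‖G‖*‖a-b‖*‖uu b - uu a‖ - σf/2 * ‖uu a - uu b‖^2
        ≤ ‖G‖^2 * ‖a-b‖^2 / (2*σf) := by
      rw [norm_sub_rev (uu a) (uu b), le_div_iff₀ (by positivity)]
      nlinarith [sq_nonneg (σf * ‖uu b - uu a‖ - ‖G‖ * ‖a - b‖)]
    have h7 : Ld/2 * ‖a-b‖^2 = ‖G‖^2*‖a-b‖^2/(2*σf) := by rw [hLd]; ring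
    have h5' : -(‖G‖*‖a-b‖*‖uu b - uu a‖) ≤ ⟪a - b, G (uu b - uu a)⟫ := by
      have := neg_abs_le (⟪a - b, G (uu b - uu a)⟫ : ℝ); linarith
    linarith [h1, h2, h3, h4, h5', h6, h7]
  -- ## theta facts
  have hθge1 : ∀ k, 1 ≤ k → 1 ≤ θ k := by
    intro k hk
    induction k, hk using Nat.le_induction with
    | base => rw [hθ1]
    | succ m hm ih =>
      have hrec := hθrec m hm
      have harg : (1:ℝ) ≤ 1 + 4 * θ m ^ 2 := by linarith [sq_nonneg (θ m)]
      have hs := Real.sqrt_le_sqrt harg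
      rw [Real.sqrt_one] at hs
      rw [hrec]; linarith
  have hθnn : ∀ k, 0 ≤ θ k := by
    intro k
    cases k with
    | zero => rw [hθ0]
    | succ m => linarith [hθge1 (m+1) (by omega)]
  have hθsq : ∀ k, θ (k+1)^2 - θ (k+1) = θ k^2 := by
    intro k
    cases k with
    | zero => rw [hθ1, hθ0]; norm_num
    | succ m =>
      have hrec := hθrec (m+1) (by omega)
      have harg : (0:ℝ) ≤ 1 + 4 * θ (m+1) ^ 2 := by positivity
      have hs := Real.sq_sqrt harg
      rw [hrec]
      linear_combination (1/4) * hs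
  have hθhalf : ∀ k : ℕ, 1 ≤ k → ((k:ℝ)+1)/2 ≤ θ k := by
    intro k hk
    induction k, hk using Nat.le_induction with
    | base => rw [hθ1]; norm_num
    | succ m hm ih =>
      have hrec := hθrec m hm
      have hθm0 : 0 ≤ θ m := hθnn m
      have hsq : Real.sqrt ((2*θ m)^2) ≤ Real.sqrt (1 + 4*θ m^2) :=
        Real.sqrt_le_sqrt (by nlinarith [sq_nonneg (θ m)])
      rw [Real.sqrt_sq (by positivity)] at hsq
      rw [hrec]
      push_cast
      linarith
  have hSθsq : ∀ k, Sθ k = θ k^2 := by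
    intro k
    induction k with
    | zero => rw [hSθ]; simp [hθ0]
    | succ m ih =>
      rw [hSθ] at ih ⊢
      rw [Finset.sum_range_succ, ih]
      have := hθsq m
      linarith
  -- ## iterates in Kstar
  have xkK : ∀ k, x k ∈ Kstar := by
    intro k
    cases k with
    | zero => exact hx0K
    | succ m =>
      rw [hxrec (m+1) (by omega)]
      exact (hprojKs _).1
  -- ## per-step inequality
  have hPS : ∀ j, 1 ≤ j → ∀ w ∈ Kstar,
      Lag (uu (y j)) w + Ld/2 * (‖w - x j‖^2 - ‖w - y j‖^2) ≤ d (x j) := by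
    intro j hj w hw
    set gr : EuclideanSpace ℝ (Fin p) := -(G (uu (y j))) - g with hgr
    set z : EuclideanSpace ℝ (Fin p) := y j + (1/Ld) • gr with hz
    have hxj : x j = projKs z := hxrec j hj
    have hVI : ⟪z - x j, w - x j⟫ ≤ 0 := by
      have h := vi_aux hKscv (hprojKs z).1 (hprojKs z).2 w hw
      rwa [← hxj] at h
    have hzdecomp : z - x j = (y j - x j) + (1/Ld) • gr := by rw [hz]; abel
    have hinner : ⟪y j - x j, w - x j⟫ + (1/Ld) * ⟪gr, w - x j⟫ ≤ 0 := by
      rw [← real_inner_smul_left, ← inner_add_left, ← hzdecomp]; exact hVI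
    have hgrb : ⟪gr, w - x j⟫ ≤ Ld * ⟪x j - y j, w - x j⟫ := by
      have h2 : (1/Ld) * ⟪gr, w - x j⟫ ≤ ⟪x j - y j, w - x j⟫ := by
        have : (⟪y j - x j, w - x j⟫ : ℝ) = - ⟪x j - y j, w - x j⟫ := by
          rw [show y j - x j = -(x j - y j) by abel, inner_neg_left]
        linarith [hinner, this]
      calc (⟪gr, w - x j⟫ : ℝ) = Ld * ((1/Ld) * ⟪gr, w - x j⟫) := by
            field_simp
        _ ≤ Ld * ⟪x j - y j, w - x j⟫ := mul_le_mul_of_nonneg_left h2 hLd0.le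
    have hdes := hdesc (x j) (y j)
    have haff : Lag (uu (y j)) (x j) = Lag (uu (y j)) w + ⟪x j - w, gr⟫ := by
      rw [hgr]; exact haffine _ _ _
    have hflip : (⟪x j - w, gr⟫ : ℝ) = - ⟪gr, w - x j⟫ := by
      rw [real_inner_comm, show x j - w = -(w - x j) by abel, inner_neg_right]
    have hid : ‖x j - w‖^2 - ‖y j - w‖^2 + ‖x j - y j‖^2 = 2 * ⟪x j - y j, x j - w⟫ := by
      have e1 := norm_sub_sq_real (x j - w) (x j - y j)
      have e0 : (x j - w) - (x j - y j) = y j - w := by abel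
      rw [e0] at e1
      linarith [e1, real_inner_comm (x j - w) (x j - y j)]
    have hflip2 : (⟪x j - y j, w - x j⟫ : ℝ) = - ⟪x j - y j, x j - w⟫ := by
      rw [show w - x j = -(x j - w) by abel, inner_neg_right]
    have hrev1 : ‖w - x j‖ = ‖x j - w‖ := norm_sub_rev _ _
    have hrev2 : ‖w - y j‖ = ‖y j - w‖ := norm_sub_rev _ _
    rw [hrev1, hrev2]
    nlinarith [hdes, haff, hflip, hgrb, hid, hflip2, hLd0]
  -- ## momentum auxiliary sequence
  set v : ℕ → EuclideanSpace ℝ (Fin p) := fun k => θ k • x k - (θ k - 1) • x (k-1) with hv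
  have hv0 : v 0 = x 0 := by
    show θ 0 • x 0 - (θ 0 - 1) • x (0-1) = x 0
    rw [hθ0]
    norm_num
  -- ## telescoped inequality
  have htel : ∀ k, ∀ w ∈ Kstar,
      (∑ j ∈ Finset.range (k+1), θ j * Lag (uu (y j)) w)
        + Ld/2 * (‖w - v k‖^2 - ‖w - x 0‖^2) ≤ θ k^2 * d (x k) := by
    intro k
    induction k with
    | zero =>
      intro w hw
      simp [Finset.sum_range_one, hθ0, hv0]
    | succ m ih =>
      intro w hw
      have hτ1 : 1 ≤ θ (m+1) := hθge1 (m+1) (by omega)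
      have hτ0 : 0 < θ (m+1) := by linarith
      have hτne : θ (m+1) ≠ 0 := hτ0.ne'
      have hτinv0 : (0:ℝ) ≤ (θ (m+1))⁻¹ := by positivity
      have hτinv1 : (θ (m+1))⁻¹ ≤ 1 := by
        have := (div_le_one hτ0).mpr hτ1
        simpa [one_div] using this
      set W := (1 - (θ (m+1))⁻¹) • x m + (θ (m+1))⁻¹ • w with hW
      have hWK : W ∈ Kstar := hKscv (xkK m) hw (by linarith) hτinv0 (by ring)
      have hps := hPS (m+1) (by omega) W hWK
      have hvm1 : v (m+1) = θ (m+1) • x (m+1) - (θ (m+1) - 1) • x m := by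
        show θ (m+1) • x (m+1) - (θ (m+1) - 1) • x ((m+1)-1) = _
        norm_num
      have hid1 : θ (m+1) • (W - x (m+1)) = w - v (m+1) := by
        rw [hW, hvm1]
        match_scalars <;> (field_simp; try ring)
      have hid2 : θ (m+1) • (W - y (m+1)) = w - v m := by
        cases m with
        | zero =>
          rw [hW, hv0, show y (0+1) = x 0 from hy1]
          match_scalars <;> (field_simp; try ring)
        | succ mm =>
          have hyr := hyrec (mm+1) (by omega)
          simp only [Nat.add_sub_cancel] at hyr
          have hvm : v (mm+1) = θ (mm+1) • x (mm+1) - (θ (mm+1) - 1) • x mm := by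
            show θ (mm+1) • x (mm+1) - (θ (mm+1) - 1) • x ((mm+1)-1) = _
            norm_num
          rw [hW, hvm, hyr]
          match_scalars <;> (field_simp; try ring)
      have hn1 : ‖w - v (m+1)‖^2 = θ (m+1)^2 * ‖W - x (m+1)‖^2 := by
        rw [← hid1, norm_smul, Real.norm_eq_abs, abs_of_pos hτ0, mul_pow]
      have hn2 : ‖w - v m‖^2 = θ (m+1)^2 * ‖W - y (m+1)‖^2 := by
        rw [← hid2, norm_smul, Real.norm_eq_abs, abs_of_pos hτ0, mul_pow]
      have hLcomb : Lag (uu (y (m+1))) W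
          = (1 - (θ (m+1))⁻¹) * Lag (uu (y (m+1))) (x m)
            + (θ (m+1))⁻¹ * Lag (uu (y (m+1))) w := by
        rw [hLag, hLag, hLag, hW, inner_add_left, real_inner_smul_left, real_inner_smul_left]
        ring
      have hLxm : d (x m) ≤ Lag (uu (y (m+1))) (x m) := hupper (x m) _ (huu _).1
      have hθsqm := hθsq m
      have eq1 : θ (m+1)^2 * (Lag (uu (y (m+1))) W
            + Ld/2 * (‖W - x (m+1)‖^2 - ‖W - y (m+1)‖^2))
          = θ m ^2 * Lag (uu (y (m+1))) (x m) + θ (m+1) * Lag (uu (y (m+1))) w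
            + Ld/2 * (‖w - v (m+1)‖^2 - ‖w - v m‖^2) := by
        rw [hLcomb, hn1, hn2, ← hθsqm]
        field_simp
      have hps2 : θ m ^2 * Lag (uu (y (m+1))) (x m) + θ (m+1) * Lag (uu (y (m+1))) w
            + Ld/2 * (‖w - v (m+1)‖^2 - ‖w - v m‖^2) ≤ θ (m+1)^2 * d (x (m+1)) := by
        rw [← eq1]
        exact mul_le_mul_of_nonneg_left hps (sq_nonneg _)
      have hdm : θ m^2 * d (x m) ≤ θ m^2 * Lag (uu (y (m+1))) (x m) :=
        mul_le_mul_of_nonneg_left hLxm (sq_nonneg _)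
      have ihw := ih w hw
      rw [Finset.sum_range_succ]
      linarith [hps2, hdm, ihw]
  -- ## weak duality
  have hwd : ∀ w ∈ Kstar, d w ≤ fstar := by
    intro w hw
    have h1 : d w ≤ Lag ustar w := hupper w ustar hustar.1
    have h2 : Lag ustar w = f ustar + ⟪w, -(G ustar) - g⟫ := hLag _ _
    have h3 : (0:ℝ) ≤ ⟪w, G ustar + g⟫ := by
      rw [hKsmem] at hw
      exact hw _ hustar.2.1
    have h4 : (⟪w, -(G ustar) - g⟫ : ℝ) = - ⟪w, G ustar + g⟫ := by
      rw [show -(G ustar) - g = -(G ustar + g) by module, inner_neg_right]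
    rw [hfstar]
    linarith [h1, h2.le, h2.ge]
  -- ## xstar facts
  have hxsKs : xstar ∈ Kstar := by
    rw [hXstar] at hxstar
    exact hxstar.1
  have hdxs : d xstar = fstar := by
    rw [hXstar] at hxstar
    exact hxstar.2
  -- ## convexity of f
  have hfcv : ConvexOn ℝ Set.univ f := by
    refine ⟨convex_univ, fun a _ b _ s t hs ht hst => ?_⟩
    have h := hfsc.2 (Set.mem_univ a) (Set.mem_univ b) hs ht hst
    simp only [smul_eq_mul] at h ⊢
    nlinarith [mul_nonneg (mul_nonneg hs ht) (mul_nonneg (le_of_lt (half_pos hσf)) (sq_nonneg ‖a - b‖))]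
  have hRd0 : 0 ≤ Rd := by rw [hRd]; exact norm_nonneg _
  -- ## fix k
  intro k hk
  have hθk1 : 1 ≤ θ k := hθge1 k hk
  set S : ℝ := θ k ^ 2 with hSdef
  have hSpos : 0 < S := by nlinarith
  have hSne : S ≠ 0 := hSpos.ne'
  have hwnn : ∀ j ∈ Finset.range (k+1), (0:ℝ) ≤ θ j / S :=
    fun j _ => div_nonneg (hθnn j) hSpos.le
  have hsum1 : ∑ j ∈ Finset.range (k+1), θ j / S = 1 := by
    rw [← Finset.sum_div, ← hSθ k, hSθsq k, ← hSdef, div_self hSne]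
  have huhat' : uhat k = ∑ j ∈ Finset.range (k+1), (θ j / S) • uu (y j) := by
    rw [huhat k, hSθsq k, ← hSdef, Finset.smul_sum]
    refine Finset.sum_congr rfl (fun j _ => ?_)
    rw [smul_smul, div_eq_inv_mul]
  have hukU : uhat k ∈ U := by
    rw [huhat']
    exact Convex.sum_mem hUcv hwnn hsum1 (fun j _ => (huu (y j)).1)
  have hjens : f (uhat k) ≤ ∑ j ∈ Finset.range (k+1), (θ j / S) * f (uu (y j)) := by
    have h := hfcv.map_sum_le (p := fun j => uu (y j)) hwnn hsum1 (fun i _ => Set.mem_univ _)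
    rw [← huhat'] at h
    simpa [smul_eq_mul] using h
  have hkey : ∑ j ∈ Finset.range (k+1), θ j • uu (y j) = S • uhat k := by
    rw [huhat k, hSθsq k, ← hSdef]
    exact (smul_inv_smul₀ hSne _).symm
  -- ## master inequality
  have hmaster : ∀ w ∈ Kstar,
      f (uhat k) + ⟪w, -(G (uhat k)) - g⟫ - fstar ≤ Ld/2 * ‖w - x 0‖^2 / S := by
    intro w hw
    have htelk := htel k w hw
    have hlin : ∑ j ∈ Finset.range (k+1), θ j * ⟪w, -(G (uu (y j))) - g⟫
        = S * ⟪w, -(G (uhat k)) - g⟫ := by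
      have e1 : ∀ j ∈ Finset.range (k+1),
          θ j * ⟪w, -(G (uu (y j))) - g⟫ = ⟪w, θ j • (-(G (uu (y j))) - g)⟫ :=
        fun j _ => (real_inner_smul_right _ _ _).symm
      rw [Finset.sum_congr rfl e1, ← inner_sum]
      rw [show (S * ⟪w, -(G (uhat k)) - g⟫ : ℝ) = ⟪w, S • (-(G (uhat k)) - g)⟫
        from (real_inner_smul_right _ _ _).symm]
      congr 1
      have e2 : ∀ j ∈ Finset.range (k+1),
          θ j • (-(G (uu (y j))) - g) = -(G (θ j • uu (y j))) - θ j • g := by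
        intro j _
        rw [map_smul]
        module
      rw [Finset.sum_congr rfl e2, Finset.sum_sub_distrib, Finset.sum_neg_distrib,
        ← map_sum, hkey, ← Finset.sum_smul, ← hSθ k, hSθsq k, ← hSdef, map_smul]
      module
    have hsum_ge : S * (f (uhat k) + ⟪w, -(G (uhat k)) - g⟫)
        ≤ ∑ j ∈ Finset.range (k+1), θ j * Lag (uu (y j)) w := by
      have e : ∀ j ∈ Finset.range (k+1),
          θ j * Lag (uu (y j)) w = θ j * f (uu (y j)) + θ j * ⟪w, -(G (uu (y j))) - g⟫ := by
        intro j _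
        rw [hLag]
        ring
      rw [Finset.sum_congr rfl e, Finset.sum_add_distrib, hlin]
      have h2 : S * f (uhat k) ≤ S * ∑ j ∈ Finset.range (k+1), (θ j / S) * f (uu (y j)) :=
        mul_le_mul_of_nonneg_left hjens hSpos.le
      rw [Finset.mul_sum] at h2
      have e2 : ∀ j ∈ Finset.range (k+1), S * ((θ j / S) * f (uu (y j))) = θ j * f (uu (y j)) := by
        intro j _
        field_simp
      rw [Finset.sum_congr rfl e2] at h2
      linarith
    have hdk : d (x k) ≤ fstar := hwd (x k) (xkK k)
    have hnn : (0:ℝ) ≤ Ld/2 * ‖w - v k‖^2 := mul_nonneg (by linarith) (sq_nonneg _)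
    have hSd : S * d (x k) ≤ S * fstar := mul_le_mul_of_nonneg_left hdk hSpos.le
    rw [le_div_iff₀ hSpos]
    rw [← hSdef] at htelk
    have hfin : S * (f (uhat k) + ⟪w, -(G (uhat k)) - g⟫) - S * fstar
        ≤ Ld/2 * ‖w - x 0‖^2 := by
      linarith [htelk, hsum_ge, hSd, hnn]
    calc (f (uhat k) + ⟪w, -(G (uhat k)) - g⟫ - fstar) * S
        = S * (f (uhat k) + ⟪w, -(G (uhat k)) - g⟫) - S * fstar := by ring
      _ ≤ Ld/2 * ‖w - x 0‖^2 := hfin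
  -- ## lower bound via xstar
  have hC : ⟪xstar, G (uhat k) + g⟫ ≤ f (uhat k) - fstar := by
    have h1 : d xstar ≤ Lag (uhat k) xstar := hupper xstar (uhat k) hukU
    have h2 : Lag (uhat k) xstar = f (uhat k) + ⟪xstar, -(G (uhat k)) - g⟫ := hLag _ _
    have h3 : (⟪xstar, -(G (uhat k)) - g⟫ : ℝ) = - ⟪xstar, G (uhat k) + g⟫ := by
      rw [show -(G (uhat k)) - g = -(G (uhat k) + g) by module, inner_neg_right]
    rw [hdxs] at h1
    linarith [h2.le, h2.ge]
  -- ## projection onto K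
  obtain ⟨Pi, hPiK, hPid⟩ := hKcl.exists_infDist_eq_dist hKne (G (uhat k) + g)
  set ρ : EuclideanSpace ℝ (Fin p) := (G (uhat k) + g) - Pi with hρdef
  have hdistρ : Metric.infDist (G (uhat k) + g) K = ‖ρ‖ := by rw [hPid, dist_eq_norm]
  have hminK : ∀ w ∈ K, ‖(G (uhat k) + g) - Pi‖ ≤ ‖(G (uhat k) + g) - w‖ := by
    intro w hwK
    rw [← dist_eq_norm, ← dist_eq_norm, ← hPid]
    exact Metric.infDist_le_dist_of_mem hwK
  have hVIK := vi_aux hKcv hPiK hminK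
  have hKadd : ∀ a ∈ K, ∀ b ∈ K, a + b ∈ K := by
    intro a ha b hb
    have hm : (1/2:ℝ) • a + (1/2:ℝ) • b ∈ K := hKcv ha hb (by norm_num) (by norm_num) (by norm_num)
    have h2 := hKcone 2 (by norm_num) _ hm
    have h3 : (2:ℝ) • ((1/2:ℝ) • a + (1/2:ℝ) • b) = a + b := by module
    rwa [h3] at h2
  have hρneg : ∀ w ∈ K, (⟪ρ, w⟫:ℝ) ≤ 0 := by
    intro w hwK
    have h1 := hVIK (Pi + w) (hKadd _ hPiK _ hwK)
    have h2 : Pi + w - Pi = w := by abel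
    rw [h2] at h1
    exact h1
  have h0K : (0 : EuclideanSpace ℝ (Fin p)) ∈ K := by
    obtain ⟨a, ha⟩ := hKne
    have := hKcone 0 le_rfl a ha
    simpa using this
  have hρPi : (⟪ρ, Pi⟫ : ℝ) = 0 := by
    have h1 := hρneg Pi hPiK
    have h2 := hVIK 0 h0K
    rw [zero_sub, inner_neg_right] at h2
    linarith
  have hρz : (⟪ρ, G (uhat k) + g⟫ : ℝ) = ‖ρ‖^2 := by
    have e : G (uhat k) + g = ρ + Pi := by rw [hρdef]; abel
    rw [e, inner_add_right, hρPi, real_inner_self_eq_norm_sq]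
    ring
  have hnegρKs : -ρ ∈ Kstar := by
    rw [hKsmem]
    intro vv hvv
    rw [inner_neg_left]
    linarith [hρneg vv hvv]
  have hGflip : -(G (uhat k)) - g = -(G (uhat k) + g) := by module
  -- ## feasibility: scaled bound
  have hfeas0 : ∀ R : ℝ, 0 < R → R * ‖ρ‖ ≤ Ld/2 * (Rd + R)^2 / S := by
    intro R hR
    by_cases hρ0 : ρ = 0
    · rw [hρ0, norm_zero, mul_zero]
      have h1 : (0:ℝ) ≤ Ld/2 * (Rd + R)^2 := mul_nonneg (by linarith) (sq_nonneg _)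
      exact div_nonneg h1 hSpos.le
    · have hρn : 0 < ‖ρ‖ := norm_pos_iff.mpr hρ0
      set w : EuclideanSpace ℝ (Fin p) := xstar + (R / ‖ρ‖) • (-ρ) with hwdef
      have hwK : w ∈ Kstar := hKsadd _ hxsKs _ (hKssmul _ (by positivity) _ hnegρKs)
      have hm := hmaster w hwK
      have hinner : (⟪w, -(G (uhat k)) - g⟫ : ℝ) = - ⟪xstar, G (uhat k) + g⟫ + R * ‖ρ‖ := by
        rw [hGflip, hwdef, inner_add_left, real_inner_smul_left, inner_neg_right,
          inner_neg_neg, hρz]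
        field_simp
      have hnormw : ‖w - x 0‖ ≤ Rd + R := by
        have e : w - x 0 = (xstar - x 0) + (R/‖ρ‖) • (-ρ) := by rw [hwdef]; abel
        rw [e]
        calc ‖(xstar - x 0) + (R/‖ρ‖) • (-ρ)‖
            ≤ ‖xstar - x 0‖ + ‖(R/‖ρ‖) • (-ρ)‖ := norm_add_le _ _
          _ = Rd + R := by
              rw [norm_smul, norm_neg, Real.norm_eq_abs, abs_of_pos (by positivity),
                hRd, norm_sub_rev]
              field_simp
      have hsq : ‖w - x 0‖^2 ≤ (Rd + R)^2 :=
        pow_le_pow_left₀ (norm_nonneg _) hnormw 2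
      have hmono : Ld/2 * ‖w - x 0‖^2 / S ≤ Ld/2 * (Rd + R)^2 / S := by
        have h1 : Ld/2 * ‖w - x 0‖^2 ≤ Ld/2 * (Rd + R)^2 :=
          mul_le_mul_of_nonneg_left hsq (by linarith)
        rw [div_le_div_iff₀ hSpos hSpos]
        linarith [mul_le_mul_of_nonneg_right h1 hSpos.le]
      rw [hinner] at hm
      linarith [hm, hC, hmono]
  -- ## feasibility final
  have hk2pos : (0:ℝ) < ((k:ℝ)+1)^2 := by positivity
  have hSquarter : ((k:ℝ)+1)^2 / 4 ≤ S := by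
    have h := hθhalf k hk
    have h2 : (0:ℝ) ≤ ((k:ℝ)+1)/2 := by positivity
    have h3 := pow_le_pow_left₀ h2 h 2
    rw [hSdef]
    calc ((k:ℝ)+1)^2/4 = (((k:ℝ)+1)/2)^2 := by ring
      _ ≤ θ k^2 := h3
  have hfeas : ‖ρ‖ ≤ 2 * Ld * Rd / S := by
    rcases eq_or_lt_of_le hRd0 with h0 | hpos
    · have hn0 : ‖ρ‖ ≤ 0 := by
        by_contra hcon
        push_neg at hcon
        have hRpos : 0 < S * ‖ρ‖ / Ld := by positivity
        have h1 := hfeas0 _ hRpos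
        rw [← h0] at h1
        have heq : Ld/2 * ((0:ℝ) + S * ‖ρ‖ / Ld)^2 / S = (S * ‖ρ‖ / Ld) * (‖ρ‖/2) := by
          field_simp
          ring
        rw [heq] at h1
        linarith [h1, mul_pos hRpos hcon]
      have hz : ‖ρ‖ = 0 := le_antisymm hn0 (norm_nonneg _)
      rw [hz, ← h0]
      simp
    · have h1 := hfeas0 Rd hpos
      have heq : Ld/2 * (Rd + Rd)^2 / S = Rd * (2*Ld*Rd/S) := by
        field_simp
        ring
      rw [heq] at h1
      exact le_of_mul_le_mul_left h1 hpos
  have hLdRd : (0:ℝ) ≤ 2 * Ld * Rd := mul_nonneg (mul_nonneg (by norm_num) hLd0.le) hRd0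
  have hfeasF : ‖ρ‖ ≤ 8 * Ld * Rd / ((k:ℝ)+1)^2 := by
    have h2 : 2 * Ld * Rd / S ≤ 8 * Ld * Rd / (((k:ℝ)+1)^2) := by
      rw [div_le_div_iff₀ hSpos hk2pos]
      linarith [mul_le_mul_of_nonneg_left hSquarter hLdRd]
    linarith
  refine ⟨by rw [hdistρ]; exact hfeasF, ?_⟩
  -- ## objective bound
  set M : ℝ := max Rd ‖x 0‖ with hM
  have hRdM : Rd ≤ M := le_max_left _ _
  have hx0M : ‖x 0‖ ≤ M := le_max_right _ _
  have hM0 : (0:ℝ) ≤ M := le_trans hRd0 hRdM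
  have hup : f (uhat k) - fstar ≤ Ld/2 * ‖x 0‖^2 / S := by
    have h := hmaster 0 hKs0
    rw [inner_zero_left, zero_sub, norm_neg] at h
    linarith
  have hxsnorm : ‖xstar‖ ≤ Rd + ‖x 0‖ := by
    calc ‖xstar‖ = ‖x 0 - (x 0 - xstar)‖ := by congr 1; abel
      _ ≤ ‖x 0‖ + ‖x 0 - xstar‖ := norm_sub_le _ _
      _ = Rd + ‖x 0‖ := by rw [hRd]; ring
  have hlo : fstar - f (uhat k) ≤ ‖xstar‖ * ‖ρ‖ := by
    have e : (⟪xstar, G (uhat k) + g⟫ : ℝ) = ⟪xstar, ρ⟫ + ⟪xstar, Pi⟫ := by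
      rw [← inner_add_right]
      congr 1
      rw [hρdef]
      abel
    have hPi0 : (0:ℝ) ≤ ⟪xstar, Pi⟫ := by
      have hx := hxsKs
      rw [hKsmem] at hx
      exact hx Pi hPiK
    have habs : - (‖xstar‖ * ‖ρ‖) ≤ (⟪xstar, ρ⟫:ℝ) := by
      have h1 := abs_real_inner_le_norm xstar ρ
      have h2 := neg_abs_le (⟪xstar, ρ⟫ : ℝ)
      linarith
    linarith [hC, e.le, e.ge]
  rw [abs_le]
  constructor
  · have h1 : ‖xstar‖ * ‖ρ‖ ≤ (Rd + ‖x 0‖) * (8*Ld*Rd/((k:ℝ)+1)^2) :=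
      mul_le_mul hxsnorm hfeasF (norm_nonneg _) (by linarith [norm_nonneg (x 0)])
    have h2 : (Rd + ‖x 0‖) * (8*Ld*Rd/((k:ℝ)+1)^2)
        ≤ 8 * Ld / ((k:ℝ)+1)^2 * (Rd^2 + M^2) := by
      have hnum : (Rd + ‖x 0‖) * (8*Ld*Rd) ≤ 8*Ld*(Rd^2+M^2) := by
        linarith [mul_le_mul_of_nonneg_left (mul_le_mul hx0M hRdM hRd0 hM0) hLd0.le]
      calc (Rd + ‖x 0‖) * (8*Ld*Rd/((k:ℝ)+1)^2)
          = ((Rd + ‖x 0‖) * (8*Ld*Rd))/((k:ℝ)+1)^2 := by ring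
        _ ≤ (8*Ld*(Rd^2+M^2))/((k:ℝ)+1)^2 := by
            rw [div_le_div_iff₀ hk2pos hk2pos]
            linarith [mul_le_mul_of_nonneg_right hnum hk2pos.le]
        _ = 8 * Ld / ((k:ℝ)+1)^2 * (Rd^2 + M^2) := by ring
    linarith [hlo, h1, h2]
  · have hx2 : ‖x 0‖^2 ≤ M^2 := pow_le_pow_left₀ (norm_nonneg _) hx0M 2
    have h2 : Ld/2 * ‖x 0‖^2 / S ≤ 8 * Ld / ((k:ℝ)+1)^2 * (Rd^2 + M^2) := by
      have hq4 : (0:ℝ) < ((k:ℝ)+1)^2/4 := by positivity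
      calc Ld/2 * ‖x 0‖^2 / S ≤ Ld/2 * M^2 / S := by
            rw [div_le_div_iff₀ hSpos hSpos]
            linarith [mul_le_mul_of_nonneg_right
              (mul_le_mul_of_nonneg_left hx2 (show (0:ℝ) ≤ Ld/2 by linarith)) hSpos.le]
        _ ≤ Ld/2 * M^2 / (((k:ℝ)+1)^2/4) := by
            rw [div_le_div_iff₀ hSpos hq4]
            linarith [mul_le_mul_of_nonneg_left hSquarter
              (mul_nonneg (show (0:ℝ) ≤ Ld/2 by linarith) (sq_nonneg M))]
        _ = 2*Ld*M^2/((k:ℝ)+1)^2 := by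
            field_simp
            ring
        _ ≤ 8 * Ld / ((k:ℝ)+1)^2 * (Rd^2 + M^2) := by
            have hnum2 : 2*Ld*M^2 ≤ 8*Ld*(Rd^2+M^2) := by
              linarith [mul_nonneg hLd0.le (sq_nonneg M), mul_nonneg hLd0.le (sq_nonneg Rd)]
            calc 2*Ld*M^2/((k:ℝ)+1)^2 ≤ (8*Ld*(Rd^2+M^2))/((k:ℝ)+1)^2 := by
                  rw [div_le_div_iff₀ hk2pos hk2pos]
                  linarith [mul_le_mul_of_nonneg_right hnum2 hk2pos.le]
              _ = 8 * Ld / ((k:ℝ)+1)^2 * (Rd^2 + M^2) := by ring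
    linarith [hup, h2]
end

section
/- For the regularized dual problem with parameter δ > 0, the regularized optimal multiplier stays close to x^0: if x*_δ is the (unique) maximizer of d_δ(x) = d(x) − (δ/2)‖x − x^0‖² over K*, then ‖x* − x*_δ‖ ≤ ‖x* − x^0‖ and consequently ‖x^0 − x*_δ‖ ≤ 2 R_d, where x* = [x^0]_{X*} and R_d = ‖x^0 − x*‖. -/
open scoped RealInnerProductSpace

lemma quad_id {p : ℕ} (a b c : EuclideanSpace ℝ (Fin p)) (t : ℝ) :
    ‖((1-t)•a + t•b) - c‖^2 = (1-t)*‖a-c‖^2 + t*‖b-c‖^2 - t*(1-t)*‖a-b‖^2 := by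
  have h : ∀ v : EuclideanSpace ℝ (Fin p), ‖v‖^2 = ⟪v,v⟫ :=
    fun v => (real_inner_self_eq_norm_sq v).symm
  simp only [h, inner_sub_left, inner_sub_right, inner_add_left, inner_add_right,
    real_inner_smul_left, real_inner_smul_right]
  rw [real_inner_comm b a, real_inner_comm c a, real_inner_comm c b]
  ring

theorem stmt_12 {n p : ℕ}
    (f : EuclideanSpace ℝ (Fin n) → ℝ) (σf : ℝ) (hσf : 0 < σf)
    (hfc : Continuous f) (hfsc : StrongConvexOn Set.univ σf f)
    (U : Set (EuclideanSpace ℝ (Fin n))) (hUne : U.Nonempty) (hUcl : IsClosed U) (hUcv : Convex ℝ U)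
    (G : EuclideanSpace ℝ (Fin n) →L[ℝ] EuclideanSpace ℝ (Fin p)) (hG : G ≠ 0) (g : EuclideanSpace ℝ (Fin p))
    (K : Set (EuclideanSpace ℝ (Fin p))) (hKne : K.Nonempty) (hKcl : IsClosed K) (hKcv : Convex ℝ K)
    (hKcone : ∀ c : ℝ, 0 ≤ c → ∀ v ∈ K, c • v ∈ K)
    (Kstar : Set (EuclideanSpace ℝ (Fin p)))
    (hKstar : Kstar = {x : EuclideanSpace ℝ (Fin p) | ∀ v ∈ K, 0 ≤ ⟪x, v⟫})
    (Lag : EuclideanSpace ℝ (Fin n) → EuclideanSpace ℝ (Fin p) → ℝ)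
    (hLag : ∀ u x, Lag u x = f u + ⟪x, -(G u) - g⟫)
    (uu : EuclideanSpace ℝ (Fin p) → EuclideanSpace ℝ (Fin n))
    (huu : ∀ x : EuclideanSpace ℝ (Fin p), uu x ∈ U ∧ ∀ u ∈ U, Lag (uu x) x ≤ Lag u x)
    (d : EuclideanSpace ℝ (Fin p) → ℝ) (hd : ∀ x, d x = Lag (uu x) x)
    (ustar : EuclideanSpace ℝ (Fin n))
    (hustar : ustar ∈ U ∧ G ustar + g ∈ K ∧ ∀ u ∈ U, G u + g ∈ K → f ustar ≤ f u)
    (fstar : ℝ) (hfstar : fstar = f ustar)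
    (Xstar : Set (EuclideanSpace ℝ (Fin p))) (hXstar : Xstar = {x ∈ Kstar | d x = fstar})
    (hXne : Xstar.Nonempty)
    (x0 : EuclideanSpace ℝ (Fin p)) (hx0K : x0 ∈ Kstar)
    (xstar : EuclideanSpace ℝ (Fin p)) (hxstar : xstar ∈ Xstar)
    (hxstarmin : ∀ z ∈ Xstar, ‖x0 - xstar‖ ≤ ‖x0 - z‖)
    (Rd : ℝ) (hRd : Rd = ‖x0 - xstar‖)
    (δ : ℝ) (hδ : 0 < δ)
    (ddelta : EuclideanSpace ℝ (Fin p) → ℝ)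
    (hddelta : ∀ z, ddelta z = d z - δ / 2 * ‖z - x0‖ ^ 2)
    (xdelta : EuclideanSpace ℝ (Fin p)) (hxdK : xdelta ∈ Kstar)
    (hxdmax : ∀ z ∈ Kstar, ddelta z ≤ ddelta xdelta) :
    ‖xstar - xdelta‖ ≤ ‖xstar - x0‖ ∧ ‖x0 - xdelta‖ ≤ 2 * Rd := by
  have hxsK : xstar ∈ Kstar := by rw [hXstar] at hxstar; exact hxstar.1
  have hdxs : d xstar = fstar := by rw [hXstar] at hxstar; exact hxstar.2
  -- weak duality : d xdelta ≤ fstar = d xstar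
  have hweak : d xdelta ≤ d xstar := by
    rw [hdxs, hfstar, hd]
    have h1 : Lag (uu xdelta) xdelta ≤ Lag ustar xdelta := (huu xdelta).2 ustar hustar.1
    have h2 : Lag ustar xdelta ≤ f ustar := by
      rw [hLag]
      have : -(G ustar) - g = -(G ustar + g) := by abel
      rw [this, inner_neg_right]
      have := (hKstar ▸ hxdK) (G ustar + g) hustar.2.1
      linarith
    linarith
  -- concavity-type inequality along the segment from xdelta to xstar
  have key : ∀ t : ℝ, 0 < t → t < 1 →
      (1 - t) * ddelta xdelta + t * ddelta xstar + δ / 2 * (t * (1 - t)) * ‖xdelta - xstar‖^2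
        ≤ ddelta xdelta := by
    intro t ht0 ht1
    set z := (1 - t) • xdelta + t • xstar with hz
    have hzK : z ∈ Kstar := by
      rw [hKstar]; intro v hv
      have h1 := (hKstar ▸ hxdK) v hv
      have h2 := (hKstar ▸ hxsK) v hv
      rw [hz]
      simp only [inner_add_left, real_inner_smul_left]
      nlinarith
    -- d is concave along this segment
    have hdconc : (1 - t) * d xdelta + t * d xstar ≤ d z := by
      have hzval : d z = (1 - t) * Lag (uu z) xdelta + t * Lag (uu z) xstar := by
        rw [hd, hLag, hLag, hLag, hz]
        simp only [inner_add_left, real_inner_smul_left]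
        ring
      have h1 : Lag (uu xdelta) xdelta ≤ Lag (uu z) xdelta := (huu xdelta).2 _ (huu z).1
      have h2 : Lag (uu xstar) xstar ≤ Lag (uu z) xstar := (huu xstar).2 _ (huu z).1
      rw [hzval, hd, hd]
      nlinarith
    have hquad : ‖z - x0‖^2
        = (1 - t) * ‖xdelta - x0‖^2 + t * ‖xstar - x0‖^2 - t * (1 - t) * ‖xdelta - xstar‖^2 :=
      quad_id xdelta xstar x0 t
    have hmax := hxdmax z hzK
    rw [hddelta z, hquad] at hmax
    rw [hddelta xdelta] at hmax
    rw [hddelta xdelta, hddelta xstar]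
    linarith
  -- pass to the limit t → 0 : quadratic growth
  have hD0 : ddelta xstar ≤ ddelta xdelta := hxdmax xstar hxsK
  have hgrowth : δ / 2 * ‖xdelta - xstar‖^2 ≤ ddelta xdelta - ddelta xstar := by
    set c := δ / 2 * ‖xdelta - xstar‖^2 with hc
    have hcpos : 0 ≤ c := by positivity
    refine le_of_forall_pos_le_add fun ε hε => ?_
    have htpos : 0 < min (1/2) (ε / (2 * (c + 1))) := by positivity
    set t := min (1/2) (ε / (2 * (c + 1))) with htdef
    have ht1 : t < 1 := lt_of_le_of_lt (min_le_left _ _) (by norm_num)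
    have hk := key t htpos ht1
    have htc : t * c < ε := by
      have h1 : t ≤ ε / (2 * (c + 1)) := min_le_right _ _
      have : t * c ≤ ε / (2 * (c + 1)) * (c + 1) := by nlinarith
      have h2 : ε / (2 * (c + 1)) * (c + 1) = ε / 2 := by field_simp
      linarith
    have hkc : (1-t) * ddelta xdelta + t * ddelta xstar + t * (1-t) * c ≤ ddelta xdelta := by
      rw [hc]; linarith [hk]
    have h2 : (1-t) * c ≤ ddelta xdelta - ddelta xstar := by
      by_contra h
      push_neg at h
      nlinarith [mul_pos htpos (sub_pos.mpr h)]
    linarith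
  -- combine
  have hsq : ‖xstar - xdelta‖^2 + ‖xdelta - x0‖^2 ≤ ‖xstar - x0‖^2 := by
    rw [hddelta xdelta, hddelta xstar] at hgrowth
    have hrev : ‖xdelta - xstar‖ = ‖xstar - xdelta‖ := norm_sub_rev _ _
    rw [hrev] at hgrowth
    nlinarith
  have h1 : ‖xstar - xdelta‖ ≤ ‖xstar - x0‖ := by
    nlinarith [norm_nonneg (xstar - xdelta), norm_nonneg (xstar - x0), norm_nonneg (xdelta - x0)]
  refine ⟨h1, ?_⟩
  have hRd' : Rd = ‖xstar - x0‖ := by rw [hRd, norm_sub_rev]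
  calc ‖x0 - xdelta‖ ≤ ‖x0 - xstar‖ + ‖xstar - xdelta‖ := norm_sub_le_norm_sub_add_norm_sub _ _ _
    _ ≤ Rd + Rd := by
        rw [hRd]; rw [norm_sub_rev x0 xstar] at *
        exact add_le_add le_rfl (hRd' ▸ h1)
    _ = 2 * Rd := by ring
end

section
/- If the dual problem satisfies the error bound property with constants M > 0 and κ > 0, then the dual function satisfies the strong-convexity-like inequality f* − d(x) ≥ (L_d/(2κ²)) · ‖x − [x]_{X*}‖² for every x ∈ K* with f* − d(x) ≤ M. -/
open scoped RealInnerProductSpace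

/-- If `a ≤ t * C` for all small positive `t` and `C ≥ 0`, then `a ≤ 0`. -/
lemma aux_nonpos_stmt13 (a C : ℝ) (hC : 0 ≤ C) (h : ∀ t : ℝ, 0 < t → t ≤ 1 → a ≤ t * C) :
    a ≤ 0 := by
  by_contra hc
  push_neg at hc
  rcases hC.lt_or_eq with h0 | h0
  · have ht0 : 0 < min 1 (a / (2 * C)) := by
      apply lt_min one_pos
      positivity
    have h2 := h _ ht0 (min_le_left _ _)
    have h3 : min 1 (a / (2 * C)) * C ≤ (a / (2 * C)) * C :=
      mul_le_mul_of_nonneg_right (min_le_right _ _) hC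
    have h4 : (a / (2 * C)) * C = a / 2 := by field_simp
    linarith
  · have := h 1 one_pos le_rfl
    rw [← h0] at this
    simp at this
    linarith

set_option maxHeartbeats 1000000 in
theorem stmt_13 {n p : ℕ}
    (f : EuclideanSpace ℝ (Fin n) → ℝ) (σf : ℝ) (hσf : 0 < σf)
    (hfc : Continuous f) (hfsc : StrongConvexOn Set.univ σf f)
    (U : Set (EuclideanSpace ℝ (Fin n))) (hUne : U.Nonempty) (hUcl : IsClosed U) (hUcv : Convex ℝ U)
    (G : EuclideanSpace ℝ (Fin n) →L[ℝ] EuclideanSpace ℝ (Fin p)) (hG : G ≠ 0) (g : EuclideanSpace ℝ (Fin p))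
    (K : Set (EuclideanSpace ℝ (Fin p))) (hKne : K.Nonempty) (hKcl : IsClosed K) (hKcv : Convex ℝ K)
    (hKcone : ∀ c : ℝ, 0 ≤ c → ∀ v ∈ K, c • v ∈ K)
    (Kstar : Set (EuclideanSpace ℝ (Fin p)))
    (hKstar : Kstar = {x : EuclideanSpace ℝ (Fin p) | ∀ v ∈ K, 0 ≤ ⟪x, v⟫})
    (Lag : EuclideanSpace ℝ (Fin n) → EuclideanSpace ℝ (Fin p) → ℝ)
    (hLag : ∀ u x, Lag u x = f u + ⟪x, -(G u) - g⟫)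
    (uu : EuclideanSpace ℝ (Fin p) → EuclideanSpace ℝ (Fin n))
    (huu : ∀ x : EuclideanSpace ℝ (Fin p), uu x ∈ U ∧ ∀ u ∈ U, Lag (uu x) x ≤ Lag u x)
    (d : EuclideanSpace ℝ (Fin p) → ℝ) (hd : ∀ x, d x = Lag (uu x) x)
    (ustar : EuclideanSpace ℝ (Fin n))
    (hustar : ustar ∈ U ∧ G ustar + g ∈ K ∧ ∀ u ∈ U, G u + g ∈ K → f ustar ≤ f u)
    (fstar : ℝ) (hfstar : fstar = f ustar)
    (Xstar : Set (EuclideanSpace ℝ (Fin p))) (hXstar : Xstar = {x ∈ Kstar | d x = fstar})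
    (hXne : Xstar.Nonempty)
    (Ld : ℝ) (hLd : Ld = ‖G‖ ^ 2 / σf)
    (projKs : EuclideanSpace ℝ (Fin p) → EuclideanSpace ℝ (Fin p))
    (hprojKs : ∀ z : EuclideanSpace ℝ (Fin p), projKs z ∈ Kstar ∧ ∀ w ∈ Kstar, ‖z - projKs z‖ ≤ ‖z - w‖)
    (gmap : EuclideanSpace ℝ (Fin p) → EuclideanSpace ℝ (Fin p))
    (hgmap : ∀ z : EuclideanSpace ℝ (Fin p), gmap z = projKs (z + (1 / Ld) • (-(G (uu z)) - g)) - z)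
    (projX : EuclideanSpace ℝ (Fin p) → EuclideanSpace ℝ (Fin p))
    (hprojX : ∀ z : EuclideanSpace ℝ (Fin p), projX z ∈ Xstar ∧ ∀ w ∈ Xstar, ‖z - projX z‖ ≤ ‖z - w‖)
    (M κ : ℝ) (hM : 0 < M) (hκ : 0 < κ)
    (hEB : ∀ z ∈ Kstar, fstar - d z ≤ M → ‖z - projX z‖ ≤ κ * ‖gmap z‖) :
    ∀ z ∈ Kstar, fstar - d z ≤ M →
      fstar - d z ≥ Ld / (2 * κ ^ 2) * ‖z - projX z‖ ^ 2 := by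
  have hGpos : (0:ℝ) < ‖G‖ := norm_pos_iff.mpr hG
  have hLdpos : 0 < Ld := by rw [hLd]; positivity
  -- Kstar is convex
  have hKsConv : Convex ℝ Kstar := by
    rw [hKstar]
    intro x hx y hy a b ha hb hab
    intro v hv
    simp only [Set.mem_setOf_eq] at hx hy
    have h1 := hx v hv
    have h2 := hy v hv
    have : ⟪a • x + b • y, v⟫ = a * ⟪x, v⟫ + b * ⟪y, v⟫ := by
      rw [inner_add_left, real_inner_smul_left, real_inner_smul_left]
    rw [this]
    exact add_nonneg (mul_nonneg ha h1) (mul_nonneg hb h2)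
  -- quadratic growth of the (strongly convex) Lagrangian at its minimizer
  have QG : ∀ x v, v ∈ U → Lag (uu x) x + σf / 2 * ‖v - uu x‖ ^ 2 ≤ Lag v x := by
    intro x v hv
    have hu0 : uu x ∈ U := (huu x).1
    have hmin := (huu x).2
    have key : ∀ t : ℝ, 0 < t → t ≤ 1 →
        σf / 2 * ‖v - uu x‖ ^ 2 - (Lag v x - Lag (uu x) x) ≤ t * (σf / 2 * ‖v - uu x‖ ^ 2) := by
      intro t ht ht1
      have ha : (0:ℝ) ≤ 1 - t := by linarith
      have hsc := hfsc.2 (Set.mem_univ (uu x)) (Set.mem_univ v) ha ht.le (by ring)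
      have hmem : (1 - t) • uu x + t • v ∈ U := hUcv hu0 hv ha ht.le (by ring)
      have hL := hmin _ hmem
      have hcomb : -(G ((1 - t) • uu x + t • v)) - g
          = (1 - t) • (-(G (uu x)) - g) + t • (-(G v) - g) := by
        rw [map_add, map_smul, map_smul]
        module
      have hlin : ⟪x, -(G ((1 - t) • uu x + t • v)) - g⟫
          = (1 - t) * ⟪x, -(G (uu x)) - g⟫ + t * ⟪x, -(G v) - g⟫ := by
        rw [hcomb, inner_add_right, real_inner_smul_right, real_inner_smul_right]
      have e1 := hLag ((1 - t) • uu x + t • v) x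
      have e2 := hLag (uu x) x
      have e3 := hLag v x
      simp only [smul_eq_mul] at hsc
      have hnn : ‖uu x - v‖ = ‖v - uu x‖ := norm_sub_rev _ _
      rw [hnn] at hsc
      -- assemble: t * ((1-t) * (σf/2 * c)) ≤ t * (Lag v x - Lag (uu x) x)
      have hstep : t * ((1 - t) * (σf / 2 * ‖v - uu x‖ ^ 2))
          ≤ t * (Lag v x - Lag (uu x) x) := by
        rw [e1, e2, hlin] at hL
        rw [e2, e3]
        nlinarith [hsc, hL]
      have := le_of_mul_le_mul_left hstep ht
      nlinarith [this]
    have := aux_nonpos_stmt13 _ _ (by positivity) key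
    linarith
  intro z hz hMz
  set Dz : EuclideanSpace ℝ (Fin p) := -(G (uu z)) - g with hDz
  set z' : EuclideanSpace ℝ (Fin p) := z + (1 / Ld) • Dz with hz'
  set yp : EuclideanSpace ℝ (Fin p) := projKs z' with hyp
  have hypKs : yp ∈ Kstar := (hprojKs z').1
  have hgz : gmap z = yp - z := by rw [hgmap z]
  -- projection variational inequality at w = z
  have hVI : ⟪z' - yp, z - yp⟫ ≤ 0 := by
    have key : ∀ t : ℝ, 0 < t → t ≤ 1 → 2 * ⟪z' - yp, z - yp⟫ ≤ t * ‖z - yp‖ ^ 2 := by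
      intro t ht ht1
      have ha : (0:ℝ) ≤ 1 - t := by linarith
      have hmem : (1 - t) • yp + t • z ∈ Kstar := hKsConv hypKs hz ha ht.le (by ring)
      have heq : (1 - t) • yp + t • z = yp + t • (z - yp) := by module
      rw [heq] at hmem
      have hle := (hprojKs z').2 _ hmem
      have h2 : ‖z' - yp‖ ^ 2 ≤ ‖z' - (yp + t • (z - yp))‖ ^ 2 :=
        pow_le_pow_left₀ (norm_nonneg _) hle 2
      have h3 : z' - (yp + t • (z - yp)) = (z' - yp) - t • (z - yp) := by module
      have h4 : ‖(z' - yp) - t • (z - yp)‖ ^ 2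
          = ‖z' - yp‖ ^ 2 - 2 * (t * ⟪z' - yp, z - yp⟫) + t ^ 2 * ‖z - yp‖ ^ 2 := by
        rw [norm_sub_sq_real (z' - yp) (t • (z - yp)), real_inner_smul_right, norm_smul,
          Real.norm_eq_abs, abs_of_pos ht]
        ring
      rw [h3, h4] at h2
      have hstep : t * (2 * ⟪z' - yp, z - yp⟫) ≤ t * (t * ‖z - yp‖ ^ 2) := by nlinarith [h2]
      have := le_of_mul_le_mul_left hstep ht
      linarith
    have h5 := aux_nonpos_stmt13 (2 * ⟪z' - yp, z - yp⟫) (‖z - yp‖ ^ 2) (by positivity) key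
    linarith
  -- hence ⟪Dz, yp - z⟫ ≥ Ld * ‖yp - z‖^2
  have hD1 : Ld * ‖yp - z‖ ^ 2 ≤ ⟪Dz, yp - z⟫ := by
    have hsplit : z' - yp = -(yp - z) + (1 / Ld) • Dz := by rw [hz']; module
    have hinner : ⟪z' - yp, z - yp⟫
        = ‖yp - z‖ ^ 2 - (1 / Ld) * ⟪Dz, yp - z⟫ := by
      rw [hsplit, inner_add_left, real_inner_smul_left]
      have h1 : (z : EuclideanSpace ℝ (Fin p)) - yp = -(yp - z) := by module
      rw [h1, inner_neg_neg, inner_neg_right, real_inner_self_eq_norm_sq]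
      ring
    rw [hinner] at hVI
    have h2 : Ld * ‖yp - z‖ ^ 2 ≤ Ld * ((1 / Ld) * ⟪Dz, yp - z⟫) :=
      mul_le_mul_of_nonneg_left (by linarith) hLdpos.le
    have h3 : Ld * ((1 / Ld) * ⟪Dz, yp - z⟫) = ⟪Dz, yp - z⟫ := by
      field_simp
    linarith
  -- lower bound: d yp ≥ d z + ⟪yp - z, ∇d(yp)⟫ + σf/2 ‖uu yp - uu z‖^2
  have keyB : d z + ⟪yp - z, -(G (uu yp)) - g⟫ + σf / 2 * ‖uu yp - uu z‖ ^ 2 ≤ d yp := by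
    have hq := QG z (uu yp) (huu yp).1
    have e1 := hLag (uu yp) z
    have e2 := hLag (uu yp) yp
    have e3 := hd z
    have e4 := hd yp
    have hsub : ⟪yp, -(G (uu yp)) - g⟫ - ⟪z, -(G (uu yp)) - g⟫
        = ⟪yp - z, -(G (uu yp)) - g⟫ := by rw [inner_sub_left]
    rw [e1] at hq
    rw [e4, e2]
    linarith [hsub, hq, e3]
  -- cross term bound
  have hcross : -(σf / 2 * ‖uu yp - uu z‖ ^ 2) - ‖G‖ ^ 2 / (2 * σf) * ‖yp - z‖ ^ 2
      ≤ ⟪yp - z, (-(G (uu yp)) - g) - Dz⟫ := by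
    have hdiff : (-(G (uu yp)) - g) - Dz = G (uu z - uu yp) := by
      rw [hDz, map_sub]; module
    rw [hdiff]
    have habs := abs_real_inner_le_norm (yp - z) (G (uu z - uu yp))
    have hop : ‖G (uu z - uu yp)‖ ≤ ‖G‖ * ‖uu z - uu yp‖ := G.le_opNorm _
    have hnrev : ‖uu z - uu yp‖ = ‖uu yp - uu z‖ := norm_sub_rev _ _
    rw [hnrev] at hop
    have h1 : -(‖yp - z‖ * (‖G‖ * ‖uu yp - uu z‖)) ≤ ⟪yp - z, G (uu z - uu yp)⟫ := by
      have := neg_abs_le ⟪yp - z, G (uu z - uu yp)⟫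
      have h2 : ‖yp - z‖ * ‖G (uu z - uu yp)‖ ≤ ‖yp - z‖ * (‖G‖ * ‖uu yp - uu z‖) :=
        mul_le_mul_of_nonneg_left hop (norm_nonneg _)
      linarith [habs.trans h2]
    -- AM-GM: ‖yp-z‖ * (‖G‖ * ‖Δu‖) ≤ σf/2 ‖Δu‖^2 + ‖G‖^2/(2σf) ‖yp-z‖^2
    have hamgm : ‖yp - z‖ * (‖G‖ * ‖uu yp - uu z‖)
        ≤ σf / 2 * ‖uu yp - uu z‖ ^ 2 + ‖G‖ ^ 2 / (2 * σf) * ‖yp - z‖ ^ 2 := by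
      have hs : (0:ℝ) < 2 * σf := by positivity
      have key : ‖yp - z‖ * (‖G‖ * ‖uu yp - uu z‖)
          ≤ (σf ^ 2 * ‖uu yp - uu z‖ ^ 2 + ‖G‖ ^ 2 * ‖yp - z‖ ^ 2) / (2 * σf) := by
        rw [le_div_iff₀ hs]
        nlinarith [sq_nonneg (σf * ‖uu yp - uu z‖ - ‖G‖ * ‖yp - z‖)]
      have e : (σf ^ 2 * ‖uu yp - uu z‖ ^ 2 + ‖G‖ ^ 2 * ‖yp - z‖ ^ 2) / (2 * σf)
          = σf / 2 * ‖uu yp - uu z‖ ^ 2 + ‖G‖ ^ 2 / (2 * σf) * ‖yp - z‖ ^ 2 := by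
        field_simp
      rw [e] at key
      exact key
    linarith
  -- weak duality at yp
  have hwd : d yp ≤ fstar := by
    have h1 := (huu yp).2 ustar hustar.1
    have h2 := hLag ustar yp
    have h3 : ⟪yp, -(G ustar) - g⟫ = -⟪yp, G ustar + g⟫ := by
      have : -(G ustar) - g = -(G ustar + g) := by module
      rw [this, inner_neg_right]
    have h4 : 0 ≤ ⟪yp, G ustar + g⟫ := by
      rw [hKstar] at hypKs
      exact hypKs _ hustar.2.1
    rw [hd yp]
    rw [h2, h3] at h1
    rw [hfstar]
    linarith
  -- descent: fstar - d z ≥ Ld/2 ‖yp - z‖^2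
  have hdescent : Ld / 2 * ‖yp - z‖ ^ 2 ≤ fstar - d z := by
    have hsplit : ⟪yp - z, -(G (uu yp)) - g⟫
        = ⟪yp - z, Dz⟫ + ⟪yp - z, (-(G (uu yp)) - g) - Dz⟫ := by
      rw [← inner_add_right]; congr 1; module
    have hsym : ⟪yp - z, Dz⟫ = ⟪Dz, yp - z⟫ := real_inner_comm _ _
    have hLd2 : ‖G‖ ^ 2 / (2 * σf) = Ld / 2 := by rw [hLd]; ring
    rw [hsplit, hsym] at keyB
    rw [hLd2] at hcross
    linarith [keyB, hD1, hcross, hwd]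
  -- apply error bound
  have hEBz := hEB z hz hMz
  rw [hgz] at hEBz
  have hsq : ‖z - projX z‖ ^ 2 ≤ κ ^ 2 * ‖yp - z‖ ^ 2 := by
    have := pow_le_pow_left₀ (norm_nonneg _) hEBz 2
    calc ‖z - projX z‖ ^ 2 ≤ (κ * ‖yp - z‖) ^ 2 := this
      _ = κ ^ 2 * ‖yp - z‖ ^ 2 := by ring
  have hcoef : (0:ℝ) ≤ Ld / (2 * κ ^ 2) := by positivity
  have h1 : Ld / (2 * κ ^ 2) * ‖z - projX z‖ ^ 2
      ≤ Ld / (2 * κ ^ 2) * (κ ^ 2 * ‖yp - z‖ ^ 2) := mul_le_mul_of_nonneg_left hsq hcoef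
  have h2 : Ld / (2 * κ ^ 2) * (κ ^ 2 * ‖yp - z‖ ^ 2) = Ld / 2 * ‖yp - z‖ ^ 2 := by
    field_simp
  linarith [h1, h2.le, hdescent]
end

section
/- Under the error bound property with constants M = f* − d(x^0) and κ > 0, Algorithm (DG) with constant step size α_k = 1/L_d converges globally linearly in the dual: for all k ≥ 0, ‖x^k − [x^k]_{X*}‖ ≤ (κ/√(1+κ²))^k · R_d, and for all k ≥ 1, f* − d(x^k) ≤ (L_d R_d²/2) · (κ²/(1+κ²))^{k−1}. -/
open scoped RealInnerProductSpace

/-- If `a ≤ t * c` for all small positive `t`, then `a ≤ 0`. -/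
private lemma aux_le_zero (a c : ℝ) (hc : 0 ≤ c)
    (h : ∀ t : ℝ, 0 < t → t ≤ 1 → a ≤ t * c) : a ≤ 0 := by
  by_contra hpos
  push_neg at hpos
  rcases eq_or_lt_of_le hc with hc0 | hc0
  · have := h 1 one_pos le_rfl; rw [← hc0] at this; linarith
  · have ht : 0 < a / (2 * c) := by positivity
    have := h (min 1 (a / (2 * c))) (lt_min one_pos ht) (min_le_left _ _)
    have h2 : min 1 (a / (2 * c)) * c ≤ (a / (2 * c)) * c :=
      mul_le_mul_of_nonneg_right (min_le_right _ _) hc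
    have h3 : (a / (2 * c)) * c = a / 2 := by field_simp
    linarith

/-- Variational inequality for the metric projection onto a convex set. -/
private lemma aux_vi {E : Type*} [NormedAddCommGroup E] [InnerProductSpace ℝ E]
    (S : Set E) (hS : Convex ℝ S) (z q : E) (hq : q ∈ S)
    (hmin : ∀ w ∈ S, ‖z - q‖ ≤ ‖z - w‖) :
    ∀ w ∈ S, ⟪z - q, w - q⟫ ≤ 0 := by
  intro w hw
  have key : ∀ t : ℝ, 0 < t → t ≤ 1 → 2 * ⟪z - q, w - q⟫ ≤ t * ‖w - q‖ ^ 2 := by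
    intro t ht ht1
    have hmem : (1 - t) • q + t • w ∈ S := hS hq hw (by linarith) ht.le (by ring)
    have h1 : ‖z - q‖ ≤ ‖z - ((1 - t) • q + t • w)‖ := hmin _ hmem
    have h2 : z - ((1 - t) • q + t • w) = (z - q) - t • (w - q) := by
      module
    have h3 : ‖z - q‖ ^ 2 ≤ ‖z - q‖ ^ 2 - 2 * (t * ⟪z - q, w - q⟫) + t ^ 2 * ‖w - q‖ ^ 2 := by
      calc ‖z - q‖ ^ 2 ≤ ‖(z - q) - t • (w - q)‖ ^ 2 := by
            rw [← h2]; exact pow_le_pow_left₀ (norm_nonneg _) h1 2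
        _ = ‖z - q‖ ^ 2 - 2 * (t * ⟪z - q, w - q⟫) + t ^ 2 * ‖w - q‖ ^ 2 := by
            rw [norm_sub_sq_real, real_inner_smul_right, norm_smul, Real.norm_eq_abs,
              abs_of_pos ht, mul_pow]
    nlinarith [ht]
  have := aux_le_zero (2 * ⟪z - q, w - q⟫) (‖w - q‖ ^ 2) (by positivity) key
  linarith

set_option maxHeartbeats 1000000 in
theorem stmt_14 {n p : ℕ}
    (f : EuclideanSpace ℝ (Fin n) → ℝ) (σf : ℝ) (hσf : 0 < σf)
    (hfc : Continuous f) (hfsc : StrongConvexOn Set.univ σf f)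
    (U : Set (EuclideanSpace ℝ (Fin n))) (hUne : U.Nonempty) (hUcl : IsClosed U) (hUcv : Convex ℝ U)
    (G : EuclideanSpace ℝ (Fin n) →L[ℝ] EuclideanSpace ℝ (Fin p)) (hG : G ≠ 0) (g : EuclideanSpace ℝ (Fin p))
    (K : Set (EuclideanSpace ℝ (Fin p))) (hKne : K.Nonempty) (hKcl : IsClosed K) (hKcv : Convex ℝ K)
    (hKcone : ∀ c : ℝ, 0 ≤ c → ∀ v ∈ K, c • v ∈ K)
    (Kstar : Set (EuclideanSpace ℝ (Fin p)))
    (hKstar : Kstar = {x : EuclideanSpace ℝ (Fin p) | ∀ v ∈ K, 0 ≤ ⟪x, v⟫})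
    (Lag : EuclideanSpace ℝ (Fin n) → EuclideanSpace ℝ (Fin p) → ℝ)
    (hLag : ∀ u x, Lag u x = f u + ⟪x, -(G u) - g⟫)
    (uu : EuclideanSpace ℝ (Fin p) → EuclideanSpace ℝ (Fin n))
    (huu : ∀ x : EuclideanSpace ℝ (Fin p), uu x ∈ U ∧ ∀ u ∈ U, Lag (uu x) x ≤ Lag u x)
    (d : EuclideanSpace ℝ (Fin p) → ℝ) (hd : ∀ x, d x = Lag (uu x) x)
    (ustar : EuclideanSpace ℝ (Fin n))
    (hustar : ustar ∈ U ∧ G ustar + g ∈ K ∧ ∀ u ∈ U, G u + g ∈ K → f ustar ≤ f u)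
    (fstar : ℝ) (hfstar : fstar = f ustar)
    (Xstar : Set (EuclideanSpace ℝ (Fin p))) (hXstar : Xstar = {x ∈ Kstar | d x = fstar})
    (hXne : Xstar.Nonempty)
    (Ld : ℝ) (hLd : Ld = ‖G‖ ^ 2 / σf)
    (projKs : EuclideanSpace ℝ (Fin p) → EuclideanSpace ℝ (Fin p))
    (hprojKs : ∀ z : EuclideanSpace ℝ (Fin p), projKs z ∈ Kstar ∧ ∀ w ∈ Kstar, ‖z - projKs z‖ ≤ ‖z - w‖)
    (gmap : EuclideanSpace ℝ (Fin p) → EuclideanSpace ℝ (Fin p))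
    (hgmap : ∀ z : EuclideanSpace ℝ (Fin p), gmap z = projKs (z + (1 / Ld) • (-(G (uu z)) - g)) - z)
    (projX : EuclideanSpace ℝ (Fin p) → EuclideanSpace ℝ (Fin p))
    (hprojX : ∀ z : EuclideanSpace ℝ (Fin p), projX z ∈ Xstar ∧ ∀ w ∈ Xstar, ‖z - projX z‖ ≤ ‖z - w‖)
    (x : ℕ → EuclideanSpace ℝ (Fin p)) (hx0K : x 0 ∈ Kstar)
    (hxrec : ∀ k, x (k + 1) = projKs (x k + (1 / Ld) • (-(G (uu (x k))) - g)))
    (κ : ℝ) (hκ : 0 < κ) (hMpos : 0 < fstar - d (x 0))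
    (hEB : ∀ z ∈ Kstar, fstar - d z ≤ fstar - d (x 0) →
      ‖z - projX z‖ ≤ κ * ‖gmap z‖)
    (Rd : ℝ) (hRd : Rd = ‖x 0 - projX (x 0)‖) :
    (∀ k : ℕ, ‖x k - projX (x k)‖ ≤ (κ / Real.sqrt (1 + κ ^ 2)) ^ k * Rd) ∧
    (∀ k : ℕ, 1 ≤ k →
      fstar - d (x k) ≤ Ld * Rd ^ 2 / 2 * (κ ^ 2 / (1 + κ ^ 2)) ^ (k - 1)) := by
  have hGn : 0 < ‖G‖ := norm_pos_iff.mpr hG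
  have hLdpos : 0 < Ld := by rw [hLd]; positivity
  have hRdnn : 0 ≤ Rd := by rw [hRd]; exact norm_nonneg _
  -- Kstar is convex
  have hKsConv : Convex ℝ Kstar := by
    rw [hKstar]
    intro a ha b hb s t hs ht hst
    simp only [Set.mem_setOf_eq] at *
    intro v hv
    rw [inner_add_left, real_inner_smul_left, real_inner_smul_left]
    have := ha v hv; have := hb v hv
    positivity
  -- variational inequality for projKs
  have hVI : ∀ z w, w ∈ Kstar → ⟪z - projKs z, w - projKs z⟫ ≤ 0 := fun z =>
    aux_vi Kstar hKsConv z (projKs z) (hprojKs z).1 (hprojKs z).2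
  -- affine structure of the Lagrangian in u
  have hLagaff : ∀ (zz : EuclideanSpace ℝ (Fin p)) (u v : EuclideanSpace ℝ (Fin n)) (a b : ℝ),
      a + b = 1 → Lag (a • u + b • v) zz
        = f (a • u + b • v) + a * ⟪zz, -(G u) - g⟫ + b * ⟪zz, -(G v) - g⟫ := by
    intro zz u v a b hab
    obtain rfl : b = 1 - a := by linarith
    rw [hLag]
    have hvec : -(G (a • u + (1 - a) • v)) - g
        = a • (-(G u) - g) + (1 - a) • (-(G v) - g) := by
      rw [map_add, map_smul, map_smul]; module
    rw [hvec, inner_add_right, real_inner_smul_right, real_inner_smul_right]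
    ring
  -- quadratic growth at the minimizer
  have hQG : ∀ z u, u ∈ U → σf / 2 * ‖u - uu z‖ ^ 2 ≤ Lag u z - Lag (uu z) z := by
    intro z u hu
    have hQnn : (0:ℝ) ≤ σf / 2 * ‖u - uu z‖ ^ 2 := by positivity
    have key : ∀ t : ℝ, 0 < t → t ≤ 1 →
        σf / 2 * ‖u - uu z‖ ^ 2 - (Lag u z - Lag (uu z) z) ≤ t * (σf / 2 * ‖u - uu z‖ ^ 2) := by
      intro t ht ht1
      have hmem : t • u + (1 - t) • uu z ∈ U :=
        hUcv hu (huu z).1 ht.le (by linarith) (by ring)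
      have hc := hfsc.2 (Set.mem_univ u) (Set.mem_univ (uu z)) ht.le
        (by linarith : (0:ℝ) ≤ 1 - t) (by ring)
      simp only [smul_eq_mul] at hc
      have hla := hLagaff z u (uu z) t (1 - t) (by ring)
      have hmin := (huu z).2 _ hmem
      rw [hla] at hmin
      rw [hLag u z, hLag (uu z) z]
      rw [hLag (uu z) z] at hmin
      set Q := σf / 2 * ‖u - uu z‖ ^ 2 with hQdef
      set A := ⟪z, -(G u) - g⟫ with hA
      set B := ⟪z, -(G (uu z)) - g⟫ with hB
      -- hmin : f (uu z) + B ≤ f (t•u + (1-t)•uu z) + t*A + (1-t)*B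
      -- hc : f (t•u+(1-t)•uu z) ≤ t*f u + (1-t)*f (uu z) - t*(1-t)*Q
      by_contra hcon
      push_neg at hcon
      nlinarith [mul_pos ht (by linarith : 0 < Q - (f u + A - (f (uu z) + B)) - t * Q)]
    have := aux_le_zero _ _ hQnn key
    linarith
  -- translation of Lag in the dual variable
  have hLagshift : ∀ (u : EuclideanSpace ℝ (Fin n)) (z w : EuclideanSpace ℝ (Fin p)),
      Lag u w = Lag u z + ⟪w - z, -(G u) - g⟫ := by
    intro u z w
    rw [hLag, hLag, inner_sub_left]; ring
  -- supergradient inequality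
  have hsuper : ∀ z w, d w ≤ d z + ⟪-(G (uu z)) - g, w - z⟫ := by
    intro z w
    have h1 : d w ≤ Lag (uu z) w := by rw [hd]; exact (huu w).2 _ (huu z).1
    rw [hLagshift (uu z) z w, real_inner_comm] at h1
    rw [hd z]
    linarith
  -- descent (smoothness) inequality
  have hdescent : ∀ z w, d z + ⟪-(G (uu z)) - g, w - z⟫ - Ld / 2 * ‖w - z‖ ^ 2 ≤ d w := by
    intro z w
    have hq := hQG z (uu w) (huu w).1
    have hshift : Lag (uu w) w = Lag (uu w) z + ⟪w - z, -(G (uu w)) - g⟫ := hLagshift _ _ _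
    have hsplit : ⟪w - z, -(G (uu w)) - g⟫
        = ⟪w - z, -(G (uu z)) - g⟫ - ⟪w - z, G (uu w) - G (uu z)⟫ := by
      rw [← inner_sub_right]; congr 1; abel
    have hbound : ⟪w - z, G (uu w) - G (uu z)⟫ ≤ ‖w - z‖ * (‖G‖ * ‖uu w - uu z‖) := by
      calc ⟪w - z, G (uu w) - G (uu z)⟫ ≤ ‖w - z‖ * ‖G (uu w) - G (uu z)‖ :=
            real_inner_le_norm _ _
        _ ≤ ‖w - z‖ * (‖G‖ * ‖uu w - uu z‖) := by
            rw [← map_sub]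
            exact mul_le_mul_of_nonneg_left (G.le_opNorm _) (norm_nonneg _)
    have hquad : 0 ≤ σf / 2 * ‖uu w - uu z‖ ^ 2
        - ‖w - z‖ * (‖G‖ * ‖uu w - uu z‖) + Ld / 2 * ‖w - z‖ ^ 2 := by
      have he : Ld / 2 * ‖w - z‖ ^ 2 = ‖G‖ ^ 2 * ‖w - z‖ ^ 2 / (2 * σf) := by
        rw [hLd, div_div, div_mul_eq_mul_div, mul_comm σf 2]
      have h0 : (0:ℝ) ≤ (σf * ‖uu w - uu z‖ - ‖G‖ * ‖w - z‖) ^ 2 / (2 * σf) := by positivity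
      have heq : (σf * ‖uu w - uu z‖ - ‖G‖ * ‖w - z‖) ^ 2 / (2 * σf)
          = σf / 2 * ‖uu w - uu z‖ ^ 2 - ‖w - z‖ * (‖G‖ * ‖uu w - uu z‖)
            + ‖G‖ ^ 2 * ‖w - z‖ ^ 2 / (2 * σf) := by
        field_simp [hσf.ne']; ring
      rw [he]; linarith [heq ▸ h0]
    have hi : ⟪w - z, -(G (uu z)) - g⟫ = ⟪-(G (uu z)) - g, w - z⟫ := real_inner_comm _ _
    rw [hd w, hd z]
    rw [hshift, hsplit, hi] at *
    linarith
  -- weak duality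
  have hweak : ∀ z ∈ Kstar, d z ≤ fstar := by
    intro z hz
    have h1 : d z ≤ Lag ustar z := by rw [hd]; exact (huu z).2 ustar hustar.1
    rw [hLag] at h1
    have h2 : -(G ustar) - g = -(G ustar + g) := by abel
    rw [h2, inner_neg_right] at h1
    rw [hKstar] at hz
    have h3 := hz _ hustar.2.1
    rw [hfstar]; linarith
  -- ascent property of one projected gradient step
  have hascent : ∀ z ∈ Kstar,
      d z + Ld / 2 * ‖projKs (z + (1 / Ld) • (-(G (uu z)) - g)) - z‖ ^ 2
        ≤ d (projKs (z + (1 / Ld) • (-(G (uu z)) - g))) := by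
    intro z hz
    set y := z + (1 / Ld) • (-(G (uu z)) - g) with hy
    set q := projKs y with hqdef
    have hvi := hVI y z hz
    have hsplit : y - q = (z - q) + (1 / Ld) • (-(G (uu z)) - g) := by rw [hy]; abel
    rw [hsplit, inner_add_left, real_inner_smul_left, real_inner_self_eq_norm_sq] at hvi
    have hsw : ⟪-(G (uu z)) - g, z - q⟫ = -⟪-(G (uu z)) - g, q - z⟫ := by
      rw [← inner_neg_right]; congr 1; abel
    rw [hsw] at hvi
    have hip : Ld * ‖z - q‖ ^ 2 ≤ ⟪-(G (uu z)) - g, q - z⟫ := by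
      have h' : ‖z - q‖ ^ 2 ≤ (1 / Ld) * ⟪-(G (uu z)) - g, q - z⟫ := by linarith
      calc Ld * ‖z - q‖ ^ 2 ≤ Ld * ((1 / Ld) * ⟪-(G (uu z)) - g, q - z⟫) :=
            mul_le_mul_of_nonneg_left h' hLdpos.le
        _ = ⟪-(G (uu z)) - g, q - z⟫ := by field_simp
    have hdes := hdescent z q
    have hnorm : ‖z - q‖ = ‖q - z‖ := norm_sub_rev _ _
    rw [hnorm] at hip
    linarith
  -- the key contraction inequality
  have hstarkey : ∀ z ∈ Kstar,
      ‖projKs (z + (1 / Ld) • (-(G (uu z)) - g)) - projX z‖ ^ 2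
        + (2 / Ld) * (fstar - d (projKs (z + (1 / Ld) • (-(G (uu z)) - g))))
        ≤ ‖z - projX z‖ ^ 2 := by
    intro z hz
    set y := z + (1 / Ld) • (-(G (uu z)) - g) with hy
    set q := projKs y with hqdef
    set xb := projX z with hxbdef
    have hxbX : xb ∈ Xstar := (hprojX z).1
    have hxbKs : xb ∈ Kstar := by rw [hXstar] at hxbX; exact hxbX.1
    have hdxb : d xb = fstar := by rw [hXstar] at hxbX; exact hxbX.2
    have hvi := hVI y xb hxbKs
    rw [← hqdef] at hvi
    have hsplit : y - q = (z - q) + (1 / Ld) • (-(G (uu z)) - g) := by rw [hy]; abel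
    rw [hsplit, inner_add_left, real_inner_smul_left] at hvi
    have hBsplit : ⟪-(G (uu z)) - g, xb - q⟫
        = ⟪-(G (uu z)) - g, xb - z⟫ - ⟪-(G (uu z)) - g, q - z⟫ := by
      rw [← inner_sub_right]; congr 1; abel
    have hsup := hsuper z xb
    have hdes := hdescent z q
    have hid : ‖z - xb‖ ^ 2 = ‖q - xb‖ ^ 2 - 2 * ⟪q - xb, q - z⟫ + ‖q - z‖ ^ 2 := by
      have h0 : z - xb = (q - xb) - (q - z) := by abel
      rw [h0, norm_sub_sq_real]
    have hAeq : ⟪q - xb, q - z⟫ = ⟪z - q, xb - q⟫ := by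
      rw [show q - xb = -(xb - q) by abel, show q - z = -(z - q) by abel,
        inner_neg_neg, real_inner_comm]
    rw [hAeq] at hid
    have hBlow : fstar - d q - Ld / 2 * ‖q - z‖ ^ 2 ≤ ⟪-(G (uu z)) - g, xb - q⟫ := by
      rw [hBsplit]; linarith
    have hmul := mul_le_mul_of_nonneg_left hBlow (by positivity : (0:ℝ) ≤ 2 / Ld)
    have e2 : (2 / Ld) * (fstar - d q - Ld / 2 * ‖q - z‖ ^ 2)
        = (2 / Ld) * (fstar - d q) - ‖q - z‖ ^ 2 := by
      field_simp
    rw [e2] at hmul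
    -- hvi : ⟪z-q, xb-q⟫ + (1/Ld) * ⟪sg, xb-q⟫ ≤ 0
    have h2vi := mul_le_mul_of_nonneg_left hvi (by norm_num : (0:ℝ) ≤ 2)
    rw [mul_zero] at h2vi
    have hX : (2:ℝ) / Ld * ⟪-(G (uu z)) - g, xb - q⟫
        = 2 * (1 / Ld * ⟪-(G (uu z)) - g, xb - q⟫) := by ring
    linarith
  -- iterates stay in Kstar
  have hxK : ∀ k, x k ∈ Kstar := by
    intro k
    cases k with
    | zero => exact hx0K
    | succ m => rw [hxrec]; exact (hprojKs _).1
  -- monotonicity of d along the iterates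
  have hmono : ∀ k, d (x k) + Ld / 2 * ‖x (k + 1) - x k‖ ^ 2 ≤ d (x (k + 1)) := by
    intro k
    have := hascent (x k) (hxK k)
    rw [← hxrec k] at this
    exact this
  have hd0 : ∀ k, d (x 0) ≤ d (x k) := by
    intro k
    induction k with
    | zero => exact le_rfl
    | succ m ih =>
      have := hmono m
      nlinarith [sq_nonneg ‖x (m + 1) - x m‖, hLdpos]
  -- gap bound from ascent + weak duality
  have hgapAll : ∀ k, Ld / 2 * ‖gmap (x k)‖ ^ 2 ≤ fstar - d (x k) := by
    intro k
    have h1 := hmono k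
    have h2 := hweak (x (k + 1)) (hxK (k + 1))
    have h3 : gmap (x k) = x (k + 1) - x k := by rw [hgmap, ← hxrec]
    rw [h3]
    linarith
  -- squared-distance recursion, part 1
  have hrec2 : ∀ k, ‖x (k + 1) - projX (x (k + 1))‖ ^ 2
      + (2 / Ld) * (fstar - d (x (k + 1))) ≤ ‖x k - projX (x k)‖ ^ 2 := by
    intro k
    have hsk := hstarkey (x k) (hxK k)
    rw [← hxrec k] at hsk
    have hle : ‖x (k + 1) - projX (x (k + 1))‖ ≤ ‖x (k + 1) - projX (x k)‖ :=
      (hprojX (x (k + 1))).2 _ (hprojX (x k)).1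
    have := pow_le_pow_left₀ (norm_nonneg _) hle 2
    linarith
  -- lower bound on the gap via the error bound
  have hlow : ∀ k, (1 / κ ^ 2) * ‖x (k + 1) - projX (x (k + 1))‖ ^ 2
      ≤ (2 / Ld) * (fstar - d (x (k + 1))) := by
    intro k
    have hEBk : ‖x (k + 1) - projX (x (k + 1))‖ ≤ κ * ‖gmap (x (k + 1))‖ :=
      hEB _ (hxK (k + 1)) (by have := hd0 (k + 1); linarith)
    have hr2 : ‖x (k + 1) - projX (x (k + 1))‖ ^ 2 ≤ κ ^ 2 * ‖gmap (x (k + 1))‖ ^ 2 := by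
      have := pow_le_pow_left₀ (norm_nonneg _) hEBk 2
      rw [mul_pow] at this
      exact this
    have hgap := hgapAll (k + 1)
    have h1 : (1 / κ ^ 2) * ‖x (k + 1) - projX (x (k + 1))‖ ^ 2 ≤ ‖gmap (x (k + 1))‖ ^ 2 := by
      have := mul_le_mul_of_nonneg_left hr2 (by positivity : (0:ℝ) ≤ 1 / κ ^ 2)
      calc (1 / κ ^ 2) * ‖x (k + 1) - projX (x (k + 1))‖ ^ 2
          ≤ (1 / κ ^ 2) * (κ ^ 2 * ‖gmap (x (k + 1))‖ ^ 2) := this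
        _ = ‖gmap (x (k + 1))‖ ^ 2 := by field_simp
    have h2 : ‖gmap (x (k + 1))‖ ^ 2 ≤ (2 / Ld) * (fstar - d (x (k + 1))) := by
      have := mul_le_mul_of_nonneg_left hgap (by positivity : (0:ℝ) ≤ 2 / Ld)
      calc ‖gmap (x (k + 1))‖ ^ 2 = (2 / Ld) * (Ld / 2 * ‖gmap (x (k + 1))‖ ^ 2) := by
            field_simp
        _ ≤ (2 / Ld) * (fstar - d (x (k + 1))) := this
    linarith
  -- combined recursion
  have hrec : ∀ k, ‖x (k + 1) - projX (x (k + 1))‖ ^ 2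
      ≤ κ ^ 2 / (1 + κ ^ 2) * ‖x k - projX (x k)‖ ^ 2 := by
    intro k
    have h1 := hrec2 k
    have h2 := hlow k
    have hsum : ‖x (k + 1) - projX (x (k + 1))‖ ^ 2
        + (1 / κ ^ 2) * ‖x (k + 1) - projX (x (k + 1))‖ ^ 2 ≤ ‖x k - projX (x k)‖ ^ 2 := by
      linarith
    rw [div_mul_eq_mul_div, le_div_iff₀ (by positivity : (0:ℝ) < 1 + κ ^ 2)]
    have := mul_le_mul_of_nonneg_left hsum (by positivity : (0:ℝ) ≤ κ ^ 2)
    have eκ : κ ^ 2 * ((1 / κ ^ 2) * ‖x (k + 1) - projX (x (k + 1))‖ ^ 2)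
        = ‖x (k + 1) - projX (x (k + 1))‖ ^ 2 := by
      field_simp
    nlinarith [this, eκ]
  -- rate constant
  have hsq : 0 < Real.sqrt (1 + κ ^ 2) := Real.sqrt_pos.mpr (by positivity)
  have hρnn : 0 ≤ κ / Real.sqrt (1 + κ ^ 2) := by positivity
  have hρsq : (κ / Real.sqrt (1 + κ ^ 2)) ^ 2 = κ ^ 2 / (1 + κ ^ 2) := by
    rw [div_pow, Real.sq_sqrt (by positivity : (0:ℝ) ≤ 1 + κ ^ 2)]
  -- first claim
  have claim1 : ∀ k : ℕ, ‖x k - projX (x k)‖ ≤ (κ / Real.sqrt (1 + κ ^ 2)) ^ k * Rd := by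
    intro k
    induction k with
    | zero => simp [hRd]
    | succ m ih =>
      have h1 := hrec m
      rw [← hρsq] at h1
      have h2 : ‖x m - projX (x m)‖ ^ 2 ≤ ((κ / Real.sqrt (1 + κ ^ 2)) ^ m * Rd) ^ 2 :=
        pow_le_pow_left₀ (norm_nonneg _) ih 2
      have h3 : ‖x (m + 1) - projX (x (m + 1))‖ ^ 2
          ≤ ((κ / Real.sqrt (1 + κ ^ 2)) ^ (m + 1) * Rd) ^ 2 := by
        calc ‖x (m + 1) - projX (x (m + 1))‖ ^ 2
            ≤ (κ / Real.sqrt (1 + κ ^ 2)) ^ 2 * ‖x m - projX (x m)‖ ^ 2 := h1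
          _ ≤ (κ / Real.sqrt (1 + κ ^ 2)) ^ 2 * ((κ / Real.sqrt (1 + κ ^ 2)) ^ m * Rd) ^ 2 :=
              mul_le_mul_of_nonneg_left h2 (by positivity)
          _ = ((κ / Real.sqrt (1 + κ ^ 2)) ^ (m + 1) * Rd) ^ 2 := by ring
      have h4 : ‖x (m + 1) - projX (x (m + 1))‖
          = Real.sqrt (‖x (m + 1) - projX (x (m + 1))‖ ^ 2) :=
        (Real.sqrt_sq (norm_nonneg _)).symm
      rw [h4]
      calc Real.sqrt (‖x (m + 1) - projX (x (m + 1))‖ ^ 2)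
          ≤ Real.sqrt (((κ / Real.sqrt (1 + κ ^ 2)) ^ (m + 1) * Rd) ^ 2) :=
            Real.sqrt_le_sqrt h3
        _ = (κ / Real.sqrt (1 + κ ^ 2)) ^ (m + 1) * Rd := Real.sqrt_sq (by positivity)
  refine ⟨claim1, ?_⟩
  -- second claim
  intro k hk
  obtain ⟨m, rfl⟩ : ∃ m, k = m + 1 := ⟨k - 1, by omega⟩
  have h1 := hrec2 m
  have h2 : (2 / Ld) * (fstar - d (x (m + 1))) ≤ ‖x m - projX (x m)‖ ^ 2 := by
    nlinarith [sq_nonneg ‖x (m + 1) - projX (x (m + 1))‖]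
  have h3 : ‖x m - projX (x m)‖ ^ 2 ≤ ((κ / Real.sqrt (1 + κ ^ 2)) ^ m * Rd) ^ 2 :=
    pow_le_pow_left₀ (norm_nonneg _) (claim1 m) 2
  have h4 : ((κ / Real.sqrt (1 + κ ^ 2)) ^ m * Rd) ^ 2
      = (κ ^ 2 / (1 + κ ^ 2)) ^ m * Rd ^ 2 := by
    rw [mul_pow, ← pow_mul, mul_comm m 2, pow_mul, hρsq]
  have h5 : fstar - d (x (m + 1)) ≤ Ld / 2 * ((κ ^ 2 / (1 + κ ^ 2)) ^ m * Rd ^ 2) := by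
    have := mul_le_mul_of_nonneg_left (h2.trans (h4 ▸ h3)) (by positivity : (0:ℝ) ≤ Ld / 2)
    calc fstar - d (x (m + 1))
        = Ld / 2 * ((2 / Ld) * (fstar - d (x (m + 1)))) := by field_simp
      _ ≤ Ld / 2 * ((κ ^ 2 / (1 + κ ^ 2)) ^ m * Rd ^ 2) := this
  have h6 : m + 1 - 1 = m := by omega
  rw [h6]
  calc fstar - d (x (m + 1)) ≤ Ld / 2 * ((κ ^ 2 / (1 + κ ^ 2)) ^ m * Rd ^ 2) := h5
    _ = Ld * Rd ^ 2 / 2 * (κ ^ 2 / (1 + κ ^ 2)) ^ m := by ring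
end

section
/- Under the error bound property with constants M = f* − d(x^0) and κ > 0, the last primal iterate of Algorithm (DG) with constant step size 1/L_d converges globally linearly: setting θ = κ²/(1+κ²), for all k ≥ 1, ‖u^k − u*‖ ≤ √(L_d R_d²/σ_f) · θ^{(k−1)/2}, dist_K(G u^k + g) ≤ L_d R_d · θ^{(k−1)/2}, and |f(u^k) − f*| ≤ (2 R_d + ‖x^0‖) · L_d R_d · θ^{(k−1)/2}. -/
open scoped RealInnerProductSpace

-- helper: limit-free t->0 argument
lemma aux_le_of_small {a b c : ℝ} (h : ∀ t : ℝ, 0 < t → t ≤ 1 → a ≤ b + t * c) : a ≤ b := by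
  rcases le_or_gt c 0 with hc | hc
  · have := h 1 one_pos le_rfl; nlinarith
  · by_contra hab
    push_neg at hab
    have ht : 0 < min 1 ((a - b) / (2 * c)) := by
      apply lt_min one_pos
      apply div_pos (by linarith) (by linarith)
    have h2 := h _ ht (min_le_left _ _)
    have h3 : min 1 ((a - b) / (2 * c)) * c ≤ ((a - b) / (2 * c)) * c :=
      mul_le_mul_of_nonneg_right (min_le_right _ _) hc.le
    have h4 : ((a - b) / (2 * c)) * c = (a - b) / 2 := by field_simp
    nlinarith

-- variational inequality from nearest-point property
lemma aux_proj_vi {E : Type*} [NormedAddCommGroup E] [InnerProductSpace ℝ E]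
    {S : Set E} (hS : Convex ℝ S) {z q : E} (hq : q ∈ S)
    (hmin : ∀ w ∈ S, ‖z - q‖ ≤ ‖z - w‖) {w : E} (hw : w ∈ S) :
    ⟪z - q, w - q⟫ ≤ 0 := by
  apply aux_le_of_small (b := 0) (c := ‖w - q‖ ^ 2 / 2)
  intro t ht ht1
  have hmem : (1 - t) • q + t • w ∈ S := hS hq hw (by linarith) ht.le (by ring)
  have h1 := hmin _ hmem
  have h2 : z - ((1 - t) • q + t • w) = (z - q) - t • (w - q) := by
    rw [sub_smul, one_smul, smul_sub]; abel
  rw [h2] at h1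
  have h3 : ‖(z - q) - t • (w - q)‖ ^ 2 =
      ‖z - q‖ ^ 2 - 2 * (t * ⟪z - q, w - q⟫) + t ^ 2 * ‖w - q‖ ^ 2 := by
    rw [norm_sub_sq_real, real_inner_smul_right, norm_smul]
    simp [Real.norm_eq_abs, abs_of_pos ht]
    ring
  have h4 : ‖z - q‖ ^ 2 ≤ ‖(z - q) - t • (w - q)‖ ^ 2 := by
    apply pow_le_pow_left₀ (norm_nonneg _) h1
  nlinarith

set_option maxHeartbeats 2000000 in
theorem stmt_15 {n p : ℕ}
    (f : EuclideanSpace ℝ (Fin n) → ℝ) (σf : ℝ) (hσf : 0 < σf)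
    (hfc : Continuous f) (hfsc : StrongConvexOn Set.univ σf f)
    (U : Set (EuclideanSpace ℝ (Fin n))) (hUne : U.Nonempty) (hUcl : IsClosed U) (hUcv : Convex ℝ U)
    (G : EuclideanSpace ℝ (Fin n) →L[ℝ] EuclideanSpace ℝ (Fin p)) (hG : G ≠ 0) (g : EuclideanSpace ℝ (Fin p))
    (K : Set (EuclideanSpace ℝ (Fin p))) (hKne : K.Nonempty) (hKcl : IsClosed K) (hKcv : Convex ℝ K)
    (hKcone : ∀ c : ℝ, 0 ≤ c → ∀ v ∈ K, c • v ∈ K)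
    (Kstar : Set (EuclideanSpace ℝ (Fin p)))
    (hKstar : Kstar = {x : EuclideanSpace ℝ (Fin p) | ∀ v ∈ K, 0 ≤ ⟪x, v⟫})
    (Lag : EuclideanSpace ℝ (Fin n) → EuclideanSpace ℝ (Fin p) → ℝ)
    (hLag : ∀ u x, Lag u x = f u + ⟪x, -(G u) - g⟫)
    (uu : EuclideanSpace ℝ (Fin p) → EuclideanSpace ℝ (Fin n))
    (huu : ∀ x : EuclideanSpace ℝ (Fin p), uu x ∈ U ∧ ∀ u ∈ U, Lag (uu x) x ≤ Lag u x)
    (d : EuclideanSpace ℝ (Fin p) → ℝ) (hd : ∀ x, d x = Lag (uu x) x)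
    (ustar : EuclideanSpace ℝ (Fin n))
    (hustar : ustar ∈ U ∧ G ustar + g ∈ K ∧ ∀ u ∈ U, G u + g ∈ K → f ustar ≤ f u)
    (fstar : ℝ) (hfstar : fstar = f ustar)
    (Xstar : Set (EuclideanSpace ℝ (Fin p))) (hXstar : Xstar = {x ∈ Kstar | d x = fstar})
    (hXne : Xstar.Nonempty)
    (Ld : ℝ) (hLd : Ld = ‖G‖ ^ 2 / σf)
    (projKs : EuclideanSpace ℝ (Fin p) → EuclideanSpace ℝ (Fin p))
    (hprojKs : ∀ z : EuclideanSpace ℝ (Fin p), projKs z ∈ Kstar ∧ ∀ w ∈ Kstar, ‖z - projKs z‖ ≤ ‖z - w‖)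
    (gmap : EuclideanSpace ℝ (Fin p) → EuclideanSpace ℝ (Fin p))
    (hgmap : ∀ z : EuclideanSpace ℝ (Fin p), gmap z = projKs (z + (1 / Ld) • (-(G (uu z)) - g)) - z)
    (projX : EuclideanSpace ℝ (Fin p) → EuclideanSpace ℝ (Fin p))
    (hprojX : ∀ z : EuclideanSpace ℝ (Fin p), projX z ∈ Xstar ∧ ∀ w ∈ Xstar, ‖z - projX z‖ ≤ ‖z - w‖)
    (x : ℕ → EuclideanSpace ℝ (Fin p)) (hx0K : x 0 ∈ Kstar)
    (hxrec : ∀ k, x (k + 1) = projKs (x k + (1 / Ld) • (-(G (uu (x k))) - g)))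
    (κ : ℝ) (hκ : 0 < κ) (hMpos : 0 < fstar - d (x 0))
    (hEB : ∀ z ∈ Kstar, fstar - d z ≤ fstar - d (x 0) →
      ‖z - projX z‖ ≤ κ * ‖gmap z‖)
    (Rd : ℝ) (hRd : Rd = ‖x 0 - projX (x 0)‖)
    (θ : ℝ) (hθ : θ = κ ^ 2 / (1 + κ ^ 2)) :
    ∀ k : ℕ, 1 ≤ k →
      ‖uu (x k) - ustar‖ ≤
        Real.sqrt (Ld * Rd ^ 2 / σf) * θ ^ (((k : ℝ) - 1) / 2) ∧
      Metric.infDist (G (uu (x k)) + g) K ≤ Ld * Rd * θ ^ (((k : ℝ) - 1) / 2) ∧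
      |f (uu (x k)) - fstar| ≤
        (2 * Rd + ‖x 0‖) * (Ld * Rd) * θ ^ (((k : ℝ) - 1) / 2) := by
  have hGpos : (0:ℝ) < ‖G‖ := norm_pos_iff.mpr hG
  have hLpos : (0:ℝ) < Ld := by rw [hLd]; positivity
  have hRd0 : (0:ℝ) ≤ Rd := hRd ▸ norm_nonneg _
  have hθ0 : (0:ℝ) ≤ θ := by rw [hθ]; positivity
  have hθ1 : θ < 1 := by
    rw [hθ, div_lt_one (by positivity)]; linarith
  -- Kstar basic facts
  have hKsadd : ∀ w₁ ∈ Kstar, ∀ w₂ ∈ Kstar, w₁ + w₂ ∈ Kstar := by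
    rw [hKstar]; intro w₁ h1 w₂ h2 v hv
    have := h1 v hv; have := h2 v hv
    rw [inner_add_left]; linarith
  have hKscv : Convex ℝ Kstar := by
    rw [hKstar]; intro w₁ h1 w₂ h2 a b ha hb hab v hv
    have e1 := h1 v hv; have e2 := h2 v hv
    rw [inner_add_left, real_inner_smul_left, real_inner_smul_left]
    nlinarith
  -- strong convexity of the Lagrangian and the key minimizer inequality
  have keyA : ∀ zx, ∀ w ∈ U, Lag (uu zx) zx + σf / 2 * ‖w - uu zx‖ ^ 2 ≤ Lag w zx := by
    intro zx w hw
    obtain ⟨hmU, hmin⟩ := huu zx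
    apply aux_le_of_small (c := σf / 2 * ‖w - uu zx‖ ^ 2)
    intro t ht ht1
    have hmem : (1 - t) • (uu zx) + t • w ∈ U := hUcv hmU hw (by linarith) ht.le (by ring)
    have hf := hfsc.2 (Set.mem_univ (uu zx)) (Set.mem_univ w)
      (by linarith : (0:ℝ) ≤ 1 - t) ht.le (by ring)
    simp only [smul_eq_mul] at hf
    have hlin : ⟪zx, -(G ((1-t) • (uu zx) + t • w)) - g⟫ =
        (1-t) * ⟪zx, -(G (uu zx)) - g⟫ + t * ⟪zx, -(G w) - g⟫ := by
      rw [map_add, map_smul, map_smul]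
      simp only [inner_sub_right, inner_neg_right, inner_add_right, real_inner_smul_right]
      ring
    have hLag1 : Lag ((1-t) • (uu zx) + t • w) zx ≤
        (1-t) * Lag (uu zx) zx + t * Lag w zx - (1-t) * t * (σf / 2 * ‖uu zx - w‖ ^ 2) := by
      rw [hLag, hLag, hLag, hlin]; nlinarith [hf]
    have hLag2 := hmin _ hmem
    have hnw : ‖w - uu zx‖ = ‖uu zx - w‖ := norm_sub_rev _ _
    rw [hnw]
    nlinarith [hLag1, hLag2]
  -- supergradient inequality (concavity of d)
  have keyB : ∀ zx y : EuclideanSpace ℝ (Fin p),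
      d y ≤ d zx + ⟪-(G (uu zx)) - g, y - zx⟫ := by
    intro zx y
    have h1 : Lag (uu y) y ≤ Lag (uu zx) y := (huu y).2 _ (huu zx).1
    rw [hd y, hd zx, hLag (uu zx) y, hLag (uu zx) zx] at *
    have h2 : ⟪y, -(G (uu zx)) - g⟫ = ⟪zx, -(G (uu zx)) - g⟫ + ⟪-(G (uu zx)) - g, y - zx⟫ := by
      simp only [inner_sub_left, inner_sub_right, inner_neg_left, inner_neg_right,
        real_inner_comm]
      ring
    linarith
  -- quadratic lower bound (smoothness of d) : d zx + <∇, y - zx> - Ld/2 |y-zx|² ≤ d y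
  have keyC : ∀ zx y : EuclideanSpace ℝ (Fin p),
      d zx + ⟪-(G (uu zx)) - g, y - zx⟫ - Ld / 2 * ‖y - zx‖ ^ 2 ≤ d y := by
    intro zx y
    have hA := keyA zx (uu y) (huu y).1
    -- d y = f (uu y) + <y, -(G uu y) - g>
    rw [hd y, hLag (uu y) y]
    rw [hd zx]
    have hsplit : ⟪y, -(G (uu y)) - g⟫ =
        ⟪zx, -(G (uu y)) - g⟫ + ⟪-(G (uu zx)) - g, y - zx⟫
          + ⟪y - zx, G (uu zx) - G (uu y)⟫ := by
      simp only [inner_sub_left, inner_sub_right, inner_neg_left, inner_neg_right,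
        real_inner_comm]
      ring
    have hcs : ⟪y - zx, G (uu zx) - G (uu y)⟫ ≥ -(‖y - zx‖ * (‖G‖ * ‖uu zx - uu y‖)) := by
      have h1 : ‖G (uu zx) - G (uu y)‖ ≤ ‖G‖ * ‖uu zx - uu y‖ := by
        rw [← map_sub]; exact G.le_opNorm _
      have h2 := abs_real_inner_le_norm (y - zx) (G (uu zx) - G (uu y))
      have h3 := neg_abs_le ⟪y - zx, G (uu zx) - G (uu y)⟫
      nlinarith [norm_nonneg (y - zx), norm_nonneg (G (uu zx) - G (uu y))]
    have hAA : Lag (uu zx) zx + σf / 2 * ‖uu y - uu zx‖ ^ 2 ≤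
        f (uu y) + ⟪zx, -(G (uu y)) - g⟫ := by rw [← hLag]; exact hA
    have hquad : σf / 2 * ‖uu y - uu zx‖ ^ 2 - ‖y - zx‖ * (‖G‖ * ‖uu zx - uu y‖)
        ≥ -(Ld / 2 * ‖y - zx‖ ^ 2) := by
      have hn : ‖uu y - uu zx‖ = ‖uu zx - uu y‖ := norm_sub_rev _ _
      rw [hn]
      have hL2 : Ld * σf = ‖G‖ ^ 2 := by rw [hLd]; field_simp
      nlinarith [sq_nonneg (σf * ‖uu zx - uu y‖ - ‖G‖ * ‖y - zx‖), hσf,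
        sq_nonneg ‖y - zx‖, sq_nonneg ‖uu zx - uu y‖]
    rw [hsplit]
    linarith
  -- variational inequality for the projection onto Kstar
  have keyVI : ∀ z : EuclideanSpace ℝ (Fin p), ∀ w ∈ Kstar, ⟪z - projKs z, w - projKs z⟫ ≤ 0 := by
    intro z w hw
    exact aux_proj_vi hKscv (hprojKs z).1 (hprojKs z).2 hw
  -- iterates remain dual feasible
  have hxK : ∀ k, x k ∈ Kstar := by
    intro k; cases k with
    | zero => exact hx0K
    | succ m => rw [hxrec]; exact (hprojKs _).1
  -- three-point inequality
  have key3 : ∀ k, ∀ y ∈ Kstar,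
      d y - d (x (k+1)) ≤ Ld / 2 * (‖y - x k‖ ^ 2 - ‖y - x (k+1)‖ ^ 2) := by
    intro k y hy
    set X := x k with hX
    set N : EuclideanSpace ℝ (Fin p) := -(G (uu (x k))) - g with hN
    set P := x (k+1) with hP
    have hPdef : P = projKs (X + (1/Ld) • N) := hxrec k
    have hB := keyB X y
    have hC := keyC X P
    have hVI : ⟪(X + (1/Ld) • N) - P, y - P⟫ ≤ 0 := by
      rw [hPdef]; exact keyVI _ y hy
    have hVI2 : ⟪N, y - P⟫ ≤ Ld * ⟪P - X, y - P⟫ := by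
      have hexp : (X + (1/Ld) • N) - P = (X - P) + (1/Ld) • N := by abel
      rw [hexp, inner_add_left, real_inner_smul_left] at hVI
      have hinner : ⟪X - P, y - P⟫ = -⟪P - X, y - P⟫ := by
        rw [← neg_sub P X, inner_neg_left]
      rw [hinner] at hVI
      have := mul_le_mul_of_nonneg_left hVI hLpos.le
      rw [mul_add, mul_zero] at this
      have hLinv : Ld * (1 / Ld * ⟪N, y - P⟫) = ⟪N, y - P⟫ := by
        rw [← mul_assoc, mul_one_div_cancel hLpos.ne', one_mul]
      nlinarith [this, hLinv]
    have hid : ‖y - X‖ ^ 2 = ‖y - P‖ ^ 2 + 2 * ⟪y - P, P - X⟫ + ‖P - X‖ ^ 2 := by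
      have : y - X = (y - P) + (P - X) := by abel
      rw [this, norm_add_sq_real]; try ring
    have hsplitN : ⟪N, y - X⟫ = ⟪N, y - P⟫ + ⟪N, P - X⟫ := by
      have : y - X = (y - P) + (P - X) := by abel
      rw [this, inner_add_right]
    have hcomm : ⟪y - P, P - X⟫ = ⟪P - X, y - P⟫ := real_inner_comm _ _
    nlinarith [hB, hC, hVI2, hid, hsplitN, hcomm]
  -- ascent property
  have ascend : ∀ k, d (x k) + Ld / 2 * ‖x (k+1) - x k‖ ^ 2 ≤ d (x (k+1)) := by
    intro k
    set X := x k with hX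
    set N : EuclideanSpace ℝ (Fin p) := -(G (uu (x k))) - g with hN
    set P := x (k+1) with hP
    have hPdef : P = projKs (X + (1/Ld) • N) := hxrec k
    have hC := keyC X P
    have hVI : ⟪(X + (1/Ld) • N) - P, X - P⟫ ≤ 0 := by
      rw [hPdef]; exact keyVI _ X (hxK k)
    have hVI2 : Ld * ‖P - X‖ ^ 2 ≤ ⟪N, P - X⟫ := by
      have hexp : (X + (1/Ld) • N) - P = (X - P) + (1/Ld) • N := by abel
      rw [hexp, inner_add_left, real_inner_smul_left] at hVI
      have h1 : ⟪X - P, X - P⟫ = ‖P - X‖ ^ 2 := by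
        rw [real_inner_self_eq_norm_sq, norm_sub_rev]
      have h2 : ⟪N, X - P⟫ = -⟪N, P - X⟫ := by
        rw [← neg_sub P X, inner_neg_right]
      rw [h1, h2] at hVI
      have := mul_le_mul_of_nonneg_left hVI hLpos.le
      have hLinv : Ld * (1 / Ld * (-⟪N, P - X⟫)) = -⟪N, P - X⟫ := by
        rw [← mul_assoc, mul_one_div_cancel hLpos.ne', one_mul]
      nlinarith [this, hLinv]
    have hnrev : ‖P - X‖ = ‖X - P‖ := norm_sub_rev _ _
    nlinarith [hC, hVI2, sq_nonneg ‖P - X‖]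
  -- weak duality
  have weakdual : ∀ w ∈ Kstar, d w ≤ fstar := by
    intro w hw
    have h1 : Lag (uu w) w ≤ Lag ustar w := (huu w).2 _ hustar.1
    have h2 : ⟪w, -(G ustar) - g⟫ = -⟪w, G ustar + g⟫ := by
      simp only [inner_sub_right, inner_neg_right, inner_add_right]; ring
    have h3 : 0 ≤ ⟪w, G ustar + g⟫ := by
      rw [hKstar] at hw; exact hw _ hustar.2.1
    rw [hd, hfstar]
    rw [hLag ustar w, h2] at h1
    linarith
  have gap_nonneg : ∀ k, 0 ≤ fstar - d (x k) := fun k =>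
    sub_nonneg.mpr (weakdual _ (hxK k))
  have gap_mono : ∀ k, fstar - d (x (k+1)) ≤ fstar - d (x k) := by
    intro k
    have := ascend k
    nlinarith [sq_nonneg ‖x (k+1) - x k‖, hLpos]
  have gap_le_M : ∀ k, fstar - d (x k) ≤ fstar - d (x 0) := by
    intro k; induction k with
    | zero => exact le_refl _
    | succ m ih => exact le_trans (gap_mono m) ih
  -- error bound along the iterates
  have hEBk : ∀ k, ‖x k - projX (x k)‖ ≤ κ * ‖x (k+1) - x k‖ := by
    intro k
    have h := hEB (x k) (hxK k) (gap_le_M k)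
    rwa [hgmap, ← hxrec k] at h
  -- facts about projX points
  have hXsub : ∀ z, projX z ∈ Kstar ∧ d (projX z) = fstar := by
    intro z
    have := (hprojX z).1
    rw [hXstar] at this
    exact this
  -- contraction of the dual gap
  have contr : ∀ k, fstar - d (x (k+1)) ≤ θ * (fstar - d (x k)) := by
    intro k
    obtain ⟨hyK, hyd⟩ := hXsub (x k)
    have h3 := key3 k _ hyK
    rw [hyd] at h3
    have hsq : ‖projX (x k) - x k‖ ^ 2 ≤ κ ^ 2 * ‖x (k+1) - x k‖ ^ 2 := by
      have h := hEBk k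
      rw [norm_sub_rev]
      nlinarith [norm_nonneg (x k - projX (x k)), norm_nonneg (x (k+1) - x k), hκ]
    have hasc := ascend k
    have hnn := sq_nonneg ‖projX (x k) - x (k+1)‖
    -- fstar - d (x (k+1)) ≤ κ^2 * ((fstar - d (x k)) - (fstar - d (x (k+1))))
    have hmain : fstar - d (x (k+1)) ≤
        κ ^ 2 * ((fstar - d (x k)) - (fstar - d (x (k+1)))) := by
      nlinarith [hLpos]
    rw [hθ, div_mul_eq_mul_div, le_div_iff₀ (by positivity : (0:ℝ) < 1 + κ ^ 2)]
    nlinarith [hmain]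
  -- first-step bound
  have gap1 : fstar - d (x 1) ≤ Ld / 2 * Rd ^ 2 := by
    obtain ⟨hyK, hyd⟩ := hXsub (x 0)
    have h3 := key3 0 _ hyK
    rw [hyd] at h3
    have hnn := sq_nonneg ‖projX (x 0) - x 1‖
    have hRdsq : ‖projX (x 0) - x 0‖ ^ 2 = Rd ^ 2 := by
      rw [norm_sub_rev, ← hRd]
    norm_num at h3
    nlinarith [hLpos]
  -- geometric decay
  have gapk : ∀ m : ℕ, fstar - d (x (m+1)) ≤ Ld / 2 * Rd ^ 2 * θ ^ m := by
    intro m; induction m with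
    | zero => simpa using gap1
    | succ m ih =>
      have h := contr (m+1)
      calc fstar - d (x (m+1+1)) ≤ θ * (fstar - d (x (m+1))) := h
        _ ≤ θ * (Ld / 2 * Rd ^ 2 * θ ^ m) := by
            exact mul_le_mul_of_nonneg_left ih hθ0
        _ = Ld / 2 * Rd ^ 2 * θ ^ (m+1) := by ring
  -- Fejér monotonicity w.r.t. y0 := projX (x 0)
  have fej : ∀ k, ‖x (k+1) - projX (x 0)‖ ≤ ‖x k - projX (x 0)‖ := by
    intro k
    obtain ⟨hyK, hyd⟩ := hXsub (x 0)
    have h3 := key3 k _ hyK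
    rw [hyd] at h3
    have h0 := gap_nonneg (k+1)
    have hsq : ‖projX (x 0) - x (k+1)‖ ^ 2 ≤ ‖projX (x 0) - x k‖ ^ 2 := by
      nlinarith [hLpos]
    have := Real.sqrt_le_sqrt hsq
    rw [Real.sqrt_sq (norm_nonneg _), Real.sqrt_sq (norm_nonneg _)] at this
    rw [norm_sub_rev (x (k+1)), norm_sub_rev (x k)]
    exact this
  have fejK : ∀ k, ‖x k - projX (x 0)‖ ≤ Rd := by
    intro k; induction k with
    | zero => rw [hRd]
    | succ m ih => exact le_trans (fej m) ih
  have hxknorm : ∀ k, ‖x k‖ ≤ 2 * Rd + ‖x 0‖ := by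
    intro k
    have h1 : ‖x k‖ ≤ ‖x k - projX (x 0)‖ + ‖projX (x 0)‖ := by
      have := norm_add_le (x k - projX (x 0)) (projX (x 0))
      simpa using this
    have h2 : ‖projX (x 0)‖ ≤ ‖projX (x 0) - x 0‖ + ‖x 0‖ := by
      have := norm_add_le (projX (x 0) - x 0) (x 0)
      simpa using this
    have h3 : ‖projX (x 0) - x 0‖ = Rd := by rw [norm_sub_rev, ← hRd]
    have := fejK k
    linarith
  have hy0norm : ‖projX (x 0)‖ ≤ Rd + ‖x 0‖ := by
    have h2 : ‖projX (x 0)‖ ≤ ‖projX (x 0) - x 0‖ + ‖x 0‖ := by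
      have := norm_add_le (projX (x 0) - x 0) (x 0)
      simpa using this
    have h3 : ‖projX (x 0) - x 0‖ = Rd := by rw [norm_sub_rev, ← hRd]
    linarith
  -- primal distance bound
  have hprim : ∀ k, σf / 2 * ‖uu (x k) - ustar‖ ^ 2 ≤ fstar - d (x k) := by
    intro k
    have hA := keyA (x k) ustar hustar.1
    rw [hLag ustar (x k)] at hA
    have h2 : ⟪x k, -(G ustar) - g⟫ = -⟪x k, G ustar + g⟫ := by
      simp only [inner_sub_right, inner_neg_right, inner_add_right]; ring
    have h3 : 0 ≤ ⟪x k, G ustar + g⟫ := by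
      have := hxK k; rw [hKstar] at this; exact this _ hustar.2.1
    have h4 : ‖ustar - uu (x k)‖ = ‖uu (x k) - ustar‖ := norm_sub_rev _ _
    rw [hd, hfstar]
    rw [h2, h4] at hA
    linarith
  -- bipolar theorem machinery
  have hdualdual : ∀ y : EuclideanSpace ℝ (Fin p),
      (∀ q ∈ Kstar, 0 ≤ ⟪q, y⟫) → y ∈ K := by
    intro y hy
    let Kc : ConvexCone ℝ (EuclideanSpace ℝ (Fin p)) :=
      { carrier := K
        smul_mem' := fun c hc v hv => hKcone c hc.le v hv
        add_mem' := fun u hu v hv => by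
          have hmid : (1/2 : ℝ) • u + (1/2 : ℝ) • v ∈ K :=
            hKcv hu hv (by norm_num) (by norm_num) (by norm_num)
          have h2 := hKcone 2 (by norm_num) _ hmid
          have h3 : (2:ℝ) • ((1/2 : ℝ) • u + (1/2 : ℝ) • v) = u + v := by
            rw [smul_add, smul_smul, smul_smul]; norm_num
          rwa [h3] at h2 }
    have hKc : (Kc : Set (EuclideanSpace ℝ (Fin p))) = K := rfl
    let C : ProperCone ℝ (EuclideanSpace ℝ (Fin p)) :=
      { carrier := K
        add_mem' := fun hu hv => Kc.add_mem' hu hv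
        zero_mem' := by simpa using hKcone 0 le_rfl _ hKne.some_mem
        smul_mem' := fun c v hv => hKcone (c : ℝ) c.2 v hv
        isClosed' := hKcl }
    have hbip := ProperCone.innerDual_innerDual C
    have h1 : y ∈ ProperCone.innerDual
        (ProperCone.innerDual (C : Set (EuclideanSpace ℝ (Fin p))) :
          Set (EuclideanSpace ℝ (Fin p))) := by
      rw [ProperCone.mem_innerDual]
      intro q hq
      apply hy
      rw [hKstar]
      intro v hv
      rw [real_inner_comm]
      exact hq hv
    rw [hbip] at h1
    exact h1
  -- feasibility violation bound
  have distb : ∀ k, Metric.infDist (G (uu (x k)) + g) K ≤ Ld * ‖x k - x (k+1)‖ := by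
    intro k
    set N : EuclideanSpace ℝ (Fin p) := -(G (uu (x k))) - g with hN
    set Z : EuclideanSpace ℝ (Fin p) := x k + (1/Ld) • N with hZ
    set P := x (k+1) with hP
    have hPdef : P = projKs Z := hxrec k
    have hsq : ∀ q ∈ Kstar, 0 ≤ ⟪q, -(Z - P)⟫ := by
      intro q hq
      have hmem : P + q ∈ Kstar := hKsadd _ (hPdef ▸ (hprojKs Z).1) _ hq
      have h1 : ⟪Z - projKs Z, (P + q) - projKs Z⟫ ≤ 0 := keyVI Z _ hmem
      rw [← hPdef, add_sub_cancel_left] at h1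
      rw [inner_neg_right, real_inner_comm]
      linarith
    have hvK : Ld • (-(Z - P)) ∈ K := hKcone Ld hLpos.le _ (hdualdual _ hsq)
    have hideq : G (uu (x k)) + g - Ld • (-(Z - P)) = Ld • (x k - P) := by
      have h1 : G (uu (x k)) + g = -N := by rw [hN]; abel
      have e1 : Ld • (-(Z - P)) = Ld • P - Ld • (x k) - N := by
        rw [hZ, neg_sub, smul_sub, smul_add, smul_smul,
          mul_one_div_cancel hLpos.ne', one_smul]
        abel
      rw [h1, e1, smul_sub]
      abel
    have h2 : Metric.infDist (G (uu (x k)) + g) K ≤ dist (G (uu (x k)) + g) (Ld • (-(Z - P))) :=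
      Metric.infDist_le_dist_of_mem hvK
    rw [dist_eq_norm, hideq, norm_smul, Real.norm_eq_abs, abs_of_pos hLpos] at h2
    exact h2
  have stepb : ∀ k, Ld / 2 * ‖x (k+1) - x k‖ ^ 2 ≤ fstar - d (x k) := by
    intro k
    have h1 := ascend k
    have h2 := weakdual _ (hxK (k+1))
    linarith
  -- primal suboptimality: upper bound
  have hupper : ∀ k, f (uu (x k)) - fstar ≤ ‖x k‖ * (‖G‖ * ‖uu (x k) - ustar‖) := by
    intro k
    have hA := keyA (x k) ustar hustar.1
    rw [hLag ustar (x k), hLag (uu (x k)) (x k)] at hA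
    have hid : ⟪x k, -(G ustar) - g⟫ - ⟪x k, -(G (uu (x k))) - g⟫
        = ⟪x k, G (uu (x k)) - G ustar⟫ := by
      simp only [inner_sub_right, inner_neg_right]; ring
    have hcs : ⟪x k, G (uu (x k)) - G ustar⟫ ≤ ‖x k‖ * (‖G‖ * ‖uu (x k) - ustar‖) := by
      have h1 := real_inner_le_norm (x k) (G (uu (x k)) - G ustar)
      have h2 : ‖G (uu (x k)) - G ustar‖ ≤ ‖G‖ * ‖uu (x k) - ustar‖ := by
        rw [← map_sub]; exact G.le_opNorm _
      nlinarith [norm_nonneg (x k)]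
    rw [hfstar]
    nlinarith [sq_nonneg ‖ustar - uu (x k)‖, hσf, hA, hid, hcs]
  -- primal suboptimality: lower bound
  have hlower : ∀ k, fstar - f (uu (x k)) ≤
      (Rd + ‖x 0‖) * Metric.infDist (G (uu (x k)) + g) K := by
    intro k
    obtain ⟨hy0K, hy0d⟩ := hXsub (x 0)
    set w : EuclideanSpace ℝ (Fin p) := G (uu (x k)) + g with hw
    have h1 : Lag (uu (projX (x 0))) (projX (x 0)) ≤ Lag (uu (x k)) (projX (x 0)) :=
      (huu _).2 _ (huu (x k)).1
    have h2 : fstar ≤ f (uu (x k)) + ⟪projX (x 0), -(G (uu (x k))) - g⟫ := by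
      rw [← hLag, ← hy0d, hd]; exact h1
    have h3 : ⟪projX (x 0), -(G (uu (x k))) - g⟫ = -⟪projX (x 0), w⟫ := by
      rw [hw]; simp only [inner_sub_right, inner_neg_right, inner_add_right]; ring
    obtain ⟨v', hv'K, hv'd⟩ := hKcl.exists_infDist_eq_dist hKne w
    have h4 : 0 ≤ ⟪projX (x 0), v'⟫ := by
      rw [hKstar] at hy0K; exact hy0K _ hv'K
    have h5 : ⟪projX (x 0), w - v'⟫ ≥ -(‖projX (x 0)‖ * ‖w - v'‖) := by
      have := abs_real_inner_le_norm (projX (x 0)) (w - v')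
      have := neg_abs_le ⟪projX (x 0), w - v'⟫
      linarith
    have h6 : ⟪projX (x 0), w⟫ = ⟪projX (x 0), v'⟫ + ⟪projX (x 0), w - v'⟫ := by
      rw [inner_sub_right]; ring
    have h7 : ‖w - v'‖ = Metric.infDist w K := by rw [hv'd, dist_eq_norm]
    have h8 : 0 ≤ Metric.infDist w K := Metric.infDist_nonneg
    have h9 : ‖projX (x 0)‖ * ‖w - v'‖ ≤ (Rd + ‖x 0‖) * Metric.infDist w K := by
      rw [h7]
      exact mul_le_mul_of_nonneg_right hy0norm h8
    rw [h3] at h2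
    linarith
  -- final assembly
  intro k hk
  obtain ⟨m, rfl⟩ : ∃ m, k = m + 1 := ⟨k - 1, (Nat.succ_pred_eq_of_pos hk).symm⟩
  have hgap : fstar - d (x (m+1)) ≤ Ld / 2 * Rd ^ 2 * θ ^ m := gapk m
  have hsqrtθ : θ ^ ((((m+1 : ℕ) : ℝ) - 1) / 2) = Real.sqrt (θ ^ m) := by
    have hcast : (((m+1 : ℕ) : ℝ) - 1) / 2 = (m : ℝ) * (1/2) := by push_cast; ring
    rw [hcast, Real.rpow_mul hθ0, Real.rpow_natCast, ← Real.sqrt_eq_rpow]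
  have hθm0 : (0:ℝ) ≤ θ ^ m := pow_nonneg hθ0 m
  -- (a)
  have parta : ‖uu (x (m+1)) - ustar‖ ≤
      Real.sqrt (Ld * Rd ^ 2 / σf) * θ ^ ((((m+1 : ℕ) : ℝ) - 1) / 2) := by
    rw [hsqrtθ, ← Real.sqrt_mul (by positivity : (0:ℝ) ≤ Ld * Rd ^ 2 / σf)]
    have h1 : ‖uu (x (m+1)) - ustar‖ ^ 2 ≤ Ld * Rd ^ 2 / σf * θ ^ m := by
      have h2 := hprim (m+1)
      rw [div_mul_eq_mul_div, le_div_iff₀ hσf]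
      nlinarith
    calc ‖uu (x (m+1)) - ustar‖ = Real.sqrt (‖uu (x (m+1)) - ustar‖ ^ 2) :=
          (Real.sqrt_sq (norm_nonneg _)).symm
      _ ≤ Real.sqrt (Ld * Rd ^ 2 / σf * θ ^ m) := Real.sqrt_le_sqrt h1
  -- (b)
  have partb : Metric.infDist (G (uu (x (m+1))) + g) K ≤
      Ld * Rd * θ ^ ((((m+1 : ℕ) : ℝ) - 1) / 2) := by
    rw [hsqrtθ]
    have h1 := distb (m+1)
    have h2 := stepb (m+1)
    have h3 : (Ld * ‖x (m+1) - x (m+1+1)‖) ^ 2 ≤ (Ld * Rd) ^ 2 * θ ^ m := by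
      have hnr : ‖x (m+1) - x (m+1+1)‖ = ‖x (m+1+1) - x (m+1)‖ := norm_sub_rev _ _
      rw [hnr]
      have h4 : fstar - d (x (m+1)) ≤ Ld / 2 * Rd ^ 2 * θ ^ m := hgap
      nlinarith [hLpos, sq_nonneg ‖x (m+1+1) - x (m+1)‖]
    have h5 : Ld * ‖x (m+1) - x (m+1+1)‖ ≤ Ld * Rd * Real.sqrt (θ ^ m) := by
      have h6 : Ld * ‖x (m+1) - x (m+1+1)‖ =
          Real.sqrt ((Ld * ‖x (m+1) - x (m+1+1)‖) ^ 2) :=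
        (Real.sqrt_sq (by positivity)).symm
      rw [h6]
      calc Real.sqrt ((Ld * ‖x (m+1) - x (m+1+1)‖) ^ 2) ≤
            Real.sqrt ((Ld * Rd) ^ 2 * θ ^ m) := Real.sqrt_le_sqrt h3
        _ = Ld * Rd * Real.sqrt (θ ^ m) := by
            rw [Real.sqrt_mul (sq_nonneg _), Real.sqrt_sq (by positivity)]
    exact le_trans h1 h5
  refine ⟨parta, partb, ?_⟩
  -- (c)
  have hGs : ‖G‖ * Real.sqrt (Ld * Rd ^ 2 / σf) = Ld * Rd := by
    have hL2 : ‖G‖ ^ 2 = Ld * σf := by rw [hLd]; field_simp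
    have harg : ‖G‖ ^ 2 * (Ld * Rd ^ 2 / σf) = (Ld * Rd) ^ 2 := by
      rw [hL2]; field_simp
    calc ‖G‖ * Real.sqrt (Ld * Rd ^ 2 / σf)
        = Real.sqrt (‖G‖ ^ 2) * Real.sqrt (Ld * Rd ^ 2 / σf) := by
          rw [Real.sqrt_sq (norm_nonneg _)]
      _ = Real.sqrt (‖G‖ ^ 2 * (Ld * Rd ^ 2 / σf)) := (Real.sqrt_mul (sq_nonneg _) _).symm
      _ = Ld * Rd := by rw [harg, Real.sqrt_sq (by positivity)]
  rw [abs_le]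
  have hT0 : 0 ≤ θ ^ ((((m+1 : ℕ) : ℝ) - 1) / 2) := by rw [hsqrtθ]; exact Real.sqrt_nonneg _
  have hLR0 : (0:ℝ) ≤ Ld * Rd := by positivity
  constructor
  · -- lower bound
    have h1 := hlower (m+1)
    have h2 := partb
    have h3 : (Rd + ‖x 0‖) * Metric.infDist (G (uu (x (m+1))) + g) K ≤
        (2 * Rd + ‖x 0‖) * (Ld * Rd * θ ^ ((((m+1 : ℕ) : ℝ) - 1) / 2)) := by
      have hd0 : 0 ≤ Metric.infDist (G (uu (x (m+1))) + g) K := Metric.infDist_nonneg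
      nlinarith [norm_nonneg (x 0), mul_nonneg hLR0 hT0]
    have hassoc : (2 * Rd + ‖x 0‖) * (Ld * Rd) * θ ^ ((((m+1 : ℕ) : ℝ) - 1) / 2) =
        (2 * Rd + ‖x 0‖) * (Ld * Rd * θ ^ ((((m+1 : ℕ) : ℝ) - 1) / 2)) := by ring
    rw [hassoc]
    linarith
  · -- upper bound
    have h1 := hupper (m+1)
    have h2 := parta
    have h3 : ‖x (m+1)‖ * (‖G‖ * ‖uu (x (m+1)) - ustar‖) ≤
        (2 * Rd + ‖x 0‖) * (‖G‖ * (Real.sqrt (Ld * Rd ^ 2 / σf) *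
          θ ^ ((((m+1 : ℕ) : ℝ) - 1) / 2))) := by
      have h4 := hxknorm (m+1)
      have h5 : 0 ≤ ‖G‖ * ‖uu (x (m+1)) - ustar‖ := by positivity
      have h6 : 0 ≤ (2 * Rd + ‖x 0‖ : ℝ) := by
        have := norm_nonneg (x 0); linarith
      have h7 : ‖G‖ * ‖uu (x (m+1)) - ustar‖ ≤
          ‖G‖ * (Real.sqrt (Ld * Rd ^ 2 / σf) * θ ^ ((((m+1 : ℕ) : ℝ) - 1) / 2)) :=
        mul_le_mul_of_nonneg_left h2 (norm_nonneg G)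
      calc ‖x (m+1)‖ * (‖G‖ * ‖uu (x (m+1)) - ustar‖) ≤
            (2 * Rd + ‖x 0‖) * (‖G‖ * ‖uu (x (m+1)) - ustar‖) :=
            mul_le_mul_of_nonneg_right h4 h5
        _ ≤ (2 * Rd + ‖x 0‖) * (‖G‖ * (Real.sqrt (Ld * Rd ^ 2 / σf) *
              θ ^ ((((m+1 : ℕ) : ℝ) - 1) / 2))) :=
            mul_le_mul_of_nonneg_left h7 h6
    have h8 : (2 * Rd + ‖x 0‖) * (‖G‖ * (Real.sqrt (Ld * Rd ^ 2 / σf) *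
        θ ^ ((((m+1 : ℕ) : ℝ) - 1) / 2))) =
        (2 * Rd + ‖x 0‖) * (Ld * Rd) * θ ^ ((((m+1 : ℕ) : ℝ) - 1) / 2) := by
      rw [← hGs]; ring
    linarith [h1, h3, h8.le, h8.ge]
end

section
/- Under the error bound property with constants M = f* − d(x^{0,0}) and κ > 0, the restarted dual fast gradient algorithm (R-DFG) converges globally linearly in dual objective values: for any c ∈ (0,1), if the restart length satisfies K_c + 1 ≥ 2κ/c, then f* − d(x^{0,p}) ≤ c^{2p} · (f* − d(x^{0,0})) for all p ≥ 0. -/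
open scoped RealInnerProductSpace

variable {F : Type*} [NormedAddCommGroup F] [InnerProductSpace ℝ F]

/-- Variational inequality for a nearest-point map onto a convex set. -/
lemma aux_vi_s16 (S : Set F) (hS : Convex ℝ S) (P : F → F)
    (hP : ∀ z, P z ∈ S ∧ ∀ w ∈ S, ‖z - P z‖ ≤ ‖z - w‖) (z w : F) (hw : w ∈ S) :
    ⟪z - P z, w - P z⟫ ≤ 0 := by
  set v := P z with hv
  by_contra hcon
  push_neg at hcon
  set I := ⟪z - v, w - v⟫ with hI
  set N := ‖w - v‖ ^ 2 with hN
  have hNnn : 0 ≤ N := by positivity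
  have key : ∀ t : ℝ, 0 < t → t ≤ 1 → 2 * I ≤ t * N := by
    intro t ht0 ht1
    have hmem : v + t • (w - v) ∈ S := by
      have : v + t • (w - v) = (1 - t) • v + t • w := by module
      rw [this]
      exact hS (hP z).1 hw (by linarith) ht0.le (by ring)
    have hle : ‖z - v‖ ≤ ‖z - (v + t • (w - v))‖ := (hP z).2 _ hmem
    have hsq : ‖z - v‖ ^ 2 ≤ ‖z - (v + t • (w - v))‖ ^ 2 := by
      have := norm_nonneg (z - v)
      nlinarith
    have hexp : ‖z - (v + t • (w - v))‖ ^ 2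
        = ‖z - v‖ ^ 2 - 2 * (t * I) + t ^ 2 * N := by
      have h0 : z - (v + t • (w - v)) = (z - v) - t • (w - v) := by abel
      rw [h0, norm_sub_sq_real, real_inner_smul_right, norm_smul,
        Real.norm_eq_abs, mul_pow, sq_abs]
      try rw [hI]
      try rw [hN]
      try ring
    rw [hexp] at hsq
    nlinarith [sq_nonneg t]
  have hI2 : I ≤ N / 2 := by have := key 1 one_pos le_rfl; linarith
  have hNpos : 0 < N := by
    rcases lt_or_ge 0 N with h | h
    · exact h
    · have := key 1 one_pos le_rfl; nlinarith
  have hN0 : N ≠ 0 := ne_of_gt hNpos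
  have ht0 : 0 < I / N := div_pos hcon hNpos
  have := key (min 1 (I / N)) (lt_min one_pos ht0) (min_le_left _ _)
  have hmin : min 1 (I / N) * N ≤ I := by
    calc min 1 (I / N) * N ≤ (I / N) * N :=
          mul_le_mul_of_nonneg_right (min_le_right _ _) hNnn
      _ = I := by field_simp
  linarith

/-- Nearest-point maps onto convex sets are nonexpansive. -/
lemma aux_nonexp (S : Set F) (hS : Convex ℝ S) (P : F → F)
    (hP : ∀ z, P z ∈ S ∧ ∀ w ∈ S, ‖z - P z‖ ≤ ‖z - w‖) (a b : F) :
    ‖P a - P b‖ ≤ ‖a - b‖ := by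
  have h1 := aux_vi_s16 S hS P hP a (P b) (hP b).1
  have h2 := aux_vi_s16 S hS P hP b (P a) (hP a).1
  have hsum : ‖P a - P b‖ ^ 2 ≤ ⟪a - b, P a - P b⟫ := by
    have e1 : ⟪a - P a, P b - P a⟫ = -⟪a - P a, P a - P b⟫ := by
      rw [← inner_neg_right]; congr 1; abel
    have expand : ⟪a - b, P a - P b⟫
        = ⟪a - P a, P a - P b⟫ - ⟪b - P b, P a - P b⟫ + ‖P a - P b‖ ^ 2 := by
      have h3 : a - b = (a - P a) - (b - P b) + (P a - P b) := by abel
      rw [h3, inner_add_left, inner_sub_left, real_inner_self_eq_norm_sq]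
    rw [expand]
    rw [e1] at h1
    linarith
  have hcs := real_inner_le_norm (a - b) (P a - P b)
  nlinarith [norm_nonneg (P a - P b), norm_nonneg (a - b)]

section Smooth
variable (L : ℝ) (d : F → ℝ) (Dg : F → F)

/-- Key inequality for the projected gradient step on a smooth concave function. -/
lemma aux_step (hL : 0 < L)
    (h1 : ∀ x y, d y ≤ d x + ⟪y - x, Dg x⟫)
    (h2 : ∀ x y, d x + ⟪y - x, Dg x⟫ - L / 2 * ‖y - x‖ ^ 2 ≤ d y)
    (S : Set F) (hS : Convex ℝ S) (P : F → F)
    (hP : ∀ z, P z ∈ S ∧ ∀ w ∈ S, ‖z - P z‖ ≤ ‖z - w‖)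
    (y z : F) (hz : z ∈ S) :
    d z - L * ⟪P (y + (1/L) • Dg y) - y, z - P (y + (1/L) • Dg y)⟫
      - L / 2 * ‖P (y + (1/L) • Dg y) - y‖ ^ 2 ≤ d (P (y + (1/L) • Dg y)) := by
  have hL0 : L ≠ 0 := ne_of_gt hL
  set x := P (y + (1/L) • Dg y) with hx
  have hA := h2 y x
  have hB := h1 y z
  have hVI := aux_vi_s16 S hS P hP (y + (1/L) • Dg y) z hz
  rw [← hx] at hVI
  have hexp : ⟪y + (1/L) • Dg y - x, z - x⟫
      = ⟪y - x, z - x⟫ + (1/L) * ⟪Dg y, z - x⟫ := by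
    have h0 : y + (1/L) • Dg y - x = (y - x) + (1/L) • Dg y := by abel
    rw [h0, inner_add_left, real_inner_smul_left]
  rw [hexp] at hVI
  have hsplit : ⟪z - y, Dg y⟫ = ⟪x - y, Dg y⟫ + ⟪z - x, Dg y⟫ := by
    rw [← inner_add_left]; congr 1; abel
  have hc1 : ⟪Dg y, z - x⟫ = ⟪z - x, Dg y⟫ := real_inner_comm _ _
  have hc2 : ⟪y - x, z - x⟫ = -⟪x - y, z - x⟫ := by
    rw [← inner_neg_left]; congr 1; abel
  rw [hc1, hc2] at hVI
  have key2 : ⟪z - x, Dg y⟫ ≤ L * ⟪x - y, z - x⟫ := by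
    have h4 : 1/L * ⟪z - x, Dg y⟫ ≤ ⟪x - y, z - x⟫ := by linarith
    calc ⟪z - x, Dg y⟫ = L * (1/L * ⟪z - x, Dg y⟫) := by field_simp
      _ ≤ L * ⟪x - y, z - x⟫ := mul_le_mul_of_nonneg_left h4 hL.le
  linarith [hA, hB, hsplit, key2]

/-- Cocoercivity of the gradient of a smooth concave function. -/
lemma aux_coco (hL : 0 < L)
    (h1 : ∀ x y, d y ≤ d x + ⟪y - x, Dg x⟫)
    (h2 : ∀ x y, d x + ⟪y - x, Dg x⟫ - L / 2 * ‖y - x‖ ^ 2 ≤ d y)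
    (x y : F) :
    (1 / L) * ‖Dg y - Dg x‖ ^ 2 ≤ ⟪y - x, Dg x - Dg y⟫ := by
  have hL0 : L ≠ 0 := ne_of_gt hL
  have key : ∀ a b : F, d b + (1 / (2 * L)) * ‖Dg b - Dg a‖ ^ 2 ≤ d a + ⟪b - a, Dg a⟫ := by
    intro a b
    set w := b + (1/L) • (Dg b - Dg a) with hw
    have hA := h2 b w
    have hB := h1 a w
    have hwy : w - b = (1/L) • (Dg b - Dg a) := by rw [hw]; abel
    have e1 : ⟪w - b, Dg b⟫ = (1/L) * ⟪Dg b - Dg a, Dg b⟫ := by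
      rw [hwy, real_inner_smul_left]
    have e2 : ‖w - b‖ ^ 2 = (1/L)^2 * ‖Dg b - Dg a‖ ^ 2 := by
      rw [hwy, norm_smul, Real.norm_eq_abs, mul_pow, sq_abs]
    have e3 : ⟪w - a, Dg a⟫ = ⟪b - a, Dg a⟫ + (1/L) * ⟪Dg b - Dg a, Dg a⟫ := by
      have h0 : w - a = (b - a) + (1/L) • (Dg b - Dg a) := by rw [hw]; abel
      rw [h0, inner_add_left, real_inner_smul_left]
    rw [e1, e2] at hA
    rw [e3] at hB
    have e4 : (1/L) * ⟪Dg b - Dg a, Dg b⟫ - (1/L) * ⟪Dg b - Dg a, Dg a⟫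
        = (1/L) * ‖Dg b - Dg a‖ ^ 2 := by
      rw [← mul_sub, ← inner_sub_right, real_inner_self_eq_norm_sq]
    have hL2 : L / 2 * ((1/L)^2 * ‖Dg b - Dg a‖ ^ 2) = (1/(2*L)) * ‖Dg b - Dg a‖ ^ 2 := by
      field_simp
    rw [hL2] at hA
    have hhalf : (1/L) * ‖Dg b - Dg a‖ ^ 2 - (1/(2*L)) * ‖Dg b - Dg a‖ ^ 2
        = (1/(2*L)) * ‖Dg b - Dg a‖ ^ 2 := by field_simp; ring
    linarith
  have k1 := key x y
  have k2 := key y x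
  have hrev : ‖Dg x - Dg y‖ = ‖Dg y - Dg x‖ := norm_sub_rev _ _
  rw [hrev] at k2
  have hsplit : ⟪x - y, Dg y⟫ = -⟪y - x, Dg y⟫ := by
    rw [← inner_neg_left]; congr 1; abel
  rw [hsplit] at k2
  have hsub : ⟪y - x, Dg x - Dg y⟫ = ⟪y - x, Dg x⟫ - ⟪y - x, Dg y⟫ := inner_sub_right _ _ _
  have hLL : (1/(2*L)) * ‖Dg y - Dg x‖ ^ 2 + (1/(2*L)) * ‖Dg y - Dg x‖ ^ 2
      = (1/L) * ‖Dg y - Dg x‖ ^ 2 := by field_simp; ring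
  linarith

end Smooth

set_option maxHeartbeats 1600000 in
theorem stmt_16 {n p : ℕ}
    (f : EuclideanSpace ℝ (Fin n) → ℝ) (σf : ℝ) (hσf : 0 < σf)
    (hfc : Continuous f) (hfsc : StrongConvexOn Set.univ σf f)
    (U : Set (EuclideanSpace ℝ (Fin n))) (hUne : U.Nonempty) (hUcl : IsClosed U) (hUcv : Convex ℝ U)
    (G : EuclideanSpace ℝ (Fin n) →L[ℝ] EuclideanSpace ℝ (Fin p)) (hG : G ≠ 0) (g : EuclideanSpace ℝ (Fin p))
    (K : Set (EuclideanSpace ℝ (Fin p))) (hKne : K.Nonempty) (hKcl : IsClosed K) (hKcv : Convex ℝ K)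
    (hKcone : ∀ c : ℝ, 0 ≤ c → ∀ v ∈ K, c • v ∈ K)
    (Kstar : Set (EuclideanSpace ℝ (Fin p)))
    (hKstar : Kstar = {x : EuclideanSpace ℝ (Fin p) | ∀ v ∈ K, 0 ≤ ⟪x, v⟫})
    (Lag : EuclideanSpace ℝ (Fin n) → EuclideanSpace ℝ (Fin p) → ℝ)
    (hLag : ∀ u x, Lag u x = f u + ⟪x, -(G u) - g⟫)
    (uu : EuclideanSpace ℝ (Fin p) → EuclideanSpace ℝ (Fin n))
    (huu : ∀ x : EuclideanSpace ℝ (Fin p), uu x ∈ U ∧ ∀ u ∈ U, Lag (uu x) x ≤ Lag u x)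
    (d : EuclideanSpace ℝ (Fin p) → ℝ) (hd : ∀ x, d x = Lag (uu x) x)
    (ustar : EuclideanSpace ℝ (Fin n))
    (hustar : ustar ∈ U ∧ G ustar + g ∈ K ∧ ∀ u ∈ U, G u + g ∈ K → f ustar ≤ f u)
    (fstar : ℝ) (hfstar : fstar = f ustar)
    (Xstar : Set (EuclideanSpace ℝ (Fin p))) (hXstar : Xstar = {x ∈ Kstar | d x = fstar})
    (hXne : Xstar.Nonempty)
    (Ld : ℝ) (hLd : Ld = ‖G‖ ^ 2 / σf)
    (projKs : EuclideanSpace ℝ (Fin p) → EuclideanSpace ℝ (Fin p))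
    (hprojKs : ∀ z : EuclideanSpace ℝ (Fin p), projKs z ∈ Kstar ∧ ∀ w ∈ Kstar, ‖z - projKs z‖ ≤ ‖z - w‖)
    (projX : EuclideanSpace ℝ (Fin p) → EuclideanSpace ℝ (Fin p))
    (hprojX : ∀ z : EuclideanSpace ℝ (Fin p), projX z ∈ Xstar ∧ ∀ w ∈ Xstar, ‖z - projX z‖ ≤ ‖z - w‖)
    (θ : ℕ → ℝ) (hθ0 : θ 0 = 0) (hθ1 : θ 1 = 1)
    (hθrec : ∀ k, 1 ≤ k → θ (k + 1) = (1 + Real.sqrt (1 + 4 * θ k ^ 2)) / 2)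
    (Kc : ℕ) (X Y : ℕ → ℕ → EuclideanSpace ℝ (Fin p)) (hX00 : X 0 0 ∈ Kstar)
    (hYinit : ∀ j, Y j 1 = X j 0)
    (hXrec : ∀ j k, 1 ≤ k →
      X j k = projKs (Y j k + (1 / Ld) • (-(G (uu (Y j k))) - g)))
    (hYrec : ∀ j k, 1 ≤ k →
      Y j (k + 1) = X j k + ((θ k - 1) / θ (k + 1)) • (X j k - X j (k - 1)))
    (hrestart : ∀ j, X (j + 1) 0 = X j Kc)
    (κ : ℝ) (hκ : 0 < κ) (hMpos : 0 < fstar - d (X 0 0))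
    (hEB : ∀ z ∈ Kstar, fstar - d z ≤ fstar - d (X 0 0) →
      ‖z - projX z‖ ≤ κ * ‖projKs (z + (1 / Ld) • (-(G (uu z)) - g)) - z‖) :
    ∀ c : ℝ, 0 < c → c < 1 → 2 * κ / c ≤ (Kc : ℝ) + 1 →
      ∀ q : ℕ, fstar - d (X q 0) ≤ c ^ (2 * q) * (fstar - d (X 0 0)) := by
  intro c hc0 hc1 hKbound
  have hGnorm : 0 < ‖G‖ := norm_pos_iff.mpr hG
  have hLdpos : 0 < Ld := by rw [hLd]; positivity
  have hLd0 : Ld ≠ 0 := ne_of_gt hLdpos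
  -- Kstar is convex
  have hKsconv : Convex ℝ Kstar := by
    rw [hKstar]
    intro x hx y hy a b ha hb hab
    intro v hv
    have hxv := hx v hv
    have hyv := hy v hv
    show 0 ≤ ⟪a • x + b • y, v⟫
    rw [inner_add_left, real_inner_smul_left, real_inner_smul_left]
    exact add_nonneg (mul_nonneg ha hxv) (mul_nonneg hb hyv)
  -- strong convexity of the Lagrangian in u
  have hsc : ∀ (x : EuclideanSpace ℝ (Fin p)) (u : EuclideanSpace ℝ (Fin n)), u ∈ U →
      Lag (uu x) x + σf / 2 * ‖u - uu x‖ ^ 2 ≤ Lag u x := by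
    intro x u hu
    have hu0 : uu x ∈ U := (huu x).1
    set D := Lag u x - Lag (uu x) x with hD
    set C := σf / 2 * ‖u - uu x‖ ^ 2 with hC
    have hCnn : 0 ≤ C := by rw [hC]; positivity
    have key : ∀ t : ℝ, 0 < t → t ≤ 1 → (1 - t) * C ≤ D := by
      intro t ht0 ht1
      have hmem : (1-t) • uu x + t • u ∈ U := hUcv hu0 hu (by linarith) ht0.le (by ring)
      have hL0 : Lag (uu x) x ≤ Lag ((1-t) • uu x + t • u) x := (huu x).2 _ hmem
      have hcvx := hfsc.2 (Set.mem_univ (uu x)) (Set.mem_univ u)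
        (show (0:ℝ) ≤ 1-t by linarith) ht0.le (by ring)
      have hlin : Lag ((1-t) • uu x + t • u) x
          ≤ (1-t) * Lag (uu x) x + t * Lag u x - (1-t) * t * (σf/2 * ‖uu x - u‖^2) := by
        rw [hLag, hLag, hLag]
        have hGc : -(G ((1-t) • uu x + t • u)) - g
            = (1-t) • (-(G (uu x)) - g) + t • (-(G u) - g) := by
          rw [map_add, map_smul, map_smul]
          module
        have hinner : ⟪x, -(G ((1-t) • uu x + t • u)) - g⟫
            = (1-t) * ⟪x, -(G (uu x)) - g⟫ + t * ⟪x, -(G u) - g⟫ := by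
          rw [hGc, inner_add_right, real_inner_smul_right, real_inner_smul_right]
        rw [hinner]
        simp only [smul_eq_mul] at hcvx
        linarith
      have hnrev : ‖uu x - u‖ = ‖u - uu x‖ := norm_sub_rev _ _
      rw [hnrev] at hlin
      have h9 : t * ((1-t) * C) ≤ t * D := by rw [hD, hC]; nlinarith [hL0, hlin]
      exact le_of_mul_le_mul_left h9 ht0
    show Lag (uu x) x + C ≤ Lag u x
    by_contra hcon
    push_neg at hcon
    have hDC : D < C := by rw [hD]; linarith
    have hD2 : C / 2 ≤ D := by have := key (1/2) (by norm_num) (by norm_num); linarith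
    have hCpos : 0 < C := by linarith
    set t0 := (C - D) / (2*C) with ht0def
    have ht0pos : 0 < t0 := by apply div_pos <;> linarith
    have ht0le : t0 ≤ 1 := by rw [ht0def, div_le_one (by linarith)]; linarith
    have hkey := key t0 ht0pos ht0le
    have ht0C : t0 * C = (C - D)/2 := by
      rw [ht0def]; field_simp
    nlinarith [hkey, ht0C, hDC]
  -- concavity upper bound
  have h1 : ∀ x y : EuclideanSpace ℝ (Fin p), d y ≤ d x + ⟪y - x, -(G (uu x)) - g⟫ := by
    intro x y
    calc d y ≤ Lag (uu x) y := by rw [hd]; exact (huu y).2 _ (huu x).1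
      _ = d x + ⟪y - x, -(G (uu x)) - g⟫ := by
          rw [hd x, hLag, hLag, inner_sub_left]; ring
  -- smoothness lower bound
  have h2 : ∀ x y : EuclideanSpace ℝ (Fin p),
      d x + ⟪y - x, -(G (uu x)) - g⟫ - Ld / 2 * ‖y - x‖ ^ 2 ≤ d y := by
    intro x y
    have hky : d y = Lag (uu y) x + ⟪y - x, -(G (uu y)) - g⟫ := by
      rw [hd y, hLag, hLag, inner_sub_left]; ring
    have hsc' := hsc x (uu y) (huu y).1
    have hsplit : ⟪y - x, -(G (uu y)) - g⟫
        = ⟪y - x, -(G (uu x)) - g⟫ - ⟪y - x, G (uu y) - G (uu x)⟫ := by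
      rw [← inner_sub_right]
      congr 1
      abel
    have hbound : ⟪y - x, G (uu y) - G (uu x)⟫ ≤ ‖G‖ * ‖y - x‖ * ‖uu y - uu x‖ := by
      calc ⟪y - x, G (uu y) - G (uu x)⟫ ≤ ‖y - x‖ * ‖G (uu y) - G (uu x)‖ :=
            real_inner_le_norm _ _
        _ = ‖y - x‖ * ‖G (uu y - uu x)‖ := by rw [map_sub]
        _ ≤ ‖y - x‖ * (‖G‖ * ‖uu y - uu x‖) :=
            mul_le_mul_of_nonneg_left (G.le_opNorm _) (norm_nonneg _)
        _ = ‖G‖ * ‖y - x‖ * ‖uu y - uu x‖ := by ring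
    have hdx : d x = Lag (uu x) x := hd x
    have hLd' : Ld * σf = ‖G‖^2 := by rw [hLd]; field_simp
    have hamgm : ‖G‖ * ‖y - x‖ * ‖uu y - uu x‖
        ≤ σf/2 * ‖uu y - uu x‖^2 + Ld/2 * ‖y - x‖^2 := by
      set a := ‖uu y - uu x‖ with hadef
      set b := ‖y - x‖ with hbdef
      have h0 : (0:ℝ) < 2*σf := by linarith
      have h1 : 0 ≤ (σf*a - ‖G‖*b)^2 := sq_nonneg _
      have h2 : 2*σf*(σf/2*a^2 + Ld/2*b^2 - ‖G‖*b*a)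
          = (σf*a - ‖G‖*b)^2 + (Ld*σf - ‖G‖^2)*b^2 := by ring
      have h3 : 0 ≤ 2*σf*(σf/2*a^2 + Ld/2*b^2 - ‖G‖*b*a) := by
        rw [h2, hLd']
        simp only [sub_self, zero_mul, add_zero]
        exact h1
      have h4 : 2*σf*0 ≤ 2*σf*(σf/2*a^2 + Ld/2*b^2 - ‖G‖*b*a) := by linarith
      have h5 := le_of_mul_le_mul_left h4 h0
      linarith
    have hscof : Lag (uu x) x + σf / 2 * ‖uu y - uu x‖ ^ 2 ≤ Lag (uu y) x := hsc'
    linarith [hky, hscof, hsplit, hbound, hamgm, hdx]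
  -- weak duality
  have hwd : ∀ x ∈ Kstar, d x ≤ fstar := by
    intro x hx
    have h0 : d x ≤ Lag ustar x := by rw [hd]; exact (huu x).2 _ hustar.1
    have h3 : ⟪x, -(G ustar) - g⟫ = -⟪x, G ustar + g⟫ := by
      rw [← inner_neg_right]
      congr 1
      abel
    have h4 : 0 ≤ ⟪x, G ustar + g⟫ := by
      rw [hKstar] at hx
      exact hx _ hustar.2.1
    rw [hLag] at h0
    rw [hfstar]
    linarith
  -- the key projected gradient step inequality, instantiated
  have hstep : ∀ y z : EuclideanSpace ℝ (Fin p), z ∈ Kstar →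
      d z - Ld * ⟪projKs (y + (1 / Ld) • (-(G (uu y)) - g)) - y,
          z - projKs (y + (1 / Ld) • (-(G (uu y)) - g))⟫
        - Ld / 2 * ‖projKs (y + (1 / Ld) • (-(G (uu y)) - g)) - y‖ ^ 2
      ≤ d (projKs (y + (1 / Ld) • (-(G (uu y)) - g))) :=
    fun y z hz => aux_step Ld d (fun w => -(G (uu w)) - g) hLdpos h1 h2
      Kstar hKsconv projKs hprojKs y z hz
  -- gradient mapping bound
  have hgap : ∀ z ∈ Kstar,
      Ld / 2 * ‖projKs (z + (1 / Ld) • (-(G (uu z)) - g)) - z‖ ^ 2 ≤ fstar - d z := by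
    intro z hz
    have h := hstep z z hz
    have hin : ⟪projKs (z + (1 / Ld) • (-(G (uu z)) - g)) - z,
        z - projKs (z + (1 / Ld) • (-(G (uu z)) - g))⟫
        = -‖projKs (z + (1 / Ld) • (-(G (uu z)) - g)) - z‖^2 := by
      rw [show z - projKs (z + (1 / Ld) • (-(G (uu z)) - g))
          = -(projKs (z + (1 / Ld) • (-(G (uu z)) - g)) - z) by abel,
        inner_neg_right, real_inner_self_eq_norm_sq]
    rw [hin] at h
    have hwdp := hwd _ (hprojKs (z + (1 / Ld) • (-(G (uu z)) - g))).1
    linarith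
  -- Xstar membership
  have hXsub : ∀ w ∈ Xstar, w ∈ Kstar ∧ d w = fstar := by
    intro w hw
    rw [hXstar] at hw
    exact hw
  -- θ lower bound
  have hθlb : ∀ k : ℕ, 1 ≤ k → ((k : ℝ) + 1) / 2 ≤ θ k := by
    intro k hk
    induction k, hk using Nat.le_induction with
    | base => rw [hθ1]; norm_num
    | succ m hm ih =>
      rw [hθrec m hm]
      have hm0 : (0:ℝ) ≤ θ m := by
        have : (1:ℝ) ≤ (m:ℝ) := Nat.one_le_cast.mpr hm
        linarith
      have hs : 2 * θ m ≤ Real.sqrt (1 + 4 * θ m ^ 2) := by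
        have h0 : (2 * θ m)^2 ≤ 1 + 4 * θ m ^ 2 := by nlinarith
        have := Real.sqrt_le_sqrt h0
        rwa [Real.sqrt_sq (by linarith)] at this
      push_cast
      have : (1:ℝ) ≤ (m:ℝ) := Nat.one_le_cast.mpr hm
      linarith
  have hθ1le : ∀ k : ℕ, 1 ≤ k → 1 ≤ θ k := by
    intro k hk
    have h := hθlb k hk
    have : (1:ℝ) ≤ (k:ℝ) := Nat.one_le_cast.mpr hk
    linarith
  -- θ recursion squared
  have hθsq : ∀ k, 1 ≤ k → θ k ^ 2 - θ k = θ (k - 1) ^ 2 := by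
    intro k hk
    match k, hk with
    | 1, _ => simp [hθ1, hθ0]
    | (m+2), _ =>
      have hm1 : 1 ≤ m + 1 := by omega
      show θ (m+1+1) ^ 2 - θ (m+1+1) = θ (m+1) ^ 2
      rw [hθrec (m+1) hm1]
      have hs : Real.sqrt (1 + 4 * θ (m+1) ^ 2) ^ 2 = 1 + 4 * θ (m+1) ^ 2 :=
        Real.sq_sqrt (by positivity)
      linear_combination hs / 4
  -- membership of iterates
  have hXmem : ∀ j k, 1 ≤ k → X j k ∈ Kstar := by
    intro j k hk
    rw [hXrec j k hk]
    exact (hprojKs _).1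
  have hX0mem : ∀ j, X j 0 ∈ Kstar := by
    intro j
    induction j with
    | zero => exact hX00
    | succ i ih =>
      rw [hrestart i]
      rcases Nat.eq_zero_or_pos Kc with h | h
      · rw [h]; exact ih
      · exact hXmem i Kc h
  -- FISTA invariant
  have hfista : ∀ j, ∀ Kk, 1 ≤ Kk →
      θ Kk ^ 2 * (fstar - d (X j Kk))
        + Ld / 2 * ‖θ Kk • X j Kk - (θ Kk - 1) • X j (Kk - 1) - projX (X j 0)‖ ^ 2
      ≤ Ld / 2 * ‖X j 0 - projX (X j 0)‖ ^ 2 := by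
    intro j
    set xs := projX (X j 0) with hxsdef
    have hxsX : xs ∈ Xstar := (hprojX _).1
    have hxsK : xs ∈ Kstar := (hXsub xs hxsX).1
    have hdxs : d xs = fstar := (hXsub xs hxsX).2
    have honestep : ∀ k, 1 ≤ k →
        θ k ^ 2 * (fstar - d (X j k))
          + Ld / 2 * ‖θ k • X j k - (θ k - 1) • X j (k-1) - xs‖ ^ 2
        ≤ θ (k-1) ^ 2 * (fstar - d (X j (k-1)))
          + Ld / 2 * ‖θ k • Y j k - (θ k - 1) • X j (k-1) - xs‖ ^ 2 := by
      intro k hk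
      have hx1K : X j (k-1) ∈ Kstar := by
        rcases Nat.eq_zero_or_pos (k-1) with h0 | h0
        · rw [h0]; exact hX0mem j
        · exact hXmem j _ h0
      have ha := hstep (Y j k) (X j (k-1)) hx1K
      have hb := hstep (Y j k) xs hxsK
      rw [← hXrec j k hk] at ha hb
      rw [hdxs] at hb
      have hsq := hθsq k hk
      set ν := θ k with hν
      set τ := θ (k-1) with hτ
      set w := X j k - Y j k with hwdef
      set A := ν • X j k - (ν - 1) • X j (k-1) - xs with hA
      set B := ν • Y j k - (ν - 1) • X j (k-1) - xs with hB
      have hν1 : 1 ≤ ν := hθ1le k hk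
      have hBA : B = A - ν • w := by rw [hA, hB, hwdef]; module
      have hnB : ‖B‖^2 = ‖A‖^2 - 2 * (ν * ⟪w, A⟫) + ν^2 * ‖w‖^2 := by
        rw [hBA, norm_sub_sq_real, real_inner_smul_right, real_inner_comm A w,
          norm_smul, Real.norm_eq_abs, mul_pow, sq_abs]
      have hiA : ν * (ν - 1) * ⟪w, X j (k-1) - X j k⟫ + ν * ⟪w, xs - X j k⟫
          = -(ν * ⟪w, A⟫) := by
        rw [hA]
        simp only [inner_sub_right, real_inner_smul_right]
        ring
      have hiA2 : Ld * (ν * (ν - 1) * ⟪w, X j (k-1) - X j k⟫ + ν * ⟪w, xs - X j k⟫)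
          = Ld * (-(ν * ⟪w, A⟫)) := by rw [hiA]
      have hnB2 : Ld/2 * ‖B‖^2
          = Ld/2 * ‖A‖^2 - Ld * (ν * ⟪w, A⟫) + Ld/2 * (ν^2 * ‖w‖^2) := by
        rw [hnB]; ring
      rw [← hsq]
      have t1 : ν * (ν - 1) * (d (X j (k-1)) - Ld * ⟪w, X j (k-1) - X j k⟫
            - Ld / 2 * ‖w‖ ^ 2)
          ≤ ν * (ν - 1) * d (X j k) :=
        mul_le_mul_of_nonneg_left ha (by nlinarith)
      have t2 : ν * (fstar - Ld * ⟪w, xs - X j k⟫ - Ld / 2 * ‖w‖ ^ 2)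
          ≤ ν * d (X j k) :=
        mul_le_mul_of_nonneg_left hb (by linarith)
      nlinarith [t1, t2, hiA2, hnB2]
    intro Kk hKk
    induction Kk, hKk using Nat.le_induction with
    | base =>
      have h := honestep 1 le_rfl
      simp only [show (1:ℕ) - 1 = 0 from rfl, hθ0, hθ1, hYinit j] at h
      simp only [one_smul, sub_self, zero_smul, sub_zero] at h
      rw [hθ1]
      simp only [one_smul, sub_self, zero_smul, sub_zero]
      nlinarith [h]
    | succ Kk hKk ih =>
      have h := honestep (Kk+1) (by omega)
      simp only [Nat.add_sub_cancel] at h ⊢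
      have hθp : 0 < θ (Kk+1) := by
        have hlb := hθlb (Kk+1) (by omega)
        have : (0:ℝ) ≤ (Kk:ℝ) := Nat.cast_nonneg Kk
        push_cast at hlb
        linarith
      have hYe : θ (Kk+1) • Y j (Kk+1) - (θ (Kk+1) - 1) • X j Kk - xs
          = θ Kk • X j Kk - (θ Kk - 1) • X j (Kk-1) - xs := by
        rw [hYrec j Kk hKk]
        have hsm : θ (Kk+1) • (X j Kk + ((θ Kk - 1) / θ (Kk+1)) • (X j Kk - X j (Kk-1)))
            = θ (Kk+1) • X j Kk + (θ Kk - 1) • (X j Kk - X j (Kk-1)) := by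
          rw [smul_add, smul_smul]
          congr 2
          field_simp
        rw [hsm]
        module
      rw [hYe] at h
      linarith [h, ih]
  -- per-restart contraction
  have hcontract : ∀ j, 1 ≤ Kc → fstar - d (X j 0) ≤ fstar - d (X 0 0) →
      fstar - d (X j Kc) ≤ c ^ 2 * (fstar - d (X j 0)) := by
    intro j hKc hM
    have hinv := hfista j Kc hKc
    have hθKc := hθlb Kc hKc
    have hKc1 : (1:ℝ) ≤ (Kc:ℝ) := Nat.one_le_cast.mpr hKc
    have hθpos : 0 < θ Kc := by linarith
    have h5 : θ Kc ^ 2 * (fstar - d (X j Kc)) ≤ Ld / 2 * ‖X j 0 - projX (X j 0)‖ ^ 2 := by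
      have hnn : 0 ≤ Ld / 2 * ‖θ Kc • X j Kc - (θ Kc - 1) • X j (Kc - 1) - projX (X j 0)‖ ^ 2 := by
        positivity
      linarith
    have hEBj := hEB (X j 0) (hX0mem j) hM
    have hgapj := hgap (X j 0) (hX0mem j)
    have hEB2 : ‖X j 0 - projX (X j 0)‖^2
        ≤ κ^2 * ‖projKs (X j 0 + (1 / Ld) • (-(G (uu (X j 0))) - g)) - X j 0‖^2 := by
      nlinarith [hEBj, norm_nonneg (X j 0 - projX (X j 0)),
        norm_nonneg (projKs (X j 0 + (1 / Ld) • (-(G (uu (X j 0))) - g)) - X j 0), hκ]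
    have hF0 : 0 ≤ fstar - d (X j 0) := by
      have := hwd (X j 0) (hX0mem j); linarith
    have e1 : Ld/2 * ‖X j 0 - projX (X j 0)‖^2
        ≤ Ld/2 * (κ^2 * ‖projKs (X j 0 + (1 / Ld) • (-(G (uu (X j 0))) - g)) - X j 0‖^2) :=
      mul_le_mul_of_nonneg_left hEB2 (by positivity)
    have e2 : κ^2 * (Ld/2 * ‖projKs (X j 0 + (1 / Ld) • (-(G (uu (X j 0))) - g)) - X j 0‖^2)
        ≤ κ^2 * (fstar - d (X j 0)) :=
      mul_le_mul_of_nonneg_left hgapj (by positivity)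
    have h6 : θ Kc ^2 * (fstar - d (X j Kc)) ≤ κ^2 * (fstar - d (X j 0)) := by nlinarith
    have hθc : κ / c ≤ θ Kc := by
      have h7 : (2*κ/c)/2 ≤ ((Kc:ℝ)+1)/2 := by linarith
      have h8 : (2*κ/c)/2 = κ/c := by ring
      linarith
    have h7 : κ ≤ c * θ Kc := by
      rw [div_le_iff₀ hc0] at hθc
      linarith
    have hκθ : κ^2 ≤ c^2 * θ Kc ^2 := by nlinarith
    have h8 : θ Kc ^2 * (fstar - d (X j Kc)) ≤ θ Kc ^2 * (c^2 * (fstar - d (X j 0))) := by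
      have e3 : κ^2 * (fstar - d (X j 0)) ≤ c^2 * θ Kc^2 * (fstar - d (X j 0)) :=
        mul_le_mul_of_nonneg_right hκθ hF0
      nlinarith
    exact le_of_mul_le_mul_left h8 (by positivity)
  -- dispatch on Kc = 0
  rcases Nat.eq_zero_or_pos Kc with hKc0 | hKcpos
  · -- Kc = 0 : hypotheses are contradictory
    exfalso
    have hc2κ : 2*κ ≤ c := by
      rw [hKc0] at hKbound
      push_cast at hKbound
      rw [div_le_iff₀ hc0] at hKbound
      linarith
    set z := X 0 0 with hz
    have hxsX : projX z ∈ Xstar := (hprojX z).1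
    set xs := projX z with hxs
    have hxsK : xs ∈ Kstar := (hXsub xs hxsX).1
    have hdxs : d xs = fstar := (hXsub xs hxsX).2
    -- fixed point of the prox-step at xs
    have hgxs := hgap xs hxsK
    rw [hdxs] at hgxs
    have hfix : projKs (xs + (1 / Ld) • (-(G (uu xs)) - g)) = xs := by
      have hn2 : ‖projKs (xs + (1 / Ld) • (-(G (uu xs)) - g)) - xs‖^2 ≤ 0 := by
        nlinarith [hgxs, hLdpos]
      have hn0 : ‖projKs (xs + (1 / Ld) • (-(G (uu xs)) - g)) - xs‖ = 0 := by
        have := norm_nonneg (projKs (xs + (1 / Ld) • (-(G (uu xs)) - g)) - xs)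
        nlinarith
      exact sub_eq_zero.mp (norm_eq_zero.mp hn0)
    -- gradient step nonexpansiveness
    have hco : (1/Ld) * ‖(-(G (uu z)) - g) - (-(G (uu xs)) - g)‖^2
        ≤ ⟪z - xs, (-(G (uu xs)) - g) - (-(G (uu z)) - g)⟫ :=
      aux_coco Ld d (fun w => -(G (uu w)) - g) hLdpos h1 h2 xs z
    set Δ := (-(G (uu z)) - g) - (-(G (uu xs)) - g) with hΔ
    have hgs : ‖(z + (1 / Ld) • (-(G (uu z)) - g)) - (xs + (1 / Ld) • (-(G (uu xs)) - g))‖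
        ≤ ‖z - xs‖ := by
      have hre : (z + (1 / Ld) • (-(G (uu z)) - g)) - (xs + (1 / Ld) • (-(G (uu xs)) - g))
          = (z - xs) + (1/Ld) • Δ := by rw [hΔ]; module
      have hsq2 : ‖(z + (1 / Ld) • (-(G (uu z)) - g)) - (xs + (1 / Ld) • (-(G (uu xs)) - g))‖^2
          = ‖z - xs‖^2 + 2*((1/Ld) * ⟪z - xs, Δ⟫) + (1/Ld)^2 * ‖Δ‖^2 := by
        rw [hre, norm_add_sq_real, real_inner_smul_right, norm_smul,
          Real.norm_eq_abs, mul_pow, sq_abs]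
      have hip : ⟪z - xs, Δ⟫ ≤ -((1/Ld) * ‖Δ‖^2) := by
        have h0 : ⟪z - xs, Δ⟫ = -⟪z - xs, (-(G (uu xs)) - g) - (-(G (uu z)) - g)⟫ := by
          rw [← inner_neg_right]
          congr 1
          rw [hΔ]
          abel
        rw [h0]
        linarith
      have h2p : (0:ℝ) ≤ 2*(1/Ld) := by positivity
      have hmul := mul_le_mul_of_nonneg_left hip h2p
      have hnn : (0:ℝ) ≤ (1/Ld)^2 * ‖Δ‖^2 := by positivity
      have hfin : ‖(z + (1 / Ld) • (-(G (uu z)) - g)) - (xs + (1 / Ld) • (-(G (uu xs)) - g))‖^2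
          ≤ ‖z - xs‖^2 := by
        rw [hsq2]
        nlinarith [hmul, hnn, hLdpos]
      exact le_of_pow_le_pow_left₀ two_ne_zero (norm_nonneg _) hfin
    have hm1 : ‖projKs (z + (1 / Ld) • (-(G (uu z)) - g)) - xs‖ ≤ ‖z - xs‖ := by
      calc ‖projKs (z + (1 / Ld) • (-(G (uu z)) - g)) - xs‖
          = ‖projKs (z + (1 / Ld) • (-(G (uu z)) - g))
              - projKs (xs + (1 / Ld) • (-(G (uu xs)) - g))‖ := by rw [hfix]
        _ ≤ ‖(z + (1 / Ld) • (-(G (uu z)) - g)) - (xs + (1 / Ld) • (-(G (uu xs)) - g))‖ :=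
            aux_nonexp Kstar hKsconv projKs hprojKs _ _
        _ ≤ ‖z - xs‖ := hgs
    have hm2 : ‖projKs (z + (1 / Ld) • (-(G (uu z)) - g)) - z‖ ≤ 2 * ‖z - xs‖ := by
      have htri : ‖projKs (z + (1 / Ld) • (-(G (uu z)) - g)) - z‖
          ≤ ‖projKs (z + (1 / Ld) • (-(G (uu z)) - g)) - xs‖ + ‖xs - z‖ := by
        have hd0 : projKs (z + (1 / Ld) • (-(G (uu z)) - g)) - z
            = (projKs (z + (1 / Ld) • (-(G (uu z)) - g)) - xs) + (xs - z) := by abel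
        rw [hd0]
        exact norm_add_le _ _
      have hrev : ‖xs - z‖ = ‖z - xs‖ := norm_sub_rev _ _
      linarith
    have hEB0 := hEB z hX00 (le_refl _)
    have hle0 : ‖z - xs‖ ≤ 0 := by
      have hh := mul_le_mul_of_nonneg_left hm2 hκ.le
      have hh2 : 2 * κ * ‖z - xs‖ ≤ c * ‖z - xs‖ :=
        mul_le_mul_of_nonneg_right hc2κ (norm_nonneg _)
      nlinarith [hEB0, norm_nonneg (z - xs), hc1]
    have heq : z = xs :=
      sub_eq_zero.mp (norm_eq_zero.mp (le_antisymm hle0 (norm_nonneg _)))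
    rw [show d (X 0 0) = d z from rfl, heq, hdxs] at hMpos
    linarith
  · -- Kc ≥ 1 : induction on the restart index
    intro q
    induction q with
    | zero => simp
    | succ i ih =>
      have hple : c^(2*i) ≤ 1 := pow_le_one₀ hc0.le hc1.le
      have hMi : fstar - d (X i 0) ≤ fstar - d (X 0 0) := by
        have := mul_le_of_le_one_left hMpos.le hple
        linarith
      have hco := hcontract i hKcpos hMi
      have hF : fstar - d (X (i+1) 0) ≤ c^2 * (c^(2*i) * (fstar - d (X 0 0))) := by
        rw [hrestart i]
        exact le_trans hco (mul_le_mul_of_nonneg_left ih (by positivity))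
      calc fstar - d (X (i+1) 0) ≤ c^2 * (c^(2*i) * (fstar - d (X 0 0))) := hF
        _ = c^(2*(i+1)) * (fstar - d (X 0 0)) := by
            rw [show 2*(i+1) = 2*i + 2 by ring, pow_add]
            ring
end
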